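/- arXiv:1810.00716 — 5 statements merged into one kernel-verified Lean document; each statement's English description precedes it below -/
import Mathlib

section
/- Let F be a field of characteristic zero, let d ≥ 1 and k ≥ 1 be integers, and let P = (p_1^{n_1}, …, p_t^{n_t}) be a partition written in power form having diagonal lengths T(d,k). If P is a complete intersection Jordan type for (d,k) over F, then p_{i−1} ≥ n_{i−1} + n_i + p_i for every 2 ≤ i ≤ t. -/
open MvPolynomial

/-- A partition, represented as a decreasingly sorted list of positive integers. -/
def IsPartitionList (P : List ℕ) : Prop :=
  P.Pairwise (· ≥ ·) ∧ ∀ p ∈ P, 0 < p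

/-- `P` is the Jordan type of the `F`-linear endomorphism `u`:
for every `m ≥ 1`, the number of parts of `P` that are at least `m` equals
`dim (range u^(m-1)) - dim (range u^m)`. -/
def IsJordanTypeOf (F : Type) [Field F] {A : Type} [AddCommGroup A] [Module F A]
    (P : List ℕ) (u : A →ₗ[F] A) : Prop :=
  ∀ m : ℕ, 1 ≤ m →
    (P.filter (fun p => m ≤ p)).length =
      Module.finrank F (LinearMap.range (u ^ (m - 1))) -
        Module.finrank F (LinearMap.range (u ^ m))

/-- The `i`-th diagonal length of a partition `P`: the number of pairs `(r, c)`
with `r + c = i` and `c < p_(r+1)`. -/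
def diagLen (P : List ℕ) (i : ℕ) : ℕ :=
  ((Finset.range (i + 1)).filter (fun r => i - r < P.getD r 0)).card

/-- The complete intersection Hilbert function `T(d,k)`. -/
def Tdk (d k i : ℕ) : ℕ :=
  if i ≤ 2 * d + k - 3 then min (min (i + 1) d) (2 * d + k - 2 - i) else 0

/-- Multiplication by (the class of) `h` on the quotient `F[x,y]/I`, as an `F`-linear map. -/
noncomputable def mulMap (F : Type) [Field F] (I : Ideal (MvPolynomial (Fin 2) F))
    (h : MvPolynomial (Fin 2) F) :
    (MvPolynomial (Fin 2) F ⧸ I) →ₗ[F] (MvPolynomial (Fin 2) F ⧸ I) :=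
  Algebra.lmul F (MvPolynomial (Fin 2) F ⧸ I) (Ideal.Quotient.mk I h)

/-- `P` is a complete intersection Jordan type for `(d, k)` over `F`. -/
def IsCIJT (F : Type) [Field F] (d k : ℕ) (P : List ℕ) : Prop :=
  ∃ f g ℓ : MvPolynomial (Fin 2) F,
    f.IsHomogeneous d ∧ g.IsHomogeneous (d + k - 1) ∧
    ℓ.IsHomogeneous 1 ∧ ℓ ≠ 0 ∧
    FiniteDimensional F (MvPolynomial (Fin 2) F ⧸ Ideal.span {f, g}) ∧
    IsJordanTypeOf F P (mulMap F (Ideal.span {f, g}) ℓ)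

/-- The degree-`i` graded component of `F[x,y]/I`. -/
noncomputable def gradedPiece (F : Type) [Field F] (I : Ideal (MvPolynomial (Fin 2) F)) (i : ℕ) :
    Submodule F (MvPolynomial (Fin 2) F ⧸ I) :=
  (MvPolynomial.homogeneousSubmodule (Fin 2) F i).map (Ideal.Quotient.mkₐ F I).toLinearMap

/-- The rank of the `i`-th Hessian at `ℓ`: the dimension of `ℓ̄^(j-2i) · A_i`. -/
noncomputable def hessRank (F : Type) [Field F] (I : Ideal (MvPolynomial (Fin 2) F))
    (ℓ : MvPolynomial (Fin 2) F) (j i : ℕ) : ℕ :=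
  Module.finrank F
    ((gradedPiece F I i).map (mulMap F I (ℓ ^ (j - 2 * i))))

/-- The partition `(p_1^{n_1}, …, p_t^{n_t})` in power form, as a list. -/
def powerList (t : ℕ) (p n : Fin t → ℕ) : List ℕ :=
  (List.ofFn fun i => List.replicate (n i) (p i)).flatten

/-- The CI criterion for a partition `P`: writing `P` in power form
`(p_1^{n_1}, …, p_t^{n_t})` with `p_1 > ⋯ > p_t`, for every `2 ≤ i ≤ t` one has
`p_(i-1) = n_(i-1) + n_i + p_i`.  Phrased intrinsically: for any two adjacent
part sizes `a > b` of `P`, `a = (count of a) + (count of b) + b`. -/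
def CICriterion (P : List ℕ) : Prop :=
  ∀ a b : ℕ, a ∈ P → b ∈ P → b < a → (∀ x ∈ P, x ≤ b ∨ a ≤ x) →
    a = P.count a + P.count b + b

/-- The CIJT partition `(p_1^{n_1}, …, p_c^{n_c}, (d-n)^{d-n+k-1})` built from a
list `L = [n_1, …, n_c]` of positive integers with sum `n`, where
`p_i = k - 1 + 2d - n_i - 2(n_1 + ⋯ + n_(i-1))`; the trailing block is empty
when `n = d`. -/
def ciList (d k : ℕ) (L : List ℕ) : List ℕ :=
  (List.ofFn fun i : Fin L.length =>
      List.replicate (L.get i) (k - 1 + 2 * d - L.get i - 2 * (L.take i).sum)).flatten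
    ++ (if L.sum = d then [] else List.replicate (d - L.sum + k - 1) (d - L.sum))


variable {F : Type} [Field F]

lemma homog_aeval {q : MvPolynomial (Fin 2) F} {m : ℕ}
    (hq : q.IsHomogeneous m) (c : Fin 2 → F) :
    aeval (fun i => Polynomial.C (c i) * Polynomial.X) q
      = Polynomial.C (MvPolynomial.eval c q) * Polynomial.X ^ m := by
  rw [MvPolynomial.aeval_def, MvPolynomial.eval₂_eq', MvPolynomial.eval_eq', map_sum,
    Finset.sum_mul]
  refine Finset.sum_congr rfl fun u hu => ?_
  have hdeg : u.degree = m := by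
    by_contra hne
    exact (MvPolynomial.mem_support_iff.mp hu) (hq.coeff_eq_zero hne)
  have hsum : ∑ i : Fin 2, u i = m := by
    rw [← hdeg, Finsupp.degree]
    exact (Finset.sum_subset (Finset.subset_univ _)
      (fun i _ hi => Finsupp.notMem_support_iff.mp hi)).symm
  have hprod : (∏ i : Fin 2, (Polynomial.C (c i) * Polynomial.X) ^ (u i))
      = Polynomial.C (∏ i : Fin 2, c i ^ u i) * Polynomial.X ^ m := by
    rw [map_prod, ← hsum, ← Finset.prod_pow_eq_pow_sum, ← Finset.prod_mul_distrib]
    exact Finset.prod_congr rfl fun i _ => by rw [mul_pow, Polynomial.C_pow]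
  rw [hprod, Polynomial.algebraMap_eq, map_mul]
  ring

lemma homog_one_shape {ℓ : MvPolynomial (Fin 2) F} (hl : ℓ.IsHomogeneous 1) :
    ℓ = C (coeff (Finsupp.single 0 1) ℓ) * X 0 + C (coeff (Finsupp.single 1 1) ℓ) * X 1 := by
  apply MvPolynomial.ext
  intro u
  have hcx : ∀ (i : Fin 2) (r : F), coeff u (C r * X i) = if u = Finsupp.single i 1 then r else 0 := by
    intro i r
    rw [MvPolynomial.coeff_C_mul, MvPolynomial.coeff_X']
    split_ifs with h1 h2 h2 <;> simp_all
  by_cases hdeg : u.degree = 1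
  · -- u = single 0 1 or single 1 1
    have hsum : u 0 + u 1 = 1 := by
      have : ∑ i : Fin 2, u i = u.degree := by
        rw [Finsupp.degree]
        exact (Finset.sum_subset (Finset.subset_univ _)
          (fun i _ hi => Finsupp.notMem_support_iff.mp hi)).symm
      rw [hdeg] at this
      simpa [Fin.sum_univ_two] using this
    have : u = Finsupp.single 0 1 ∨ u = Finsupp.single 1 1 := by
      rcases Nat.eq_zero_or_pos (u 0) with h0 | h0
      · right
        ext i
        fin_cases i <;> simp_all <;> omega
      · left
        ext i
        fin_cases i <;> simp_all <;> omega
    have hne : (Finsupp.single (0 : Fin 2) (1:ℕ)) ≠ Finsupp.single 1 1 := by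
      intro h
      have := DFunLike.congr_fun h (0 : Fin 2)
      simp at this
    rcases this with h | h <;> subst h <;>
      simp [MvPolynomial.coeff_add, hcx, hne, hne.symm, Ne.symm]
  · rw [hl.coeff_eq_zero hdeg, MvPolynomial.coeff_add, hcx, hcx]
    have h0 : u ≠ Finsupp.single 0 1 := by
      intro h; subst h
      exact hdeg (by simp [Finsupp.degree_apply, Finsupp.support_single_ne_zero])
    have h1 : u ≠ Finsupp.single 1 1 := by
      intro h; subst h
      exact hdeg (by simp [Finsupp.degree_apply, Finsupp.support_single_ne_zero])
    simp [h0, h1]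

section kernel

variable (a b : F)

/-- the substitution map killing ℓ = C a * X 0 + C b * X 1 -/
noncomputable def phiMap (a b : F) : MvPolynomial (Fin 2) F →ₐ[F] Polynomial F :=
  aeval (fun i => Polynomial.C (![b, -a] i) * Polynomial.X)

lemma phiMap_ell : phiMap a b (C a * X 0 + C b * X 1) = 0 := by
  simp only [phiMap, map_add, map_mul, aeval_X, aeval_C]
  simp only [Matrix.cons_val_zero, Matrix.cons_val_one, Matrix.head_cons]
  simp only [Polynomial.algebraMap_eq, map_neg]
  ring

variable {j : Fin 2} (hcj : ![b, -a] j ≠ 0)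

/-- section of phiMap -/
noncomputable def secMap (a b : F) (j : Fin 2) : Polynomial F →ₐ[F] MvPolynomial (Fin 2) F :=
  Polynomial.aeval (C (![b, -a] j)⁻¹ * X j)

lemma phiMap_comp_secMap (hcj : ![b, -a] j ≠ 0) :
    (phiMap a b).comp (secMap a b j) = AlgHom.id F (Polynomial F) := by
  apply Polynomial.algHom_ext
  simp only [AlgHom.comp_apply, secMap, Polynomial.aeval_X, phiMap, map_mul, aeval_X, aeval_C,
    AlgHom.id_apply]
  rw [Polynomial.algebraMap_eq, ← mul_assoc, ← Polynomial.C_mul, inv_mul_cancel₀ hcj]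
  simp

lemma sub_sec_mem (hcj : ![b, -a] j ≠ 0) (q : MvPolynomial (Fin 2) F) :
    q - secMap a b j (phiMap a b q) ∈ Ideal.span {C a * X 0 + C b * X 1} := by
  set ℓ : MvPolynomial (Fin 2) F := C a * X 0 + C b * X 1 with hℓ
  set s := secMap a b j
  set φ := phiMap a b
  have hX : ∀ i : Fin 2, (X i : MvPolynomial (Fin 2) F) - s (φ (X i)) ∈ Ideal.span {ℓ} := by
    intro i
    have hφX : φ (X i) = Polynomial.C (![b, -a] i) * Polynomial.X := by
      simp [φ, phiMap]
    have hsX : s (φ (X i)) = C (![b, -a] i) * (C (![b, -a] j)⁻¹ * X j) := by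
      rw [hφX]
      simp [s, secMap, MvPolynomial.algebraMap_eq]
    rw [hsX]
    by_cases hij : i = j
    · subst hij
      have : (X i : MvPolynomial (Fin 2) F) - C (![b, -a] i) * (C (![b, -a] i)⁻¹ * X i) = 0 := by
        rw [← mul_assoc, ← MvPolynomial.C_mul, mul_inv_cancel₀ hcj]
        simp
      rw [this]
      exact Ideal.zero_mem _
    · have key : C (![b, -a] j) * X i - C (![b, -a] i) * X j = ℓ ∨
          C (![b, -a] j) * X i - C (![b, -a] i) * X j = -ℓ := by
        rw [hℓ]
        fin_cases i <;> fin_cases j <;>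
            simp only [Fin.zero_eta, Fin.mk_one, Fin.isValue, Matrix.cons_val_zero,
              Matrix.cons_val_one, Matrix.head_cons, map_neg] <;>
          first
            | exact absurd rfl hij
            | (right; ring1)
            | (left; ring1)
      have heq : X i - C (![b, -a] i) * (C (![b, -a] j)⁻¹ * X j)
          = C (![b, -a] j)⁻¹ * (C (![b, -a] j) * X i - C (![b, -a] i) * X j) := by
        have h1 : (C (![b, -a] j)⁻¹ : MvPolynomial (Fin 2) F) * C (![b, -a] j) = 1 := by
          rw [← MvPolynomial.C_mul, inv_mul_cancel₀ hcj, MvPolynomial.C_1]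
        rw [mul_sub, ← mul_assoc (C (![b, -a] j)⁻¹) (C (![b, -a] j)) (X i), h1, one_mul]
        ring
      rw [heq]
      rcases key with h | h <;> rw [h]
      · exact Ideal.mul_mem_left _ _ (Ideal.subset_span rfl)
      · rw [mul_neg]
        exact neg_mem (Ideal.mul_mem_left _ _ (Ideal.subset_span rfl))
  induction q using MvPolynomial.induction_on with
  | C r =>
      have : (C r : MvPolynomial (Fin 2) F) - s (φ (C r)) = 0 := by
        simp [φ, phiMap, s, secMap, MvPolynomial.aeval_C, MvPolynomial.algebraMap_eq]
      rw [this]; exact Ideal.zero_mem _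
  | add q1 q2 h1 h2 =>
      have : q1 + q2 - s (φ (q1 + q2)) = (q1 - s (φ q1)) + (q2 - s (φ q2)) := by
        rw [map_add, map_add]; ring
      rw [this]; exact Ideal.add_mem _ h1 h2
  | mul_X q i hq =>
      have : q * X i - s (φ (q * X i))
          = (q - s (φ q)) * X i + s (φ q) * (X i - s (φ (X i))) := by
        rw [map_mul, map_mul]; ring
      rw [this]
      exact Ideal.add_mem _ (Ideal.mul_mem_right _ _ hq) (Ideal.mul_mem_left _ _ (hX i))

end kernel

lemma phiMap_surjective {a b : F} {j : Fin 2} (hcj : ![b, -a] j ≠ 0) :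
    Function.Surjective (phiMap a b) := by
  intro w
  exact ⟨secMap a b j w, by
    have := congrArg (fun ψ => ψ w) (phiMap_comp_secMap a b hcj)
    simpa using this⟩

lemma ker_phiMap {a b : F} {j : Fin 2} (hcj : ![b, -a] j ≠ 0) {q : MvPolynomial (Fin 2) F}
    (hq : phiMap a b q = 0) : q ∈ Ideal.span {C a * X 0 + C b * X 1} := by
  have h := sub_sec_mem a b hcj q
  rw [hq, map_zero, sub_zero] at h
  exact h

set_option maxHeartbeats 1000000 in
lemma colength_tri (d e' : ℕ) (hde : d ≤ e')
    (f g ℓ : MvPolynomial (Fin 2) F)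
    (hf : f.IsHomogeneous d) (hg : g.IsHomogeneous e') (hl : ℓ.IsHomogeneous 1) (hl0 : ℓ ≠ 0)
    (hfin : FiniteDimensional F
      (MvPolynomial (Fin 2) F ⧸ Ideal.span (insert f (insert g {ℓ})))) :
    Module.finrank F (MvPolynomial (Fin 2) F ⧸ Ideal.span (insert f (insert g {ℓ}))) = d ∨
    Module.finrank F (MvPolynomial (Fin 2) F ⧸ Ideal.span (insert f (insert g {ℓ}))) = e' := by
  classical
  set a := coeff (Finsupp.single 0 1) ℓ with ha
  set b := coeff (Finsupp.single 1 1) ℓ with hb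
  have hshape : ℓ = C a * X 0 + C b * X 1 := homog_one_shape hl
  have hab : ∃ j : Fin 2, ![b, -a] j ≠ 0 := by
    by_contra hc
    push_neg at hc
    have h0 := hc 0
    have h1 := hc 1
    simp only [Matrix.cons_val_zero, Matrix.cons_val_one, Matrix.head_cons, neg_eq_zero] at h0 h1
    exact hl0 (by rw [hshape, h0, h1]; simp)
  obtain ⟨j, hcj⟩ := hab
  set φ := phiMap a b with hφ
  have hφl : φ ℓ = 0 := by rw [hshape]; exact phiMap_ell a b
  have hφsurj : Function.Surjective φ := phiMap_surjective hcj
  set J : Ideal (MvPolynomial (Fin 2) F) := Ideal.span (insert f (insert g {ℓ})) with hJ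
  set J' : Ideal (Polynomial F) := J.map φ with hJ'
  -- the induced map on quotients
  have hmem : ∀ r ∈ J, (Ideal.Quotient.mkₐ F J').comp φ r = 0 := by
    intro r hr
    simp only [AlgHom.comp_apply, Ideal.Quotient.mkₐ_eq_mk, Ideal.Quotient.eq_zero_iff_mem]
    exact Ideal.mem_map_of_mem _ hr
  set Φ : (MvPolynomial (Fin 2) F ⧸ J) →ₐ[F] (Polynomial F ⧸ J') :=
    Ideal.Quotient.liftₐ J ((Ideal.Quotient.mkₐ F J').comp φ) hmem with hΦ
  have hΦsurj : Function.Surjective Φ := by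
    intro w
    obtain ⟨q, rfl⟩ := Ideal.Quotient.mk_surjective w
    obtain ⟨r, rfl⟩ := hφsurj q
    exact ⟨Ideal.Quotient.mk J r, rfl⟩
  have hΦinj : Function.Injective Φ := by
    rw [injective_iff_map_eq_zero]
    intro x hx
    obtain ⟨r, rfl⟩ := Ideal.Quotient.mk_surjective x
    have hr : φ r ∈ J' := by
      rw [← Ideal.Quotient.eq_zero_iff_mem]
      exact hx
    rw [hJ', Ideal.mem_map_iff_of_surjective _ hφsurj] at hr
    obtain ⟨x, hxJ, hxr⟩ := hr
    have : r - x ∈ Ideal.span {ℓ} := by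
      rw [hshape]
      exact ker_phiMap hcj (by rw [map_sub, hxr, sub_self])
    have hrJ : r ∈ J := by
      have hsub : Ideal.span {ℓ} ≤ J := by
        rw [Ideal.span_le]
        intro z hz
        rw [Set.mem_singleton_iff] at hz
        subst hz
        exact Ideal.subset_span (by simp)
      have := J.add_mem (hsub this) hxJ
      simpa using this
    rw [Ideal.Quotient.eq_zero_iff_mem]
    exact hrJ
  have hequiv : Module.finrank F (MvPolynomial (Fin 2) F ⧸ J)
      = Module.finrank F (Polynomial F ⧸ J') :=
    (AlgEquiv.ofBijective Φ ⟨hΦinj, hΦsurj⟩).toLinearEquiv.finrank_eq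
  -- compute J'
  have hφf : φ f = Polynomial.C (MvPolynomial.eval ![b, -a] f) * Polynomial.X ^ d :=
    homog_aeval hf ![b, -a]
  have hφg : φ g = Polynomial.C (MvPolynomial.eval ![b, -a] g) * Polynomial.X ^ e' :=
    homog_aeval hg ![b, -a]
  set uf := MvPolynomial.eval ![b, -a] f with huf
  set ug := MvPolynomial.eval ![b, -a] g with hug
  have hJ'span : J' = Ideal.span {Polynomial.C uf * Polynomial.X ^ d,
      Polynomial.C ug * Polynomial.X ^ e'} := by
    rw [hJ', hJ, Ideal.map_span]
    apply le_antisymm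
    · rw [Ideal.span_le]
      rintro z ⟨w, hw, rfl⟩
      simp only [Set.mem_insert_iff, Set.mem_singleton_iff] at hw
      rcases hw with rfl | rfl | rfl
      · rw [hφf]; exact Ideal.subset_span (by simp)
      · rw [hφg]; exact Ideal.subset_span (by simp)
      · rw [hφl]; exact Ideal.zero_mem _
    · rw [Ideal.span_le]
      rintro z hz
      simp only [Set.mem_insert_iff, Set.mem_singleton_iff] at hz
      rcases hz with rfl | rfl
      · exact Ideal.subset_span ⟨f, by simp, hφf⟩
      · exact Ideal.subset_span ⟨g, by simp [Set.mem_insert_iff], hφg⟩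
  by_cases hufz : uf = 0
  · by_cases hugz : ug = 0
    · -- contradiction: quotient would be all of F[z]
      exfalso
      have hJbot : J' = ⊥ := by
        rw [hJ'span, hufz, hugz]
        simp
      have hfd : FiniteDimensional F (Polynomial F ⧸ J') := by
        have e := (AlgEquiv.ofBijective Φ ⟨hΦinj, hΦsurj⟩).toLinearEquiv
        exact Module.Finite.equiv e
      have hmkinj : Function.Injective (Ideal.Quotient.mkₐ F J') := by
        rw [injective_iff_map_eq_zero]
        intro z hz
        rw [Ideal.Quotient.mkₐ_eq_mk, Ideal.Quotient.eq_zero_iff_mem, hJbot] at hz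
        exact (Ideal.mem_bot).mp hz
      have e2 : Polynomial F ≃ₗ[F] (Polynomial F ⧸ J') :=
        LinearEquiv.ofBijective (Ideal.Quotient.mkₐ F J').toLinearMap
          ⟨hmkinj, Ideal.Quotient.mk_surjective⟩
      have : FiniteDimensional F (Polynomial F) := Module.Finite.equiv e2.symm
      have : Finite ℕ := Module.Finite.finite_basis (Polynomial.basisMonomials F)
      exact (instInfiniteNat).not_finite this
    · -- J' = (X^e')
      right
      have : J' = Ideal.span {(Polynomial.X : Polynomial F) ^ e'} := by
        rw [hJ'span, hufz]
        apply le_antisymm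
        · rw [Ideal.span_le]
          rintro z hz
          simp only [Set.mem_insert_iff, Set.mem_singleton_iff] at hz
          rcases hz with rfl | rfl
          · simp
          · exact Ideal.mul_mem_left _ _ (Ideal.subset_span rfl)
        · rw [Ideal.span_le, Set.singleton_subset_iff]
          have hmem2 : Polynomial.C ug * Polynomial.X ^ e'
              ∈ Ideal.span {Polynomial.C (0:F) * Polynomial.X ^ d,
                Polynomial.C ug * Polynomial.X ^ e'} :=
            Ideal.subset_span (Set.mem_insert_iff.mpr (Or.inr rfl))
          have h3 := Ideal.mul_mem_left _ (Polynomial.C ug⁻¹) hmem2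
          rwa [← mul_assoc, ← Polynomial.C_mul, inv_mul_cancel₀ hugz, Polynomial.C_1,
            one_mul] at h3
      rw [hequiv, this]
      have hne : (Polynomial.X : Polynomial F) ^ e' ≠ 0 := pow_ne_zero _ Polynomial.X_ne_zero
      have h2 : Module.finrank F (AdjoinRoot ((Polynomial.X : Polynomial F) ^ e')) = e' := by
        rw [PowerBasis.finrank (AdjoinRoot.powerBasis hne)]
        simp [AdjoinRoot.powerBasis]
      exact h2
  · -- J' = (X^d)
    left
    have : J' = Ideal.span {(Polynomial.X : Polynomial F) ^ d} := by
      rw [hJ'span]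
      apply le_antisymm
      · rw [Ideal.span_le]
        rintro z hz
        simp only [Set.mem_insert_iff, Set.mem_singleton_iff] at hz
        rcases hz with rfl | rfl
        · exact Ideal.mul_mem_left _ _ (Ideal.subset_span rfl)
        · rw [show e' = (e' - d) + d by omega, pow_add, ← mul_assoc]
          exact Ideal.mul_mem_left _ _ (Ideal.subset_span rfl)
      · rw [Ideal.span_le, Set.singleton_subset_iff]
        have hmem2 : Polynomial.C uf * Polynomial.X ^ d
            ∈ Ideal.span {Polynomial.C uf * Polynomial.X ^ d,
              Polynomial.C ug * Polynomial.X ^ e'} :=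
          Ideal.subset_span (Set.mem_insert _ _)
        have h3 := Ideal.mul_mem_left _ (Polynomial.C uf⁻¹) hmem2
        rwa [← mul_assoc, ← Polynomial.C_mul, inv_mul_cancel₀ hufz, Polynomial.C_1,
          one_mul] at h3
    rw [hequiv, this]
    have hne : (Polynomial.X : Polynomial F) ^ d ≠ 0 := pow_ne_zero _ Polynomial.X_ne_zero
    have h2 : Module.finrank F (AdjoinRoot ((Polynomial.X : Polynomial F) ^ d)) = d := by
      rw [PowerBasis.finrank (AdjoinRoot.powerBasis hne)]
      simp [AdjoinRoot.powerBasis]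
    exact h2

section numparts

lemma powerList_mem {t : ℕ} {p n : Fin t → ℕ} {x : ℕ} (hx : x ∈ powerList t p n) :
    ∃ i, x = p i := by
  rw [powerList, List.mem_flatten] at hx
  obtain ⟨l, hl, hxl⟩ := hx
  rw [List.mem_ofFn] at hl
  obtain ⟨i, rfl⟩ := hl
  exact ⟨i, List.eq_of_mem_replicate hxl⟩

lemma numparts (F : Type) [Field F] {d k : ℕ} (hk : 1 ≤ k) {t : ℕ} {p n : Fin t → ℕ}
    (hppos : ∀ i, 0 < p i)
    (hCI : IsCIJT F d k (powerList t p n)) :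
    (powerList t p n).length = d ∨ (powerList t p n).length = d + k - 1 := by
  obtain ⟨f, g, ℓ, hf, hg, hl, hl0, hfin, hJT⟩ := hCI
  set I : Ideal (MvPolynomial (Fin 2) F) := Ideal.span {f, g} with hI
  set u := mulMap F I ℓ with hu
  -- step 1 : length = finrank A - finrank (range u)
  have hfilter : (powerList t p n).filter (fun x => 1 ≤ x) = powerList t p n := by
    rw [List.filter_eq_self]
    intro a ha
    obtain ⟨i, rfl⟩ := powerList_mem ha
    have := hppos i; simp; omega
  have h1 := hJT 1 le_rfl
  rw [hfilter] at h1
  have hpow0 : u ^ (1 - 1) = 1 := pow_zero u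
  rw [hpow0, pow_one] at h1
  have hrtop : LinearMap.range
      (1 : (MvPolynomial (Fin 2) F ⧸ I) →ₗ[F] (MvPolynomial (Fin 2) F ⧸ I)) = ⊤ := by
    rw [Module.End.one_eq_id]; exact LinearMap.range_id
  rw [hrtop] at h1
  rw [finrank_top] at h1
  -- step 2 : relate to quotient by J
  set J : Ideal (MvPolynomial (Fin 2) F) := Ideal.span (insert f (insert g {ℓ})) with hJdef
  have hIJ : ∀ r ∈ I, r ∈ J := by
    intro r hr
    rw [hI] at hr
    refine Ideal.span_mono ?_ hr
    intro z hz
    simp only [Set.mem_insert_iff, Set.mem_singleton_iff] at hz ⊢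
    tauto
  set πa : (MvPolynomial (Fin 2) F ⧸ I) →ₐ[F] (MvPolynomial (Fin 2) F ⧸ J) :=
    Ideal.Quotient.liftₐ I (Ideal.Quotient.mkₐ F J)
      (fun r hr => by
        rw [Ideal.Quotient.mkₐ_eq_mk, Ideal.Quotient.eq_zero_iff_mem]
        exact hIJ r hr) with hπa
  have hπmk : ∀ r, πa (Ideal.Quotient.mk I r) = Ideal.Quotient.mk J r := fun r => rfl
  have hπsurj : Function.Surjective πa := by
    intro w
    obtain ⟨r, rfl⟩ := Ideal.Quotient.mk_surjective w
    exact ⟨Ideal.Quotient.mk I r, hπmk r⟩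
  have humk : ∀ (x : MvPolynomial (Fin 2) F ⧸ I),
      u x = Ideal.Quotient.mk I ℓ * x := fun x => rfl
  have hker : LinearMap.ker πa.toLinearMap = LinearMap.range u := by
    apply le_antisymm
    · intro x hx
      obtain ⟨r, rfl⟩ := Ideal.Quotient.mk_surjective x
      rw [LinearMap.mem_ker, AlgHom.toLinearMap_apply, hπmk,
        Ideal.Quotient.eq_zero_iff_mem, hJdef] at hx
      rw [Ideal.mem_span_insert] at hx
      obtain ⟨r1, z1, hz1, rfl⟩ := hx
      rw [Ideal.mem_span_insert] at hz1
      obtain ⟨r2, z2, hz2, rfl⟩ := hz1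
      rw [Ideal.mem_span_singleton'] at hz2
      obtain ⟨r3, rfl⟩ := hz2
      refine ⟨Ideal.Quotient.mk I r3, ?_⟩
      rw [humk]
      have hfI : f ∈ I := Ideal.subset_span (Set.mem_insert _ _)
      have hgI : g ∈ I := Ideal.subset_span (Set.mem_insert_iff.mpr (Or.inr rfl))
      rw [← map_mul]
      rw [map_add, map_add]
      rw [Ideal.Quotient.eq_zero_iff_mem.mpr (I.mul_mem_left r1 hfI),
        Ideal.Quotient.eq_zero_iff_mem.mpr (I.mul_mem_left r2 hgI)]
      rw [zero_add, zero_add]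
      ring_nf
    · rintro x ⟨y, rfl⟩
      obtain ⟨r, rfl⟩ := Ideal.Quotient.mk_surjective y
      rw [LinearMap.mem_ker, AlgHom.toLinearMap_apply, humk, ← map_mul, hπmk,
        Ideal.Quotient.eq_zero_iff_mem]
      exact Ideal.mul_mem_right r _ (Ideal.subset_span (by simp))
  have hrange : LinearMap.range πa.toLinearMap = ⊤ := LinearMap.range_eq_top.mpr hπsurj
  have hrn := LinearMap.finrank_range_add_finrank_ker (πa.toLinearMap)
  rw [hrange, hker, finrank_top] at hrn
  have hfinJ : FiniteDimensional F (MvPolynomial (Fin 2) F ⧸ J) :=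
    Module.Finite.of_surjective πa.toLinearMap hπsurj
  have hcol := colength_tri d (d + k - 1) (by omega) f g ℓ hf hg hl hl0 hfinJ
  rw [← hrn, Nat.add_sub_cancel] at h1
  rw [h1]
  exact hcol

end numparts

lemma claimA (d k : ℕ) (hd : 1 ≤ d) (hk : 1 ≤ k) (P : List ℕ)
    (hpos : ∀ x ∈ P, 0 < x)
    (hdiag : ∀ i, diagLen P i = Tdk d k i)
    (hL : P.length = d ∨ P.length = d + k - 1) (i : ℕ) :
    ((Finset.range P.length).filter (fun r => i < P.getD r 0 + r)).card
      = min P.length (d + (d + k - 1) - 1 - i) := by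
  have hentry : ∀ r, r < P.length → 0 < P.getD r 0 := by
    intro r hr
    rw [List.getD_eq_getElem P 0 hr]
    exact hpos _ (List.getElem_mem hr)
  have hT := hdiag i
  rw [diagLen] at hT
  by_cases hcase : P.length ≤ i + 1
  · -- all rows are ≤ i
    have hset : (Finset.range (i+1)).filter (fun r => i - r < P.getD r 0)
        = (Finset.range P.length).filter (fun r => i < P.getD r 0 + r) := by
      ext r
      simp only [Finset.mem_filter, Finset.mem_range]
      constructor
      · rintro ⟨hr, hlt⟩
        by_cases hrL : r < P.length
        · exact ⟨hrL, by omega⟩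
        · rw [List.getD_eq_default] at hlt
          · omega
          · omega
      · rintro ⟨hr, hlt⟩
        have := hentry r hr
        constructor <;> omega
    rw [hset] at hT
    rw [hT, Tdk]
    split_ifs <;> omega
  · -- rows split at i+1
    push_neg at hcase
    have hsplit : (Finset.range P.length).filter (fun r => i < P.getD r 0 + r)
        = ((Finset.range (i+1)).filter (fun r => i < P.getD r 0 + r))
          ∪ ((Finset.Ico (i+1) P.length).filter (fun r => i < P.getD r 0 + r)) := by
      ext r
      simp only [Finset.mem_filter, Finset.mem_range, Finset.mem_union, Finset.mem_Ico]
      constructor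
      · rintro ⟨h1, h2⟩
        by_cases hri : r < i + 1
        · exact Or.inl ⟨hri, h2⟩
        · exact Or.inr ⟨⟨by omega, h1⟩, h2⟩
      · rintro (⟨h1, h2⟩ | ⟨⟨h1a, h1b⟩, h2⟩)
        · exact ⟨by omega, h2⟩
        · exact ⟨h1b, h2⟩
    have hico : (Finset.Ico (i+1) P.length).filter (fun r => i < P.getD r 0 + r)
        = Finset.Ico (i+1) P.length := by
      apply Finset.filter_eq_self.mpr
      intro r hr
      rw [Finset.mem_Ico] at hr
      have := hentry r hr.2
      omega
    have hdisj : Disjoint ((Finset.range (i+1)).filter (fun r => i < P.getD r 0 + r))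
        ((Finset.Ico (i+1) P.length).filter (fun r => i < P.getD r 0 + r)) := by
      apply Finset.disjoint_filter_filter
      rw [Finset.range_eq_Ico]
      exact Finset.Ico_disjoint_Ico_consecutive 0 (i+1) P.length
    have hfirst : (Finset.range (i+1)).filter (fun r => i < P.getD r 0 + r)
        = (Finset.range (i+1)).filter (fun r => i - r < P.getD r 0) := by
      apply Finset.filter_congr
      intro r hr
      rw [Finset.mem_range] at hr
      constructor <;> intro h2 <;> omega
    rw [hsplit, Finset.card_union_of_disjoint hdisj, hico, hfirst, hT, Nat.card_Ico, Tdk]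
    split_ifs <;> omega

lemma qinj (d k : ℕ) (hd : 1 ≤ d) (hk : 1 ≤ k) (P : List ℕ)
    (hpos : ∀ x ∈ P, 0 < x)
    (hdiag : ∀ i, diagLen P i = Tdk d k i)
    (hL : P.length = d ∨ P.length = d + k - 1)
    {r r' : ℕ} (hrr : r < r') (hr'L : r' < P.length) :
    P.getD r 0 + r ≠ P.getD r' 0 + r' := by
  intro heq
  have hentry : ∀ s, s < P.length → 0 < P.getD s 0 := by
    intro s hs
    rw [List.getD_eq_getElem P 0 hs]
    exact hpos _ (List.getElem_mem hs)
  set v := P.getD r 0 + r with hv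
  have hrL : r < P.length := lt_trans hrr hr'L
  have hvpos : 1 ≤ v := by have := hentry r hrL; omega
  have hA1 := claimA d k hd hk P hpos hdiag hL (v - 1)
  have hA2 := claimA d k hd hk P hpos hdiag hL v
  set Av := (Finset.range P.length).filter (fun s => v < P.getD s 0 + s) with hAv
  have hrnotin : r ∉ Av := by
    rw [hAv, Finset.mem_filter]
    rintro ⟨-, h⟩
    omega
  have hr'notin : r' ∉ Av := by
    rw [hAv, Finset.mem_filter]
    rintro ⟨-, h⟩
    omega
  have hr'ne : r' ∉ ({r} : Finset ℕ) := by simp; omega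
  have hsub : insert r (insert r' Av)
      ⊆ (Finset.range P.length).filter (fun s => v - 1 < P.getD s 0 + s) := by
    intro s hs
    rw [Finset.mem_insert, Finset.mem_insert] at hs
    rw [Finset.mem_filter, Finset.mem_range]
    rcases hs with rfl | rfl | hs
    · exact ⟨hrL, by omega⟩
    · exact ⟨hr'L, by omega⟩
    · rw [hAv, Finset.mem_filter, Finset.mem_range] at hs
      exact ⟨hs.1, by omega⟩
  have hcard : (insert r (insert r' Av)).card = Av.card + 2 := by
    rw [Finset.card_insert_of_notMem, Finset.card_insert_of_notMem hr'notin]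
    rw [Finset.mem_insert]
    rintro (rfl | h)
    · omega
    · exact hrnotin h
  have := Finset.card_le_card hsub
  rw [hcard, hA1, hA2] at this
  omega

lemma flatten_getD_block : ∀ (LL : List (List ℕ)) (m : ℕ), m < LL.length →
    ∀ (c : ℕ), c < (LL.getD m []).length →
    LL.flatten.getD (((LL.take m).map List.length).sum + c) 0 = (LL.getD m []).getD c 0 := by
  intro LL
  induction LL with
  | nil => intro m hm; simp at hm
  | cons h tl ih =>
    intro m hm c hc
    cases m with
    | zero =>
      simp only [List.take_zero, List.map_nil, List.sum_nil, Nat.zero_add, List.flatten_cons,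
        List.getD_cons_zero] at *
      exact List.getD_append _ _ _ _ hc
    | succ m' =>
      simp only [List.take_succ_cons, List.map_cons, List.sum_cons, List.flatten_cons,
        List.getD_cons_succ] at *
      rw [add_assoc, List.getD_append_right _ _ _ _ (by omega), Nat.add_sub_cancel_left]
      exact ih m' (by simpa using hm) c hc

variable {t : ℕ} {p n : Fin t → ℕ}

/-- start of block `m` (sum of multiplicities of blocks before `m`) -/
def blockStart (n : Fin t → ℕ) (m : ℕ) : ℕ :=
  ∑ i ∈ Finset.univ.filter (fun i : Fin t => (i : ℕ) < m), n i

lemma powerList_length : (powerList t p n).length = blockStart n t := by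
  rw [powerList, List.length_flatten, blockStart]
  have h1 : Finset.univ.filter (fun i : Fin t => (i : ℕ) < t) = Finset.univ := by
    apply Finset.filter_eq_self.mpr
    intro i _
    exact i.isLt
  rw [h1, List.map_ofFn]
  have h2 : (List.ofFn ((fun l : List ℕ => l.length) ∘ fun i => List.replicate (n i) (p i))).sum
      = ∑ i : Fin t, n i := by
    rw [List.sum_ofFn]
    simp
  simpa using h2

lemma blockStart_succ (m : ℕ) (hm : m < t) :
    blockStart n (m + 1) = blockStart n m + n ⟨m, hm⟩ := by
  rw [blockStart, blockStart]
  have : Finset.univ.filter (fun i : Fin t => (i : ℕ) < m + 1)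
      = insert (⟨m, hm⟩ : Fin t) (Finset.univ.filter (fun i : Fin t => (i : ℕ) < m)) := by
    ext i
    simp only [Finset.mem_filter, Finset.mem_univ, true_and, Finset.mem_insert, Fin.ext_iff]
    omega
  rw [this, Finset.sum_insert (by simp)]
  ring

lemma blockStart_mono {m m' : ℕ} (h : m ≤ m') : blockStart n m ≤ blockStart n m' := by
  apply Finset.sum_le_sum_of_subset
  intro i hi
  simp only [Finset.mem_filter, Finset.mem_univ, true_and] at *
  omega

lemma powerList_getD (j : Fin t) (c : ℕ) (hc : c < n j) :
    (powerList t p n).getD (blockStart n j.val + c) 0 = p j := by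
  rw [powerList]
  set LL := List.ofFn fun i => List.replicate (n i) (p i) with hLL
  have hmlt : (j : ℕ) < LL.length := by simp [hLL]
  have hgetm : LL.getD j [] = List.replicate (n j) (p j) := by
    rw [List.getD_eq_getElem _ _ hmlt]
    simp [hLL]
  have hsum : ((LL.take j).map List.length).sum = blockStart n j := by
    rw [List.map_take, List.map_ofFn]
    have : (List.ofFn ((fun l : List ℕ => l.length) ∘ fun i => List.replicate (n i) (p i)))
        = List.ofFn (fun i => n i) := by
      congr 1
      funext i
      simp
    rw [this, List.sum_take_ofFn, blockStart]
  have := flatten_getD_block LL j hmlt c (by rw [hgetm]; simpa using hc)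
  rw [hsum, hgetm] at this
  rw [this]
  rw [List.getD_eq_getElem _ _ (by simpa using hc)]
  simp

/-- necessary criterion for CIJT. If a partition
`P = (p_1^{n_1}, …, p_t^{n_t})` of diagonal lengths `T(d,k)` has complete
intersection Jordan type, then `p_(i-1) ≥ n_(i-1) + n_i + p_i` for `2 ≤ i ≤ t`
(zero-based indices here). -/


theorem stmt_2 (F : Type) [Field F] [CharZero F] (d k : ℕ) (hd : 1 ≤ d) (hk : 1 ≤ k)
    (t : ℕ) (p n : Fin t → ℕ)
    (hp : ∀ i j : Fin t, i < j → p j < p i)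
    (hppos : ∀ i : Fin t, 0 < p i) (hnpos : ∀ i : Fin t, 0 < n i)
    (hdiag : ∀ i : ℕ, diagLen (powerList t p n) i = Tdk d k i)
    (hCI : IsCIJT F d k (powerList t p n)) :
    ∀ i : ℕ, ∀ h : i + 1 < t,
      n ⟨i, Nat.lt_of_succ_lt h⟩ + n ⟨i + 1, h⟩ + p ⟨i + 1, h⟩ ≤
        p ⟨i, Nat.lt_of_succ_lt h⟩ := by
  intro i hi1
  set a : Fin t := ⟨i, Nat.lt_of_succ_lt hi1⟩ with ha
  set b : Fin t := ⟨i + 1, hi1⟩ with hb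
  set P := powerList t p n with hP
  have hpos : ∀ x ∈ P, 0 < x := by
    intro x hx
    obtain ⟨m, rfl⟩ := powerList_mem hx
    exact hppos m
  have hL : P.length = d ∨ P.length = d + k - 1 := numparts F hk hppos hCI
  have hpab : p b < p a := hp a b (Fin.mk_lt_mk.mpr (Nat.lt_succ_self i))
  set S := blockStart n i with hS
  have hgA : ∀ c, c < n a → P.getD (S + c) 0 = p a := by
    intro c hc
    exact powerList_getD a c hc
  have hS1 : blockStart n (i + 1) = S + n a :=
    blockStart_succ i (Nat.lt_of_succ_lt hi1)
  have hgB : ∀ c, c < n b → P.getD (S + n a + c) 0 = p b := by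
    intro c hc
    have h0 := powerList_getD (p := p) b c hc
    rw [show ((b : ℕ)) = i + 1 from rfl, hS1] at h0
    exact h0
  have hna : 0 < n a := hnpos a
  have hnb : 0 < n b := hnpos b
  have hLlen : S + n a + n b ≤ P.length := by
    have h2 : blockStart n (i + 2) = S + n a + n b := by
      rw [show i + 2 = (i + 1) + 1 from rfl, blockStart_succ (i + 1) hi1, hS1]
    rw [hP, powerList_length, ← h2]
    exact blockStart_mono (by omega)
  by_contra hcon
  push_neg at hcon
  have hq : ∀ {r r' : ℕ}, r < r' → r' < P.length →
      P.getD r 0 + r ≠ P.getD r' 0 + r' :=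
    fun hrr hr'L => qinj d k hd hk P hpos hdiag hL hrr hr'L
  by_cases h02 : p b + n a ≤ p a
  · set c := p a - (p b + n a) with hc
    have hcnb : c < n b := by omega
    have e1 : P.getD S 0 = p a := by
      have h3 := hgA 0 hna
      simpa using h3
    have e2 : P.getD (S + n a + c) 0 = p b := hgB c hcnb
    apply hq (r := S) (r' := S + n a + c) (by omega) (by omega)
    rw [e1, e2]
    omega
  · push_neg at h02
    set c := p b + n a - p a with hc
    have hcna : c < n a := by omega
    have e1 : P.getD (S + c) 0 = p a := hgA c hcna
    have e2 : P.getD (S + n a) 0 = p b := by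
      have h3 := hgB 0 hnb
      simpa using h3
    apply hq (r := S + c) (r' := S + n a) (by omega) (by omega)
    rw [e1, e2]
    omega
end

section
/- Let d ≥ 1 and let b : {0,1,…,d} → {0,1,…,d} be a bijection, and let e be the unique index with b(e) = 0. Then b(i+1) ≤ b(i) + 1 holds for every 0 ≤ i ≤ d−1 with i ≠ e if and only if the list (b(0), b(1), …, b(d)) can be written as a concatenation v_1 ++ ⋯ ++ v_a ++ [0] ++ h_1 ++ ⋯ ++ h_c (with a ≥ 0 and c ≥ 0, either group possibly empty) in which each v_r and each h_r is a nonempty list of consecutive increasing integers of the form [m, m+1, …, M], the sets of entries of these lists are pairwise disjoint and their union is {1, …, d}, the minima of v_1, …, v_a are strictly decreasing, and the maxima of h_1, …, h_c are strictly decreasing. -/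
open MvPolynomial

/-- A "run": a nonempty list of consecutive increasing integers `[m, m+1, …, m+len-1]`. -/
def IsRun (l : List ℕ) : Prop := ∃ m len : ℕ, 0 < len ∧ l = List.range' m len

def runs : List ℕ → List (List ℕ)
  | [] => []
  | x :: xs =>
    match runs xs with
    | [] => [[x]]
    | l :: ls => if x + 1 = l.headI then (x :: l) :: ls else [x] :: l :: ls

lemma runs_cons (x : ℕ) (xs : List ℕ) :
    runs (x :: xs) = match runs xs with
      | [] => [[x]]
      | l :: ls => if x + 1 = l.headI then (x :: l) :: ls else [x] :: l :: ls := rfl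

lemma runs_flatten (L : List ℕ) : (runs L).flatten = L := by
  induction L with
  | nil => rfl
  | cons x xs ih =>
    rw [runs_cons]
    cases hr : runs xs with
    | nil => rw [hr] at ih; simp at ih; simp [← ih]
    | cons l ls =>
      rw [hr] at ih
      by_cases hc : x + 1 = l.headI <;> simp [hc, ← ih]

lemma isRun_iff {l : List ℕ} : IsRun l ↔ ∃ m n : ℕ, l = List.range' m (n + 1) := by
  constructor
  · rintro ⟨m, len, hlen, rfl⟩
    exact ⟨m, len - 1, by rw [Nat.sub_add_cancel hlen]⟩
  · rintro ⟨m, n, rfl⟩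
    exact ⟨m, n + 1, Nat.succ_pos n, rfl⟩

lemma isRun_ne_nil {l : List ℕ} (h : IsRun l) : l ≠ [] := by
  obtain ⟨m, n, rfl⟩ := isRun_iff.1 h
  simp [List.range'_succ]

lemma headI_range' (m n : ℕ) : (List.range' m (n + 1)).headI = m := by
  rw [List.range'_succ]; rfl

lemma head?_range' (m n : ℕ) : (List.range' m (n + 1)).head? = some m := by
  rw [List.range'_succ]; rfl

lemma getLastD_range' (m n : ℕ) : (List.range' m (n + 1)).getLastD 0 = m + n := by
  rw [List.range'_concat]
  simpa using List.getLastD_concat 0 (m + 1 * n) (List.range' m n)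

lemma getLast?_range' (m n : ℕ) : (List.range' m (n + 1)).getLast? = some (m + n) := by
  rw [List.range'_concat]
  simpa using List.getLast?_concat (List.range' m n)

lemma isRun_headI_le {l : List ℕ} (h : IsRun l) : l.headI ≤ l.getLastD 0 := by
  obtain ⟨m, n, rfl⟩ := isRun_iff.1 h
  rw [headI_range', getLastD_range']; omega

lemma chain'_def {α : Type*} {R : α → α → Prop} {l : List α} :
    List.Chain' R l ↔ List.IsChain R l := Iff.rfl

lemma chain'_range' (m n : ℕ) :
    List.Chain' (fun a b => b ≤ a + 1) (List.range' m n) := by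
  induction n generalizing m with
  | zero => simp [List.Chain']
  | succ n ih =>
    rw [List.range'_succ]
    rcases n with _ | n
    · simp [List.Chain']
    · rw [chain'_def, List.isChain_cons]
      refine ⟨?_, ih (m + 1)⟩
      intro y hy
      rw [head?_range'] at hy
      simp at hy
      omega

lemma chain'_mono_mem {α : Type*} {R S : α → α → Prop} {l : List α}
    (h : List.Chain' R l) (hRS : ∀ a ∈ l, ∀ b ∈ l, R a b → S a b) :
    List.Chain' S l := by
  rw [chain'_def, List.isChain_iff_getElem] at h ⊢
  intro i hi
  exact hRS _ (List.getElem_mem _) _ (List.getElem_mem _) (h i hi)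

lemma chain'_flatten_runs {ls : List (List ℕ)} (hrun : ∀ l ∈ ls, IsRun l)
    (hadj : List.Chain' (fun l₁ l₂ => l₂.headI ≤ l₁.getLastD 0) ls) :
    List.Chain' (fun a b => b ≤ a + 1) ls.flatten := by
  rw [chain'_def, List.isChain_flatten (fun hmem => isRun_ne_nil (hrun _ hmem) rfl)]
  constructor
  · rintro l hl
    obtain ⟨m, n, rfl⟩ := isRun_iff.1 (hrun l hl)
    exact chain'_range' m (n + 1)
  · refine chain'_mono_mem hadj ?_
    rintro l₁ h₁ l₂ h₂ hle x hx y hy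
    obtain ⟨m₁, n₁, rfl⟩ := isRun_iff.1 (hrun l₁ h₁)
    obtain ⟨m₂, n₂, rfl⟩ := isRun_iff.1 (hrun l₂ h₂)
    rw [getLast?_range'] at hx
    rw [head?_range'] at hy
    rw [headI_range', getLastD_range'] at hle
    simp only [Option.mem_def, Option.some.injEq] at hx hy
    omega

lemma chain'_flatten_of_heads {v : List (List ℕ)} (hr : ∀ l ∈ v, IsRun l)
    (hc : List.Chain' (fun l₁ l₂ => l₂.headI < l₁.headI) v) :
    List.Chain' (fun a b => b ≤ a + 1) v.flatten :=
  chain'_flatten_runs hr (chain'_mono_mem hc (fun l₁ h₁ _ _ hlt =>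
    le_trans (le_of_lt hlt) (isRun_headI_le (hr l₁ h₁))))

lemma chain'_flatten_of_lasts {h : List (List ℕ)} (hr : ∀ l ∈ h, IsRun l)
    (hc : List.Chain' (fun l₁ l₂ => l₂.getLastD 0 < l₁.getLastD 0) h) :
    List.Chain' (fun a b => b ≤ a + 1) h.flatten :=
  chain'_flatten_runs hr (chain'_mono_mem hc (fun _ _ l₂ h₂ hlt =>
    le_trans (isRun_headI_le (hr l₂ h₂)) (le_of_lt hlt)))

lemma runs_spec (L : List ℕ) (hnd : L.Nodup)
    (hch : L.Chain' (fun a b => b ≤ a + 1)) :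
    (∀ l ∈ runs L, IsRun l) ∧
    (runs L).Chain' (fun l₁ l₂ => l₂.headI < l₁.headI) ∧
    (runs L).Chain' (fun l₁ l₂ => l₂.getLastD 0 < l₁.getLastD 0) := by
  induction L with
  | nil => simp [runs, List.Chain']
  | cons x xs ih =>
    have hx : x ∉ xs := (List.nodup_cons.1 hnd).1
    obtain ⟨hrun, hhd, hlast⟩ := ih (List.nodup_cons.1 hnd).2 hch.tail
    cases hr : runs xs with
    | nil =>
      rw [runs_cons, hr]
      refine ⟨?_, by simp [List.Chain'], by simp [List.Chain']⟩
      rintro l hl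
      simp at hl
      exact ⟨x, 1, one_pos, by simp [hl]⟩
    | cons l ls =>
      rw [hr] at hrun hhd hlast
      obtain ⟨m, n, hl⟩ := isRun_iff.1 (hrun l (by simp))
      have hflat : l ++ ls.flatten = xs := by
        rw [← runs_flatten xs, hr]; simp
      have hmem_l : ∀ y ∈ l, y ∈ xs := fun y hy => by
        rw [← hflat]; exact List.mem_append_left _ hy
      have hmem_ls : ∀ l' ∈ ls, ∀ y ∈ l', y ∈ xs := fun l' hl' y hy => by
        rw [← hflat]; exact List.mem_append_right _ (List.mem_flatten.2 ⟨l', hl', hy⟩)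
      have hlheadI : l.headI = m := by rw [hl]; exact headI_range' m n
      have hlgetLast : l.getLastD 0 = m + n := by rw [hl]; exact getLastD_range' m n
      have hm_mem : m ∈ xs := hmem_l m (by rw [hl, List.mem_range'_1]; omega)
      have hm_le : m ≤ x + 1 := by
        have h1 := (List.isChain_cons.1 hch).1
        have hxs : xs.head? = some m := by
          rw [← hflat, hl, List.range'_succ]; rfl
        exact h1 m (by rw [hxs]; rfl)
      have hm_ne : m ≠ x := fun hmx => hx (hmx ▸ hm_mem)
      -- headI's of elements of ls are in xs and thus ≠ x
      have hls_head_ne : ∀ l' ∈ ls, l'.headI ≠ x := by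
        intro l' hl' hcon
        apply hx
        have hne := isRun_ne_nil (hrun l' (by simp [hl']))
        have hmem : l'.headI ∈ l' := by
          cases l' with
          | nil => simp at hne
          | cons a t => simp
        rw [hcon] at hmem
        exact hmem_ls l' hl' x hmem
      by_cases hcase : x + 1 = l.headI
      · -- merge x into l
        rw [runs_cons, hr]
        simp only [if_pos hcase]
        have hm_eq : m = x + 1 := by rw [← hlheadI, ← hcase]
        have hxl : x :: l = List.range' x (n + 2) := by
          have h2 : List.range' x (n + 2) = x :: List.range' (x + 1) (n + 1) :=
            List.range'_succ (s := x) (n := n + 1) (step := 1)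
          rw [h2, hl, hm_eq]
        refine ⟨?_, ?_, ?_⟩
        · rintro l' hl'
          rcases List.mem_cons.1 hl' with rfl | hl''
          · exact ⟨x, n + 2, by omega, hxl⟩
          · exact hrun l' (by simp [hl''])
        · rw [chain'_def, List.isChain_cons] at hhd ⊢
          refine ⟨?_, hhd.2⟩
          intro y hy
          have h1 := hhd.1 y hy
          have hne : y.headI ≠ x := by
            rcases ls with _ | ⟨l₂, ls'⟩
            · simp at hy
            · simp at hy
              subst hy
              exact hls_head_ne _ (by simp)
          have : (x :: l).headI = x := rfl
          rw [this]
          rw [hlheadI, hm_eq] at h1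
          omega
        · rw [chain'_def, List.isChain_cons] at hlast ⊢
          refine ⟨?_, hlast.2⟩
          intro y hy
          have h1 := hlast.1 y hy
          have hgl : (x :: l).getLastD 0 = l.getLastD 0 := by
            rw [hxl, getLastD_range' x (n + 1), hlgetLast]
            omega
          rw [hgl]
          exact h1
      · -- new singleton run [x]
        rw [runs_cons, hr]
        simp only [if_neg hcase]
        have hm_lt : m < x := by
          rw [hlheadI] at hcase
          omega
        refine ⟨?_, ?_, ?_⟩
        · rintro l' hl'
          rcases List.mem_cons.1 hl' with rfl | hl''
          · exact ⟨x, 1, one_pos, by simp⟩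
          · exact hrun l' hl''
        · rw [chain'_def, List.isChain_cons]
          refine ⟨?_, hhd⟩
          intro y hy
          simp at hy
          subst hy
          show l.headI < [x].headI
          rw [hlheadI]
          exact hm_lt
        · rw [chain'_def, List.isChain_cons]
          refine ⟨?_, hlast⟩
          intro y hy
          simp at hy
          subst hy
          show l.getLastD 0 < [x].getLastD 0
          have hxx : [x].getLastD 0 = x := rfl
          have hnle : ¬ (x ≤ m + n) := by
            intro hle
            exact hx (hmem_l x (by rw [hl, List.mem_range'_1]; omega))
          rw [hlgetLast, hxx]
          omega

lemma getElem_eq_of_eq {l : List ℕ} {i j : ℕ} (hij : i = j) {hi : i < l.length} :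
    l[i] = l[j]'(hij ▸ hi) := by subst hij; rfl

set_option maxHeartbeats 1000000 in
/-- characterization of branch labels, combinatorial. For a
bijection `b` of `{0,…,d}` with `b e = 0`, one has `b(i+1) ≤ b(i)+1` for all
`i ≠ e` iff the word `(b 0, …, b d)` decomposes as runs `v_1 … v_a`, then `0`,
then runs `h_1 … h_c`, the runs being disjoint with union `{1,…,d}`, the heads
(minima) of the `v`'s strictly decreasing and the last entries (maxima) of the
`h`'s strictly decreasing. -/
theorem stmt_4 (d : ℕ) (hd : 1 ≤ d) (b : Fin (d + 1) → Fin (d + 1))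
    (hb : Function.Bijective b) (e : Fin (d + 1)) (he : b e = 0) :
    (∀ i : Fin d, (i : ℕ) ≠ (e : ℕ) → (b i.succ : ℕ) ≤ (b i.castSucc : ℕ) + 1) ↔
    ∃ v h : List (List ℕ),
      (List.ofFn fun i : Fin (d + 1) => (b i : ℕ)) = v.flatten ++ [0] ++ h.flatten ∧
      (∀ l ∈ v ++ h, IsRun l) ∧
      ((v ++ h).flatten).Perm (List.range' 1 d) ∧
      List.Chain' (fun l₁ l₂ => l₂.headI < l₁.headI) v ∧
      List.Chain' (fun l₁ l₂ => l₂.getLastD 0 < l₁.getLastD 0) h := by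
  obtain ⟨L, hLdef⟩ : ∃ L : List ℕ, List.ofFn (fun i : Fin (d + 1) => (b i : ℕ)) = L := ⟨_, rfl⟩
  rw [hLdef]
  have hLlen : L.length = d + 1 := by rw [← hLdef]; simp
  have hLget : ∀ (j : ℕ) (hj : j < d + 1), L[j]'(by omega) = (b ⟨j, hj⟩ : ℕ) := fun j hj =>
    (List.getElem_of_eq hLdef.symm (by omega)).trans (List.getElem_ofFn (by simpa using hj))
  have hLnd : L.Nodup := by
    rw [← hLdef, List.nodup_ofFn]
    exact fun i j hij => hb.1 (Fin.val_injective hij)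
  have he1 : (e : ℕ) < d + 1 := e.isLt
  have hLe : L[(e : ℕ)]'(by omega) = 0 := by
    rw [hLget (e : ℕ) he1]
    have : (⟨(e : ℕ), he1⟩ : Fin (d + 1)) = e := rfl
    rw [this, he]
    rfl
  constructor
  · -- forward direction
    intro hstep
    have hstepN : ∀ (j k : ℕ) (hj : j < d) (hk : k < d + 1), k = j + 1 → j ≠ (e : ℕ) →
        L[k]'(by omega) ≤ L[j]'(by omega) + 1 := by
      rintro j k hj hk rfl hje
      rw [hLget (j + 1) hk, hLget j (by omega)]
      exact hstep ⟨j, hj⟩ hje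
    set A := L.take (e : ℕ) with hA
    set B := L.drop ((e : ℕ) + 1) with hB
    have hAlen : A.length = (e : ℕ) := by
      rw [hA, List.length_take, hLlen]; omega
    have hBlen : B.length = d - (e : ℕ) := by
      rw [hB, List.length_drop, hLlen]; omega
    have hdrop : L.drop (e : ℕ) = 0 :: B := by
      rw [List.drop_eq_getElem_cons (by omega : (e : ℕ) < L.length)]
      rw [hLe]
    have hsplit : L = A ++ [0] ++ B := by
      conv_lhs => rw [← List.take_append_drop (e : ℕ) L]
      rw [hdrop, List.append_assoc]
      rfl
    have hAnd : A.Nodup := (List.take_sublist _ _).nodup hLnd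
    have hBnd : B.Nodup := (List.drop_sublist _ _).nodup hLnd
    have hAch : A.Chain' (fun a c => c ≤ a + 1) := by
      rw [chain'_def, List.isChain_iff_getElem]
      intro i hi
      rw [hAlen] at hi
      rw [List.getElem_take, List.getElem_take]
      exact hstepN i (i + 1) (by omega) (by omega) rfl (by omega)
    have hBch : B.Chain' (fun a c => c ≤ a + 1) := by
      rw [chain'_def, List.isChain_iff_getElem]
      intro i hi
      rw [hBlen] at hi
      rw [List.getElem_drop, List.getElem_drop]
      have key := hstepN ((e : ℕ) + 1 + i) ((e : ℕ) + 1 + (i + 1)) (by omega) (by omega)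
        (by omega) (by omega)
      exact key
    obtain ⟨hArun, hAhd, hAlast⟩ := runs_spec A hAnd hAch
    obtain ⟨hBrun, hBhd, hBlast⟩ := runs_spec B hBnd hBch
    refine ⟨runs A, runs B, ?_, ?_, ?_, hAhd, hBlast⟩
    · rw [runs_flatten, runs_flatten, ← hsplit]
    · intro l hl
      rcases List.mem_append.1 hl with h' | h'
      · exact hArun l h'
      · exact hBrun l h'
    · rw [List.flatten_append, runs_flatten, runs_flatten]
      have hperm0 : L.Perm (List.range' 0 (d + 1)) := by
        rw [List.perm_ext_iff_of_nodup hLnd (List.nodup_range' (s := 0) (n := d + 1))]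
        intro a
        rw [List.mem_range'_1]
        constructor
        · intro ha
          rw [← hLdef, List.mem_ofFn] at ha
          obtain ⟨i, rfl⟩ := ha
          exact ⟨Nat.zero_le _, by simpa using (b i).isLt⟩
        · rintro ⟨-, ha⟩
          obtain ⟨i, hi⟩ := hb.2 ⟨a, by omega⟩
          rw [← hLdef, List.mem_ofFn]
          exact ⟨i, by simp [hi]⟩
      have hr01 : List.range' 0 (d + 1) = 0 :: List.range' 1 d := List.range'_succ (s := 0) (n := d) (step := 1)
      have h3 : A ++ [0] ++ B = A ++ 0 :: B := by simp
      have h2 : (A ++ 0 :: B).Perm (0 :: (A ++ B)) := List.perm_middle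
      have h1 : (0 :: (A ++ B)).Perm (0 :: List.range' 1 d) := by
        refine h2.symm.trans ?_
        rw [← h3, ← hsplit]
        exact hr01 ▸ hperm0
      exact h1.cons_inv
  · rintro ⟨v, h, hsplit, hruns, hperm, hvch, hhch⟩ i hie
    have hid : (i : ℕ) < d := i.isLt
    have hvruns : ∀ l ∈ v, IsRun l := fun l hl => hruns l (List.mem_append_left _ hl)
    have hhruns : ∀ l ∈ h, IsRun l := fun l hl => hruns l (List.mem_append_right _ hl)
    obtain ⟨E, hE⟩ : ∃ E, v.flatten.length = E := ⟨_, rfl⟩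
    obtain ⟨P, hPdef⟩ : ∃ P, v.flatten ++ [0] = P := ⟨_, rfl⟩
    have hsplit2 : L = P ++ h.flatten := by rw [← hPdef]; exact hsplit
    have hPlen : P.length = E + 1 := by
      rw [← hPdef, List.length_append, List.length_singleton, hE]
    have hlen2 : (E + 1) + h.flatten.length = d + 1 := by
      have h4 := congrArg List.length hsplit2
      rw [hLlen, List.length_append, hPlen] at h4
      omega
    have hL3 : L = v.flatten ++ (0 :: h.flatten) := by rw [hsplit, List.append_assoc, List.singleton_append]
    have hPe : L[E]'(by omega) = 0 :=
      (List.getElem_of_eq hL3 (by omega)).trans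
        ((List.getElem_append_right (by omega : v.flatten.length ≤ E)).trans
          ((getElem_eq_of_eq (show E - v.flatten.length = 0 from by omega)).trans rfl))
    have he2 : (e : ℕ) = E := by
      have h0 : L[(e : ℕ)]'(by omega) = L[E]'(by omega) := hLe.trans hPe.symm
      exact (List.Nodup.getElem_inj_iff hLnd (hi := by omega) (hj := by omega)).1 h0
    have hbc : (b i.castSucc : ℕ) = L[(i : ℕ)]'(by omega) :=
      (hLget (i : ℕ) (by omega)).symm
    have hbs : (b i.succ : ℕ) = L[(i : ℕ) + 1]'(by omega) :=
      (hLget ((i : ℕ) + 1) (by omega)).symm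
    have hine : (i : ℕ) ≠ E := by omega
    rcases Nat.lt_or_ge (i : ℕ) E with hlt | hge
    · have hvflat := chain'_flatten_of_heads hvruns hvch
      have hPch : P.Chain' (fun a c => c ≤ a + 1) := by
        rw [← hPdef]
        exact List.IsChain.append hvflat (List.isChain_singleton 0) (by
          intro x hx y hy
          simp at hy
          omega)
      have key := List.isChain_iff_getElem.1 hPch (i : ℕ) (by rw [hPlen]; omega)
      have k1 : L[(i : ℕ)]'(by omega) = P[(i : ℕ)]'(by rw [hPlen]; omega) :=
        (List.getElem_of_eq hsplit2 (by omega)).trans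
          (List.getElem_append_left (by rw [hPlen]; omega))
      have k2 : L[(i : ℕ) + 1]'(by omega) = P[(i : ℕ) + 1]'(by rw [hPlen]; omega) :=
        (List.getElem_of_eq hsplit2 (by omega)).trans
          (List.getElem_append_left (by rw [hPlen]; omega))
      calc (b i.succ : ℕ) = L[(i : ℕ) + 1]'(by omega) := hbs
        _ = P[(i : ℕ) + 1]'(by rw [hPlen]; omega) := k2
        _ ≤ P[(i : ℕ)]'(by rw [hPlen]; omega) + 1 := key
        _ = L[(i : ℕ)]'(by omega) + 1 := congrArg (· + 1) k1.symm
        _ = (b i.castSucc : ℕ) + 1 := congrArg (· + 1) hbc.symm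
    · have hgt : E < (i : ℕ) := lt_of_le_of_ne hge (Ne.symm hine)
      have hhflat := chain'_flatten_of_lasts hhruns hhch
      have hfl : h.flatten.length = d - E := by omega
      have key := List.isChain_iff_getElem.1 hhflat ((i : ℕ) - (E + 1)) (by rw [hfl]; omega)
      have k1 : L[(i : ℕ)]'(by omega) = h.flatten[(i : ℕ) - (E + 1)]'(by rw [hfl]; omega) :=
        (List.getElem_of_eq hsplit2 (by omega)).trans
          ((List.getElem_append_right (by rw [hPlen]; omega : P.length ≤ (i : ℕ))).trans
            (getElem_eq_of_eq (by rw [hPlen])))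
      have k2 : L[(i : ℕ) + 1]'(by omega) =
          h.flatten[((i : ℕ) - (E + 1)) + 1]'(by rw [hfl]; omega) :=
        (List.getElem_of_eq hsplit2 (by omega)).trans
          ((List.getElem_append_right (by rw [hPlen]; omega : P.length ≤ (i : ℕ) + 1)).trans
            (getElem_eq_of_eq (by rw [hPlen]; omega)))
      calc (b i.succ : ℕ) = L[(i : ℕ) + 1]'(by omega) := hbs
        _ = h.flatten[((i : ℕ) - (E + 1)) + 1]'(by rw [hfl]; omega) := k2
        _ ≤ h.flatten[(i : ℕ) - (E + 1)]'(by rw [hfl]; omega) + 1 := key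
        _ = L[(i : ℕ)]'(by omega) + 1 := congrArg (· + 1) k1.symm
        _ = (b i.castSucc : ℕ) + 1 := congrArg (· + 1) hbc.symm
end

section
/- Let d ≥ 2 and k ≥ 1 be integers. Let P = (p_1 ≥ p_2 ≥ …) and Q = (q_1 ≥ q_2 ≥ …) be partitions of d(d+k−1), each having diagonal lengths T(d,k) and each satisfying the CI criterion. Define H(P) = {i ∈ {0, 1, …, d−1} : p_1 + ⋯ + p_{i+1} = (i+1)(2d+k−2−i)} and define H(Q) analogously (parts beyond the length of a partition are taken to be 0). Then Q ≤ P in the dominance order if and only if H(Q) ⊆ H(P). -/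
open MvPolynomial

set_option maxHeartbeats 1000000

namespace Stmt13

/-- partial sum as an integer -/

def sg (P : List ℕ) (m : ℕ) : ℤ := ((P.take m).sum : ℤ)

lemma sg_eq_sum_range (P : List ℕ) (m : ℕ) :
    sg P m = ∑ r ∈ Finset.range m, (P.getD r 0 : ℤ) := by
  induction m with
  | zero => simp [sg]
  | succ m ih =>
      rw [Finset.sum_range_succ, ← ih, sg, sg, List.take_succ]
      simp only [List.sum_append, Nat.cast_add]
      congr 1
      rcases lt_or_ge m P.length with h | h
      · simp [List.getElem?_eq_getElem h, List.getD_eq_getElem P 0 h]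
      · simp [List.getElem?_eq_none h, List.getD_eq_default, h]

lemma getD_anti {P : List ℕ} (hs : P.Pairwise (· ≥ ·)) {r s : ℕ} (h : r ≤ s) :
    P.getD s 0 ≤ P.getD r 0 := by
  rcases lt_or_ge s P.length with hx | hx
  · have hr : r < P.length := lt_of_le_of_lt h hx
    rcases eq_or_lt_of_le h with rfl | hlt
    · exact le_refl _
    · rw [List.getD_eq_getElem P 0 hx, List.getD_eq_getElem P 0 hr]
      exact List.pairwise_iff_getElem.mp hs r s hr hx hlt
  · rw [List.getD_eq_default P 0 hx]
    exact Nat.zero_le _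

lemma sum_Ico_sg (P : List ℕ) {a m : ℕ} (h : a ≤ m) :
    sg P m - sg P a = ∑ r ∈ Finset.Ico a m, (P.getD r 0 : ℤ) := by
  have key := Finset.sum_Ico_consecutive (fun r => (P.getD r 0 : ℤ)) (Nat.zero_le a) h
  rw [sg_eq_sum_range, sg_eq_sum_range, Finset.range_eq_Ico, Finset.range_eq_Ico]
  linarith [key]

lemma chord {P : List ℕ} (hs : P.Pairwise (· ≥ ·)) {a m b : ℕ} (h1 : a ≤ m) (h2 : m ≤ b) :
    ((b : ℤ) - m) * sg P a + ((m : ℤ) - a) * sg P b ≤ ((b : ℤ) - a) * sg P m := by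
  rcases eq_or_lt_of_le h1 with rfl | h1
  · ring_nf
    have : ((b:ℤ) - a) * sg P a ≤ ((b:ℤ) - a) * sg P a := le_refl _
    linarith
  rcases eq_or_lt_of_le h2 with rfl | h2
  · linarith
  have hm1 : 1 ≤ m := by omega
  have low : ((m : ℤ) - a) * (P.getD (m-1) 0 : ℤ) ≤ sg P m - sg P a := by
    rw [sum_Ico_sg P h1.le]
    have := Finset.card_nsmul_le_sum (Finset.Ico a m) (fun r => (P.getD r 0 : ℤ))
      ((P.getD (m-1) 0 : ℤ)) (fun x hx => by
        have hxm : x ≤ m - 1 := by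
          have := (Finset.mem_Ico.mp hx).2; omega
        show ((P.getD (m-1) 0 : ℕ) : ℤ) ≤ ((P.getD x 0 : ℕ) : ℤ)
        exact_mod_cast getD_anti hs hxm)
    rw [Nat.card_Ico] at this
    have hc : ((m - a : ℕ) : ℤ) = (m : ℤ) - a := by omega
    rw [nsmul_eq_mul, hc] at this
    exact this
  have high : sg P b - sg P m ≤ ((b : ℤ) - m) * (P.getD m 0 : ℤ) := by
    rw [sum_Ico_sg P h2.le]
    have := Finset.sum_le_card_nsmul (Finset.Ico m b) (fun r => (P.getD r 0 : ℤ))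
      ((P.getD m 0 : ℤ)) (fun x hx => by
        have hxm : m ≤ x := (Finset.mem_Ico.mp hx).1
        show ((P.getD x 0 : ℕ) : ℤ) ≤ ((P.getD m 0 : ℕ) : ℤ)
        exact_mod_cast getD_anti hs hxm)
    rw [Nat.card_Ico] at this
    have hc : ((b - m : ℕ) : ℤ) = (b : ℤ) - m := by omega
    rw [nsmul_eq_mul, hc] at this
    exact this
  have mid : (P.getD m 0 : ℤ) ≤ (P.getD (m-1) 0 : ℤ) := by
    exact_mod_cast getD_anti hs (by omega)
  nlinarith [mul_le_mul_of_nonneg_left low (by omega : (0:ℤ) ≤ (b:ℤ) - m),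
    mul_le_mul_of_nonneg_left high (by omega : (0:ℤ) ≤ (m:ℤ) - a),
    mul_le_mul_of_nonneg_left (mul_le_mul_of_nonneg_left mid (by omega : (0:ℤ) ≤ (m:ℤ) - a)) (by omega : (0:ℤ) ≤ (b:ℤ) - m)]

lemma diagLen_nil (j : ℕ) : diagLen [] j = 0 := by
  simp [diagLen]

lemma diagLen_cons_succ (x : ℕ) (xs : List ℕ) (j : ℕ) :
    diagLen (x :: xs) (j + 1) = (if j + 1 < x then 1 else 0) + diagLen xs j := by
  unfold diagLen
  rw [Finset.card_filter, Finset.card_filter, Finset.sum_range_succ']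
  simp only [List.getD_cons_succ, List.getD_cons_zero, Nat.sub_zero, Nat.succ_sub_succ]
  rw [add_comm]

lemma diagLen_cons_zero (x : ℕ) (xs : List ℕ) :
    diagLen (x :: xs) 0 = if 0 < x then 1 else 0 := by
  simp [diagLen, Finset.filter_singleton, Finset.range_one]
  split_ifs <;> simp

lemma diagLen_rep_append (p : ℕ) (Q : List ℕ) :
    ∀ n j, diagLen (List.replicate n p ++ Q) (n + j) = min n (p - (j+1)) + diagLen Q j := by
  intro n
  induction n with
  | zero => simp
  | succ n ih =>
      intro j
      have h1 : List.replicate (n+1) p ++ Q = p :: (List.replicate n p ++ Q) := by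
        simp [List.replicate_succ]
      have h2 : n + 1 + j = (n + j) + 1 := by omega
      rw [h1, h2, diagLen_cons_succ, ih]
      rcases lt_or_ge (n + j + 1) p with h | h
      · simp only [if_pos h]; omega
      · simp only [if_neg (by omega : ¬ n + j + 1 < p)]; omega

lemma exists_peel : ∀ (P : List ℕ), P ≠ [] → P.Pairwise (· ≥ ·) →
    ∃ p n Q, 0 < n ∧ P = List.replicate n p ++ Q ∧ (∀ x ∈ Q, x < p) := by
  intro P
  induction P with
  | nil => intro h; exact absurd rfl h
  | cons x t ih =>
      intro _ hs
      rcases List.pairwise_cons.mp hs with ⟨hx, hts⟩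
      rcases eq_or_ne t [] with rfl | ht
      · exact ⟨x, 1, [], one_pos, by simp, by simp⟩
      · obtain ⟨p, n, Q, hn, hteq, hQ⟩ := ih ht hts
        have hpt : p ∈ t := by
          rw [hteq]; exact List.mem_append_left _ (by simp [List.mem_replicate]; omega)
        have hxp : p ≤ x := hx p hpt
        rcases eq_or_lt_of_le hxp with rfl | hlt
        · refine ⟨p, n + 1, Q, by omega, ?_, hQ⟩
          rw [List.replicate_succ, List.cons_append, hteq]
        · refine ⟨x, 1, t, one_pos, by simp, ?_⟩
          intro y hy
          rw [hteq] at hy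
          rcases List.mem_append.mp hy with h | h
          · have : y = p := (List.mem_replicate.mp h).2
            omega
          · have := hQ y h; omega

lemma count_peel {p n : ℕ} {Q : List ℕ} (hQ : ∀ x ∈ Q, x < p) :
    (List.replicate n p ++ Q).count p = n := by
  have hz : List.count p Q = 0 := List.count_eq_zero.mpr (by intro h; have := hQ p h; omega)
  rw [List.count_append, List.count_replicate, hz]
  simp

lemma count_peel' {p n q : ℕ} {Q : List ℕ} (hq : q ≠ p) :
    (List.replicate n p ++ Q).count q = Q.count q := by
  rw [List.count_append, List.count_replicate, if_neg (by simpa using Ne.symm hq)]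
  omega

lemma ci_tail {p n : ℕ} {Q : List ℕ} (hn : 0 < n) (hQ : ∀ x ∈ Q, x < p)
    (hCI : CICriterion (List.replicate n p ++ Q)) : CICriterion Q := by
  intro a b ha hb hba hadj
  have ha' : a ∈ List.replicate n p ++ Q := List.mem_append_right _ ha
  have hb' : b ∈ List.replicate n p ++ Q := List.mem_append_right _ hb
  have hap : a < p := hQ a ha
  have h := hCI a b ha' hb' hba (fun x hx => by
    rcases List.mem_append.mp hx with h | h
    · right; have : x = p := (List.mem_replicate.mp h).2; omega
    · exact hadj x h)
  rwa [count_peel' (by omega), count_peel' (by omega)] at h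

lemma ci_rel {p n p₂ n₂ : ℕ} {R : List ℕ} (hn : 0 < n) (hn₂ : 0 < n₂)
    (hp₂ : p₂ < p) (hR : ∀ x ∈ R, x < p₂)
    (hCI : CICriterion (List.replicate n p ++ (List.replicate n₂ p₂ ++ R))) :
    p = n + n₂ + p₂ := by
  have hQ : ∀ x ∈ List.replicate n₂ p₂ ++ R, x < p := by
    intro x hx
    rcases List.mem_append.mp hx with h | h
    · have : x = p₂ := (List.mem_replicate.mp h).2; omega
    · have := hR x h; omega
  have hp : p ∈ List.replicate n p ++ (List.replicate n₂ p₂ ++ R) :=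
    List.mem_append_left _ (by simp [List.mem_replicate]; omega)
  have hp2 : p₂ ∈ List.replicate n p ++ (List.replicate n₂ p₂ ++ R) :=
    List.mem_append_right _ (List.mem_append_left _ (by simp [List.mem_replicate]; omega))
  have h := hCI p p₂ hp hp2 hp₂ (fun x hx => by
    rcases List.mem_append.mp hx with h | h
    · right; have : x = p := (List.mem_replicate.mp h).2; omega
    · left
      rcases List.mem_append.mp h with h | h
      · have : x = p₂ := (List.mem_replicate.mp h).2; omega
      · have := hR x h; omega)
  rw [count_peel hQ] at h
  rw [count_peel' (by omega)] at h
  rw [count_peel hR] at h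
  omega

lemma chain : ∀ (N : ℕ) (P : List ℕ), P.length ≤ N → P.Pairwise (· ≥ ·) →
    (∀ x ∈ P, 0 < x) → CICriterion P →
    ∀ p n Q, P = List.replicate n p ++ Q → 0 < n → (∀ x ∈ Q, x < p) →
    ∀ r, r < P.length → P.getD r 0 + r + 1 ≤ p + n := by
  intro N
  induction N with
  | zero => intro P hN _ _ _ p n Q _ _ _ r hr; omega
  | succ N ih =>
      intro P hN hs hpos hCI p n Q hPeq hn hQ r hr
      have hlenP : P.length = n + Q.length := by rw [hPeq]; simp
      rcases lt_or_ge r n with hrn | hrn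
      · have : P.getD r 0 = p := by
          rw [hPeq, List.getD_append _ _ _ _ (by simpa using hrn)]
          rw [List.getD_eq_getElem _ _ (by simpa using hrn)]
          simp
        omega
      · have hQne : Q ≠ [] := by
          intro h; rw [h] at hlenP; simp at hlenP; omega
        have hsQ : Q.Pairwise (· ≥ ·) := by
          rw [hPeq] at hs; exact hs.sublist (List.sublist_append_right _ _)
        obtain ⟨p₂, n₂, R, hn₂, hQeq, hR⟩ := exists_peel Q hQne hsQ
        have hp₂Q : p₂ ∈ Q := by
          rw [hQeq]; exact List.mem_append_left _ (by simp [List.mem_replicate]; omega)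
        have hp₂p : p₂ < p := hQ p₂ hp₂Q
        have hrel : p = n + n₂ + p₂ := by
          apply ci_rel hn hn₂ hp₂p hR
          rw [← hQeq, ← hPeq]; exact hCI
        have hposQ : ∀ x ∈ Q, 0 < x := by
          intro x hx; exact hpos x (by rw [hPeq]; exact List.mem_append_right _ hx)
        have hCIQ : CICriterion Q := by
          apply ci_tail hn hQ; rw [← hPeq]; exact hCI
        have hQlen : Q.length ≤ N := by omega
        have hrec := ih Q hQlen hsQ hposQ hCIQ p₂ n₂ R hQeq hn₂ hR (r - n) (by omega)
        have : P.getD r 0 = Q.getD (r - n) 0 := by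
          rw [hPeq, List.getD_append_right _ _ _ _ (by simpa using hrn)]
          simp
        omega

lemma crux {d k p n : ℕ} (hk : 1 ≤ k) (hd : 1 ≤ d) (hn : 0 < n) (hp : 0 < p) (Q : List ℕ)
    (hchain : ∀ r < (List.replicate n p ++ Q).length,
      (List.replicate n p ++ Q).getD r 0 + r + 1 ≤ p + n)
    (hdiag : ∀ j, diagLen (List.replicate n p ++ Q) j = Tdk d k j) :
    p + n = 2 * d + k - 1 := by
  set P := List.replicate n p ++ Q with hP
  have vanish : ∀ j, p + n - 1 ≤ j → diagLen P j = 0 := by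
    intro j hj
    rw [diagLen, Finset.card_eq_zero, Finset.filter_eq_empty_iff]
    intro r hr
    have hr' : r ≤ j := by simpa [Nat.lt_succ_iff] using Finset.mem_range.mp hr
    rcases lt_or_ge r P.length with h | h
    · have := hchain r h; omega
    · rw [List.getD_eq_default _ _ h]; omega
  have hne : diagLen P (p + n - 2) ≠ 0 := by
    rw [diagLen]
    have hpos := Finset.card_pos (s := (Finset.range (p + n - 2 + 1)).filter
      (fun r => p + n - 2 - r < P.getD r 0))
    refine fun hzero => absurd (hpos.mpr ?_) (by omega)
    refine ⟨n - 1, Finset.mem_filter.mpr ⟨Finset.mem_range.mpr (by omega), ?_⟩⟩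
    have : P.getD (n-1) 0 = p := by
      rw [hP, List.getD_append _ _ _ _ (by simp; omega), List.getD_eq_getElem _ _ (by simp; omega)]
      simp
    rw [this]
    omega
  have hub : p + n ≤ 2 * d + k - 1 := by
    by_contra h
    have h0 := hdiag (p + n - 2)
    rw [Tdk, if_neg (by omega)] at h0
    exact hne h0
  have hlb : 2 * d + k - 1 ≤ p + n := by
    by_contra h
    have h0 := hdiag (2 * d + k - 3)
    rw [vanish _ (by omega), Tdk, if_pos (le_refl _)] at h0
    have : min (min (2*d+k-3+1) d) (2*d+k-2-(2*d+k-3)) ≠ 0 := by omega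
    exact this h0.symm
  omega

lemma diag_transfer {d k p n : ℕ} (hk : 1 ≤ k) (hn : 1 ≤ n) (hnd : n + 1 ≤ d)
    (hpn : p + n = 2 * d + k - 1) {Q : List ℕ}
    (hdiag : ∀ j, diagLen (List.replicate n p ++ Q) j = Tdk d k j) :
    ∀ j, diagLen Q j = Tdk (d - n) k j := by
  intro j
  have h1 := diagLen_rep_append p Q n j
  rw [hdiag (n + j)] at h1
  rw [Tdk] at h1 ⊢
  split_ifs at h1 ⊢ <;> omega

/-- key structure: partial sums interpolate between "maximal" anchor points -/

def GoodAt (d k : ℕ) (P : List ℕ) (m : ℕ) : Prop :=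
  ∃ a b : ℕ, a < m ∧ m ≤ b ∧ a ≤ d ∧ (b ≤ d ∨ b = d + k - 1) ∧
    sg P a = a * (2*(d:ℤ) + k - 1 - a) ∧
    sg P b = b * (2*(d:ℤ) + k - 1 - b) ∧
    sg P m = sg P a + ((m:ℤ) - a) * (2*(d:ℤ) + k - 1 - a - b)

def Good (d k : ℕ) (P : List ℕ) : Prop :=
  P.length ≤ d + k - 1 ∧ ∀ m, 1 ≤ m → m ≤ d + k - 1 → GoodAt d k P m

lemma sg_rep_append_le {p n : ℕ} {Q : List ℕ} {m : ℕ} (h : m ≤ n) :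
    sg (List.replicate n p ++ Q) m = (m : ℤ) * p := by
  rw [sg, List.take_append, List.take_replicate, min_eq_left h,
    List.length_replicate]
  have h0 : m - n = 0 := by omega
  rw [h0, List.take_zero, List.append_nil, List.sum_replicate, smul_eq_mul]
  push_cast
  ring

lemma sg_rep_append_add {p n : ℕ} {Q : List ℕ} (x : ℕ) :
    sg (List.replicate n p ++ Q) (n + x) = (n : ℤ) * p + sg Q x := by
  rw [sg, List.take_append, List.take_replicate, min_eq_right (Nat.le_add_right n x),
    List.length_replicate]
  have : n + x - n = x := by omega
  rw [this, List.sum_append, sg, List.sum_replicate, smul_eq_mul]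
  push_cast
  ring

lemma sg_all {P : List ℕ} {m : ℕ} (h : P.length ≤ m) : sg P m = (P.sum : ℤ) := by
  rw [sg, List.take_of_length_le h]

lemma good_of (k : ℕ) (hk : 1 ≤ k) : ∀ d : ℕ, ∀ P : List ℕ,
    P.Pairwise (· ≥ ·) → (∀ x ∈ P, 0 < x) → P.sum = d * (d + k - 1) →
    (∀ j, diagLen P j = Tdk d k j) → CICriterion P → Good d k P := by
  intro d
  induction d using Nat.strong_induction_on with
  | _ d IH =>
  intro P hs hpos hsum hdiag hCI
  rcases eq_or_ne P [] with rfl | hne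
  · have hd0 : d = 0 := by
      have h0 : d * (d + k - 1) = 0 := by simpa using hsum.symm
      rcases Nat.mul_eq_zero.mp h0 with h | h
      · exact h
      · omega
    subst hd0
    refine ⟨by simp, fun m hm1 hm2 => ?_⟩
    refine ⟨0, k - 1, hm1, by omega, by omega, Or.inr (by omega), by simp [sg], ?_, ?_⟩
    · have hc : ((k - 1 : ℕ) : ℤ) = (k : ℤ) - 1 := by omega
      simp only [sg, List.take_nil, List.sum_nil, Nat.cast_zero, hc]
      push_cast
      ring
    · have hc : ((k - 1 : ℕ) : ℤ) = (k : ℤ) - 1 := by omega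
      simp only [sg, List.take_nil, List.sum_nil, Nat.cast_zero, hc]
      push_cast
      ring
  obtain ⟨p, n, Q, hn, hPeq, hQlt⟩ := exists_peel P hne hs
  subst hPeq
  have hppos : 0 < p :=
    hpos p (List.mem_append_left _ (by simp [List.mem_replicate]; omega))
  have hcons : List.replicate n p ++ Q = p :: (List.replicate (n-1) p ++ Q) := by
    cases n with
    | zero => omega
    | succ n => simp [List.replicate_succ]
  have hd1 : 1 ≤ d := by
    by_contra h
    have h0 := hdiag 0
    rw [hcons, diagLen_cons_zero, if_pos hppos, Tdk] at h0
    split_ifs at h0 <;> omega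
  have hchain := chain _ _ (le_refl _) hs hpos hCI p n Q rfl hn hQlt
  have hpn : p + n = 2 * d + k - 1 := crux hk hd1 hn hppos Q hchain hdiag
  have hpd : d ≤ p := by
    have h0 := hdiag (d - 1)
    have hT : Tdk d k (d-1) = d := by rw [Tdk]; split_ifs <;> omega
    have hrange : (d - 1) + 1 = d := by omega
    rw [hT, diagLen, hrange] at h0
    have heq : Finset.filter
        (fun r => d - 1 - r < (List.replicate n p ++ Q).getD r 0) (Finset.range d) =
        Finset.range d :=
      Finset.eq_of_subset_of_card_le (Finset.filter_subset _ _) (by rw [h0]; simp)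
    have h0mem : (0:ℕ) ∈ Finset.range d := by simp; omega
    rw [← heq] at h0mem
    have hcond := (Finset.mem_filter.mp h0mem).2
    rw [hcons] at hcond
    simp only [List.getD_cons_zero] at hcond
    omega
  have hpz : (p : ℤ) = 2*(d:ℤ) + k - 1 - n := by omega
  rcases eq_or_ne Q [] with rfl | hQne
  · -- single block
    have hsum' : n * p = d * (d+k-1) := by
      simpa [List.sum_replicate, smul_eq_mul] using hsum
    have hor : n = d ∨ n = d + k - 1 := by
      have c1 : (n:ℤ) * p = d * ((d:ℤ) + k - 1) := by
        have : ((d * (d + k - 1) : ℕ) : ℤ) = (d:ℤ) * ((d:ℤ) + k - 1) := by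
          push_cast [Nat.cast_sub (by omega : 1 ≤ d + k)]; ring
        rw [← this]; exact_mod_cast hsum'
      have c2 : (p:ℤ) + n = 2*(d:ℤ)+k-1 := by omega
      have hz : ((n:ℤ) - d) * ((n:ℤ) - ((d:ℤ)+k-1)) = 0 := by
        linear_combination (n:ℤ) * c2 - c1
      rcases mul_eq_zero.mp hz with h | h
      · left; omega
      · right; omega
    constructor
    · simp; omega
    · intro m hm1 hm2
      rcases le_or_gt m n with hmn | hmn
      · refine ⟨0, n, by omega, hmn, by omega, ?_, by simp [sg], ?_, ?_⟩
        · rcases hor with h | h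
          · exact Or.inl (by omega)
          · exact Or.inr h
        · rw [sg_rep_append_le (le_refl n), hpz]; try ring
        · rw [sg_rep_append_le hmn, hpz]; simp [sg]; try ring
      · have hnd : n = d := by
          rcases hor with h | h
          · exact h
          · omega
        subst hnd
        refine ⟨n, n + k - 1, hmn, by omega, le_refl _, Or.inr rfl, ?_, ?_, ?_⟩
        · rw [sg_rep_append_le (le_refl n), hpz]; try ring
        · have ht : (((List.replicate n p ++ ([]:List ℕ)).sum : ℕ) : ℤ) = (n:ℤ) * p := by
            simp [List.sum_replicate, smul_eq_mul]
            try (push_cast; ring)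
          rw [sg_all (by simp; omega), ht, hpz]
          have hc : ((n + k - 1 : ℕ) : ℤ) = (n:ℤ) + k - 1 := by omega
          rw [hc]; ring
        · have ht : (((List.replicate n p ++ ([]:List ℕ)).sum : ℕ) : ℤ) = (n:ℤ) * p := by
            simp [List.sum_replicate, smul_eq_mul]
            try (push_cast; ring)
          rw [sg_all (by simp; omega), ht, sg_rep_append_le (le_refl n), hpz]
          have hc : ((n + k - 1 : ℕ) : ℤ) = (n:ℤ) + k - 1 := by omega
          rw [hc]; ring
  · -- Q nonempty
    have hQpos : ∀ x ∈ Q, 0 < x := fun x hx => hpos x (List.mem_append_right _ hx)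
    have hQs : Q.Pairwise (· ≥ ·) := hs.sublist (List.sublist_append_right _ _)
    have hQCI : CICriterion Q := ci_tail hn hQlt hCI
    have hQsum_pos : 0 < Q.sum := List.sum_pos Q hQpos hQne
    have hsum' : n * p + Q.sum = d * (d+k-1) := by
      simpa [List.sum_replicate, smul_eq_mul] using hsum
    have hc1 : ((d * (d + k - 1) : ℕ) : ℤ) = (d:ℤ) * ((d:ℤ) + k - 1) := by
      push_cast [Nat.cast_sub (by omega : 1 ≤ d + k)]; ring
    have hsumZ : (n:ℤ) * p + Q.sum = (d:ℤ) * ((d:ℤ) + k - 1) := by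
      rw [← hc1]; exact_mod_cast hsum'
    have hnd : n + 1 ≤ d := by
      by_contra h
      have h1 : (d:ℤ) ≤ n := by omega
      have h2 : (n:ℤ) ≤ (d:ℤ) + k - 1 := by omega
      have h3 : (0:ℤ) < Q.sum := by exact_mod_cast hQsum_pos
      nlinarith [hsumZ, hpz]
    have hQdiag := diag_transfer hk hn hnd hpn hdiag
    have hdn : ((d - n : ℕ) : ℤ) = (d:ℤ) - n := by omega
    have hQsum : Q.sum = (d - n) * ((d - n) + k - 1) := by
      have hz : (Q.sum : ℤ) = ((d - n : ℕ) : ℤ) * (((d - n) + k - 1 : ℕ) : ℤ) := by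
        have hc2 : (((d - n) + k - 1 : ℕ) : ℤ) = (d:ℤ) - n + k - 1 := by omega
        rw [hdn, hc2]
        nlinarith [hsumZ, hpz]
      exact_mod_cast hz
    have hG : Good (d - n) k Q := IH (d - n) (by omega) Q hQs hQpos hQsum hQdiag hQCI
    constructor
    · have := hG.1; simp; omega
    · intro m hm1 hm2
      rcases le_or_gt m n with hmn | hmn
      · refine ⟨0, n, by omega, hmn, by omega, Or.inl (by omega), by simp [sg], ?_, ?_⟩
        · rw [sg_rep_append_le (le_refl n), hpz]; try ring
        · rw [sg_rep_append_le hmn, hpz]; simp [sg]; try ring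
      · obtain ⟨a', b', ha'm, hmb', ha'd, hb'or, e1, e2, e3⟩ :=
          hG.2 (m - n) (by omega) (by omega)
        have key : ∀ x : ℕ, sg Q x = (x:ℤ) * (2*((d:ℤ)-n) + k - 1 - x) →
            sg (List.replicate n p ++ Q) (n + x) =
              ((n + x : ℕ) : ℤ) * (2*(d:ℤ) + k - 1 - ((n + x : ℕ) : ℤ)) := by
          intro x hx
          rw [sg_rep_append_add, hx, hpz]
          push_cast
          ring
        rw [hdn] at e1 e2 e3
        refine ⟨a' + n, b' + n, by omega, by omega, by omega, ?_, ?_, ?_, ?_⟩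
        · rcases hb'or with h | h
          · exact Or.inl (by omega)
          · exact Or.inr (by omega)
        · have := key a' e1
          rw [show n + a' = a' + n by ring] at this
          rw [this]; try (push_cast; ring)
        · have := key b' e2
          rw [show n + b' = b' + n by ring] at this
          rw [this]; try (push_cast; ring)
        · have hm' : m = n + (m - n) := by omega
          have h1 : sg (List.replicate n p ++ Q) m = (n:ℤ) * p + sg Q (m - n) := by
            rw [hm', sg_rep_append_add]; rw [← hm']
          have h2 : sg (List.replicate n p ++ Q) (a' + n) = (n:ℤ) * p + sg Q a' := by
            rw [show a' + n = n + a' by ring, sg_rep_append_add]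
          rw [h1, h2, e3]
          have hc3 : ((m - n : ℕ) : ℤ) = (m:ℤ) - n := by omega
          rw [hc3]
          push_cast
          ring

end Stmt13

open Stmt13

/-- dominance and vanishing Hessians. For CIJT partitions
`P, Q` of diagonal lengths `T(d,k)`, `Q ≤ P` in the dominance order iff
`H(Q) ⊆ H(P)`, where `H(P) = {i < d : p_1 + ⋯ + p_(i+1) = (i+1)(2d+k-2-i)}`. -/
theorem stmt_13 (d k : ℕ) (hd : 2 ≤ d) (hk : 1 ≤ k)
    (P Q : List ℕ)
    (hP : IsPartitionList P) (hPsum : P.sum = d * (d + k - 1))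
    (hPdiag : ∀ i : ℕ, diagLen P i = Tdk d k i) (hPCI : CICriterion P)
    (hQ : IsPartitionList Q) (hQsum : Q.sum = d * (d + k - 1))
    (hQdiag : ∀ i : ℕ, diagLen Q i = Tdk d k i) (hQCI : CICriterion Q) :
    (∀ i : ℕ, 1 ≤ i → (Q.take i).sum ≤ (P.take i).sum) ↔
    (∀ i : ℕ, i < d → (Q.take (i + 1)).sum = (i + 1) * (2 * d + k - 2 - i) →
      (P.take (i + 1)).sum = (i + 1) * (2 * d + k - 2 - i)) := by
  have hGP : Good d k P := good_of k hk d P hP.1 hP.2 hPsum hPdiag hPCI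
  have hGQ : Good d k Q := good_of k hk d Q hQ.1 hQ.2 hQsum hQdiag hQCI
  -- cast helper: for 1 ≤ a ≤ d, the target value in ℤ form
  have castM : ∀ a : ℕ, 1 ≤ a → a ≤ d →
      ((a * (2*d+k-2-(a-1)) : ℕ) : ℤ) = (a:ℤ) * (2*(d:ℤ)+k-1-(a:ℤ)) := by
    intro a h1 h2
    rw [Nat.cast_mul]
    congr 1
    omega
  constructor
  · -- dominance ⇒ H(Q) ⊆ H(P)
    intro hdom i hi hQi
    obtain ⟨a, b, ham, hmb, had, hbor, e1, e2, e3⟩ := hGP.2 (i+1) (by omega) (by omega)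
    have h1 : sg P (i+1) ≤ ((i:ℤ)+1) * (2*(d:ℤ)+k-1-((i:ℤ)+1)) := by
      rw [e3, e1]
      have hnn : (0:ℤ) ≤ ((i:ℤ)+1-(a:ℤ)) * ((b:ℤ)-((i:ℤ)+1)) := by
        apply mul_nonneg <;> push_cast <;> omega
      push_cast
      nlinarith [hnn]
    have hQi' : (Q.take (i+1)).sum = (i+1) * (2*d+k-2-((i+1)-1)) := by simpa using hQi
    have h2 : sg Q (i+1) = ((i:ℤ)+1) * (2*(d:ℤ)+k-1-((i:ℤ)+1)) := by
      rw [sg, hQi']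
      have := castM (i+1) (by omega) (by omega)
      push_cast at this ⊢
      convert this using 2 <;> push_cast <;> try omega
    have h3 : sg Q (i+1) ≤ sg P (i+1) := by
      have := hdom (i+1) (by omega)
      simp only [sg]
      exact_mod_cast this
    have h4 : sg P (i+1) = ((i:ℤ)+1) * (2*(d:ℤ)+k-1-((i:ℤ)+1)) :=
      le_antisymm h1 (by rw [← h2]; exact h3)
    have h5 : ((P.take (i+1)).sum : ℤ) = (((i+1) * (2*d+k-2-i) : ℕ) : ℤ) := by
      have hc := castM (i+1) (by omega) (by omega)
      have hcc : (i+1) * (2*d+k-2-((i+1)-1)) = (i+1) * (2*d+k-2-i) := by omega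
      rw [← hcc] at *
      rw [hc]
      exact h4
    exact_mod_cast h5
  · -- H(Q) ⊆ H(P) ⇒ dominance
    intro hH m hm
    suffices h : sg Q m ≤ sg P m by
      simp only [sg] at h; exact_mod_cast h
    rcases le_or_gt (d+k-1) m with hbig | hsmall
    · rw [sg_all (le_trans hGQ.1 hbig), sg_all (le_trans hGP.1 hbig), hPsum, hQsum]
    obtain ⟨a, b, ham, hmb, had, hbor, e1, e2, e3⟩ := hGQ.2 m hm (by omega)
    -- transfer anchor a to P
    have transfer : ∀ c : ℕ, 1 ≤ c → c ≤ d → sg Q c = (c:ℤ) * (2*(d:ℤ)+k-1-(c:ℤ)) →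
        sg P c = (c:ℤ) * (2*(d:ℤ)+k-1-(c:ℤ)) := by
      intro c h1 h2 he
      have hic : c - 1 < d := by omega
      have hceq : (c-1) + 1 = c := by omega
      have hQc : (Q.take ((c-1)+1)).sum = ((c-1)+1) * (2*d+k-2-(c-1)) := by
        rw [hceq]
        have : ((Q.take c).sum : ℤ) = ((c * (2*d+k-2-(c-1)) : ℕ) : ℤ) := by
          rw [castM c h1 h2]; exact he
        exact_mod_cast this
      have hPc := hH (c-1) hic hQc
      rw [hceq] at hPc
      have : ((P.take c).sum : ℤ) = ((c * (2*d+k-2-(c-1)) : ℕ) : ℤ) := by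
        exact_mod_cast hPc
      rw [castM c h1 h2] at this
      exact this
    have pa : sg P a = (a:ℤ) * (2*(d:ℤ)+k-1-(a:ℤ)) := by
      rcases Nat.eq_zero_or_pos a with rfl | ha
      · simp [sg]
      · exact transfer a ha had e1
    have pb : sg P b = (b:ℤ) * (2*(d:ℤ)+k-1-(b:ℤ)) := by
      rcases hbor with hbd | hbd
      · exact transfer b (by omega) hbd e2
      · rw [sg_all (by rw [hbd]; exact hGP.1), hPsum]
        have hc1 : ((d * (d + k - 1) : ℕ) : ℤ) = (d:ℤ) * ((d:ℤ) + k - 1) := by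
          rw [Nat.cast_mul]; congr 1; omega
        have hc2 : (b:ℤ) = (d:ℤ) + k - 1 := by omega
        rw [hc1, hc2]; ring
    have hcd := chord hP.1 (le_of_lt ham) hmb
    rw [pa, pb] at hcd
    have key : ((b:ℤ) - a) * sg Q m =
        ((b:ℤ) - m) * ((a:ℤ) * (2*(d:ℤ)+k-1-(a:ℤ))) +
        ((m:ℤ) - a) * ((b:ℤ) * (2*(d:ℤ)+k-1-(b:ℤ))) := by
      rw [e3, e1]; ring
    have hba : (0:ℤ) < (b:ℤ) - a := by
      have : a < b := lt_of_lt_of_le ham hmb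
      push_cast; omega
    have := key ▸ (le_of_eq key).trans hcd
    nlinarith [this, hba]
end

section
/- Let d ≥ 2 and k ≥ 1 be integers. Let S_d denote the set of partitions of d(d+k−1) having diagonal lengths T(d,k), satisfying the CI criterion, and having exactly d parts, and let S_{d+k−1} denote the analogous set of such partitions having exactly d+k−1 parts. Then: (a) every P ∈ S_d, written in power form (p_1^{n_1}, …, p_t^{n_t}), satisfies p_t = n_t + k − 1 (so its block of smallest parts is a rectangle (a+k)^{a+1} with a = n_t − 1); (b) the map ι sending such a P to the partition obtained by replacing its n_t parts equal to p_t by p_t parts equal to n_t is a bijection from S_d onto S_{d+k−1}; (c) moreover, if k ≥ 2, then for every P ∈ S_d the set {i ∈ {0,…,d−1} : the sum of the first i+1 parts of ι(P) equals (i+1)(2d+k−2−i)} equals {i ∈ {0,…,d−1} : the sum of the first i+1 parts of P equals (i+1)(2d+k−2−i)} with the element d−1 removed. -/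
open MvPolynomial

/-- The smallest part of a partition list (sorted decreasingly), i.e. its last entry. -/
def minPart (P : List ℕ) : ℕ := P.getLastD 0

/-- The map `ι`: replace the `n_t` parts equal to the smallest part `p_t` by
`p_t` parts equal to `n_t` (conjugate the smallest rectangular block). -/
def iotaMap (P : List ℕ) : List ℕ :=
  P.filter (fun x => x ≠ minPart P) ++ List.replicate (minPart P) (P.count (minPart P))

/-- The set of partitions of `d(d+k-1)` with diagonal lengths `T(d,k)`, satisfying the
CI criterion, and having exactly `len` parts. -/
def ciSet (d k len : ℕ) : Set (List ℕ) :=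
  {P | IsPartitionList P ∧ P.sum = d * (d + k - 1) ∧
    (∀ i : ℕ, diagLen P i = Tdk d k i) ∧ CICriterion P ∧ P.length = len}


namespace Stmt14Aux

open List Finset

def hvf (P : List ℕ) (r : ℕ) : ℕ := P.getD r 0 + r

def HB (P : List ℕ) (b : ℕ) : Prop :=
  (∀ r, r < P.length → b ≤ hvf P r ∧ hvf P r < b + P.length) ∧
  ∀ r, r < P.length → ∀ s, s < P.length → hvf P r = hvf P s → r = s

lemma getD_mem {P : List ℕ} {r : ℕ} (h : r < P.length) : P.getD r 0 ∈ P := by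
  rw [List.getD_eq_getElem _ _ h]
  exact List.getElem_mem h

lemma sorted_getD {P : List ℕ} (hs : P.Pairwise (· ≥ ·)) {r s : ℕ} (hrs : r ≤ s)
    (h : s < P.length) : P.getD s 0 ≤ P.getD r 0 := by
  rcases lt_or_eq_of_le hrs with h' | h'
  · have hr : r < P.length := lt_of_le_of_lt hrs h
    have := List.pairwise_iff_get.mp hs ⟨r, hr⟩ ⟨s, h⟩ h'
    rw [List.getD_eq_getElem _ _ h, List.getD_eq_getElem _ _ hr]
    simpa [List.get_eq_getElem] using this
  · subst h'; exact le_refl _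

lemma getLastD_cons_cons (a b : ℕ) (t : List ℕ) :
    (a :: b :: t).getLastD 0 = (b :: t).getLastD 0 := by
  simp [List.getLastD_cons]

lemma getLastD_mem : ∀ (P : List ℕ), P ≠ [] → P.getLastD 0 ∈ P
  | [], h => absurd rfl h
  | [a], _ => by simp
  | a :: b :: t, _ => by
      rw [getLastD_cons_cons]
      exact List.mem_cons_of_mem _ (getLastD_mem (b :: t) (by simp))

lemma getLastD_min : ∀ {P : List ℕ}, P.Pairwise (· ≥ ·) → ∀ x ∈ P, P.getLastD 0 ≤ x
  | [], _, x, hx => by simp at hx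
  | [a], _, x, hx => by simp at hx ⊢; omega
  | a :: b :: t, hs, x, hx => by
      rw [getLastD_cons_cons]
      rcases List.mem_cons.mp hx with rfl | hx'
      · exact (List.pairwise_cons.mp hs).1 _ (getLastD_mem _ (by simp))
      · exact getLastD_min (List.pairwise_cons.mp hs).2 x hx'


lemma split_min : ∀ {P : List ℕ}, P.Pairwise (· ≥ ·) →
    P = P.filter (fun x => x ≠ P.getLastD 0) ++
      List.replicate (P.count (P.getLastD 0)) (P.getLastD 0)
  | [], _ => by simp
  | [a], _ => by simp
  | a :: b :: t, hs => by
      rw [getLastD_cons_cons]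
      set q := (b :: t).getLastD 0 with hq
      by_cases haq : a = q
      · have hall : ∀ x ∈ a :: b :: t, x = q := by
          intro x hx
          rcases List.mem_cons.mp hx with rfl | hx'
          · exact haq
          · have h1 : q ≤ x := getLastD_min (List.pairwise_cons.mp hs).2 x hx'
            have h2 : x ≤ a := (List.pairwise_cons.mp hs).1 x hx'
            omega
        have hrep : (a :: b :: t) = List.replicate (a :: b :: t).length q :=
          List.eq_replicate_iff.mpr ⟨rfl, hall⟩
        rw [hrep]
        simp [List.count_replicate, List.filter_eq_nil_iff]
      · have ih := split_min (P := b :: t) (List.pairwise_cons.mp hs).2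
        rw [← hq] at ih
        have hcnt : (a :: b :: t).count q = (b :: t).count q := by
          simp [List.count_cons, haq, Ne.symm haq]
        rw [hcnt]
        have hfil : (a :: b :: t).filter (fun x => x ≠ q) =
            a :: ((b :: t).filter (fun x => x ≠ q)) := by
          simp [List.filter_cons, haq]
        rw [hfil, List.cons_append]
        exact congrArg (a :: ·) ih

def cnt (P : List ℕ) (i : ℕ) : ℕ :=
  ((Finset.range P.length).filter (fun r => i < hvf P r)).card

lemma diagLen_cnt (P : List ℕ) (i : ℕ) :
    diagLen P i + (P.length - (i + 1)) = cnt P i := by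
  classical
  set L := P.length with hL
  have h1 : diagLen P i =
      ((Finset.range L).filter (fun r => r ≤ i ∧ i < hvf P r)).card := by
    unfold diagLen
    congr 1
    ext r
    simp only [Finset.mem_filter, Finset.mem_range]
    constructor
    · rintro ⟨hr, hcond⟩
      by_cases hrL : r < L
      · refine ⟨hrL, by omega, ?_⟩
        unfold hvf; omega
      · rw [List.getD_eq_default _ _ (by omega)] at hcond; omega
    · rintro ⟨hrL, hri, hcond⟩
      unfold hvf at hcond
      exact ⟨by omega, by omega⟩
  have h2 : ((Finset.range L).filter (fun r => ¬ r ≤ i ∧ i < hvf P r)) =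
      (Finset.range L).filter (fun r => i < r) := by
    ext r
    simp only [Finset.mem_filter, Finset.mem_range]
    constructor
    · rintro ⟨h, h', _⟩; exact ⟨h, by omega⟩
    · rintro ⟨h, h'⟩
      refine ⟨h, by omega, ?_⟩
      unfold hvf; omega
  have h3 : (Finset.range L).filter (fun r => i < r) = Finset.Ico (i + 1) L := by
    ext r
    simp only [Finset.mem_filter, Finset.mem_range, Finset.mem_Ico]
    omega
  have h4 := Finset.card_filter_add_card_filter_not
      (s := (Finset.range L).filter (fun r => i < hvf P r)) (p := fun r => r ≤ i)
  rw [Finset.filter_filter, Finset.filter_filter] at h4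
  have h5 : ((Finset.range L).filter (fun r => i < hvf P r ∧ r ≤ i)).card =
      ((Finset.range L).filter (fun r => r ≤ i ∧ i < hvf P r)).card := by
    congr 1; apply Finset.filter_congr; intro x _; exact by tauto
  have h6 : ((Finset.range L).filter (fun r => i < hvf P r ∧ ¬ r ≤ i)).card =
      ((Finset.range L).filter (fun r => ¬ r ≤ i ∧ i < hvf P r)).card := by
    congr 1; apply Finset.filter_congr; intro x _; exact by tauto
  have h7 : ((Finset.range L).filter (fun r => ¬ r ≤ i ∧ i < hvf P r)).card
      = L - (i + 1) := by
    rw [h2, h3, Nat.card_Ico]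
  unfold cnt
  rw [← hL, h1]
  omega

lemma image_eq_of_card {s t : Finset ℕ} {f : ℕ → ℕ}
    (hinj : ∀ r ∈ s, ∀ r' ∈ s, f r = f r' → r = r')
    (hsub : ∀ r ∈ s, f r ∈ t) (hcard : t.card ≤ s.card) :
    ∀ v ∈ t, ∃ r ∈ s, f r = v := by
  classical
  have h1 : s.image f ⊆ t := by
    intro x hx
    obtain ⟨r, hr, rfl⟩ := Finset.mem_image.mp hx
    exact hsub r hr
  have h2 : (s.image f).card = s.card := Finset.card_image_of_injOn hinj
  have h3 : t = s.image f := (Finset.eq_of_subset_of_card_le h1 (by omega)).symm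
  intro v hv
  rw [h3] at hv
  obtain ⟨r, hr, h⟩ := Finset.mem_image.mp hv
  exact ⟨r, hr, h⟩

lemma HB_surj {P : List ℕ} {b : ℕ} (h : HB P b) {v : ℕ} (h1 : b ≤ v)
    (h2 : v < b + P.length) : ∃ r, r < P.length ∧ hvf P r = v := by
  classical
  have := image_eq_of_card (s := Finset.range P.length)
    (t := Finset.Ico b (b + P.length)) (f := hvf P)
    (by intro r hr r' hr' hrr'
        exact h.2 r (Finset.mem_range.mp hr) r' (Finset.mem_range.mp hr') hrr')
    (by intro r hr
        have := h.1 r (Finset.mem_range.mp hr)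
        simp only [Finset.mem_Ico]; omega)
    (by rw [Nat.card_Ico, Finset.card_range]; omega)
  obtain ⟨r, hr, hrv⟩ := this v (by simp only [Finset.mem_Ico]; omega)
  exact ⟨r, Finset.mem_range.mp hr, hrv⟩

lemma cnt_of_HB {P : List ℕ} {b : ℕ} (h : HB P b) (i : ℕ) :
    cnt P i = min P.length (b + P.length - 1 - i) := by
  classical
  set L := P.length with hL
  have key : ((Finset.range L).filter (fun r => i < hvf P r)).card =
      ((Finset.Ico b (b + L)).filter (fun v => i < v)).card := by
    apply Finset.card_bij (fun r _ => hvf P r)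
    · intro r hr
      simp only [Finset.mem_filter, Finset.mem_range] at hr
      have := h.1 r hr.1
      simp only [Finset.mem_filter, Finset.mem_Ico]
      exact ⟨⟨by omega, by omega⟩, hr.2⟩
    · intro r hr r' hr' hrr'
      simp only [Finset.mem_filter, Finset.mem_range] at hr hr'
      exact h.2 r hr.1 r' hr'.1 hrr'
    · intro v hv
      simp only [Finset.mem_filter, Finset.mem_Ico] at hv
      obtain ⟨r, hr, hrv⟩ := HB_surj h hv.1.1 hv.1.2
      exact ⟨r, by simp only [Finset.mem_filter, Finset.mem_range]; exact ⟨hr, by omega⟩, hrv⟩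
  have h2 : (Finset.Ico b (b + L)).filter (fun v => i < v) =
      Finset.Ico (max b (i + 1)) (b + L) := by
    ext v
    simp only [Finset.mem_filter, Finset.mem_Ico]
    omega
  unfold cnt
  rw [← hL, key, h2, Nat.card_Ico]
  omega

lemma HB_of_cnt {P : List ℕ} {b : ℕ} (hb : 1 ≤ b)
    (hc : ∀ i, cnt P i = min P.length (b + P.length - 1 - i)) : HB P b := by
  classical
  set L := P.length with hL
  have hbnd : ∀ r, r < L → b ≤ hvf P r ∧ hvf P r < b + L := by
    intro r hr
    constructor
    · by_contra hlt
      push_neg at hlt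
      have h1 : r ∈ (Finset.range L).filter (fun s => ¬ (b - 1) < hvf P s) := by
        simp only [Finset.mem_filter, Finset.mem_range]
        exact ⟨hr, by omega⟩
      have h4 := Finset.card_filter_add_card_filter_not
        (s := Finset.range L) (p := fun s => (b - 1) < hvf P s)
      have h2 := hc (b - 1)
      unfold cnt at h2
      rw [← hL] at h2
      rw [Finset.card_range] at h4
      have h5 : ((Finset.range L).filter (fun s => ¬ (b - 1) < hvf P s)).card = 0 := by
        omega
      rw [Finset.card_eq_zero] at h5
      rw [h5] at h1
      exact absurd h1 (Finset.notMem_empty r)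
    · by_contra hge
      push_neg at hge
      have h1 : r ∈ (Finset.range L).filter (fun s => (b + L - 1) < hvf P s) := by
        simp only [Finset.mem_filter, Finset.mem_range]
        exact ⟨hr, by omega⟩
      have h2 := hc (b + L - 1)
      unfold cnt at h2
      rw [← hL] at h2
      have h5 : ((Finset.range L).filter (fun s => (b + L - 1) < hvf P s)).card = 0 := by
        omega
      rw [Finset.card_eq_zero] at h5
      rw [h5] at h1
      exact absurd h1 (Finset.notMem_empty r)
  refine ⟨hbnd, ?_⟩
  intro r hr s hs heq
  by_contra hne
  set v := hvf P r with hv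
  have hvb := hbnd r hr
  set A := (Finset.range L).filter (fun t => v - 1 < hvf P t) with hA
  set B := (Finset.range L).filter (fun t => v < hvf P t) with hB
  have hBA : B ⊆ A := by
    intro x hx
    simp only [hA, hB, Finset.mem_filter] at hx ⊢
    exact ⟨hx.1, by omega⟩
  have hcA : A.card = cnt P (v - 1) := by unfold cnt; rw [← hL, hA]
  have hcB : B.card = cnt P v := by unfold cnt; rw [← hL, hB]
  have hcard : (A \ B).card = 1 := by
    rw [Finset.card_sdiff_of_subset hBA, hcA, hcB, hc, hc]
    omega
  have hrmem : r ∈ A \ B := by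
    simp only [Finset.mem_sdiff, hA, hB, Finset.mem_filter, Finset.mem_range]
    exact ⟨⟨hr, by omega⟩, fun hcon => by omega⟩
  have hsmem : s ∈ A \ B := by
    simp only [Finset.mem_sdiff, hA, hB, Finset.mem_filter, Finset.mem_range]
    exact ⟨⟨hs, by omega⟩, fun hcon => by omega⟩
  have : 1 < (A \ B).card := Finset.one_lt_card.mpr ⟨r, hrmem, s, hsmem, hne⟩
  omega

lemma getD_replicate' {n q j : ℕ} (h : j < n) : (List.replicate n q).getD j 0 = q := by
  rw [List.getD_eq_getElem _ _ (by simpa using h)]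
  exact List.getElem_replicate _

lemma mem_A_ne {P : List ℕ} {q x : ℕ} (h : x ∈ P.filter (fun y => y ≠ q)) :
    x ∈ P ∧ x ≠ q := by
  have := List.mem_filter.mp h
  simpa using this

lemma crux {P : List ℕ} {b : ℕ} (hs : P.Pairwise (· ≥ ·)) (hpos : ∀ p ∈ P, 0 < p)
    (hne : P ≠ []) (hHB : HB P b) :
    P.getLastD 0 + (P.length - P.count (P.getLastD 0)) = b := by
  classical
  set q := P.getLastD 0 with hq
  set n := P.count q with hn
  set A := P.filter (fun x => x ≠ q) with hA2
  have hsplit : P = A ++ List.replicate n q := split_min hs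
  set L := P.length with hL
  set m := A.length with hm
  have hmn : m + n = L := by
    conv_rhs => rw [hL, hsplit]
    simp [hm]
  have hn1 : 1 ≤ n := List.count_pos_iff.mpr (getLastD_mem P hne)
  have hblock : ∀ j, m ≤ j → j < L → P.getD j 0 = q := by
    intro j h1 h2
    rw [hsplit, List.getD_append_right _ _ _ _ (by omega : A.length ≤ j)]
    exact getD_replicate' (by omega)
  have hub : b ≤ q + m := by
    have h1 := (hHB.1 m (by omega)).1
    have h2 : P.getD m 0 = q := hblock m le_rfl (by omega)
    unfold hvf at h1
    omega
  have hqm : q + m = b := by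
    by_contra hne2
    have hlow : b < q + m := by omega
    obtain ⟨r, hrL, hvr⟩ := HB_surj hHB (le_refl b) (by omega)
    have hrm : r < m := by
      by_contra hge
      push_neg at hge
      have := hblock r hge hrL
      unfold hvf at hvr
      omega
    have hPrA : P.getD r 0 ∈ A := by
      have h0 : P.getD r 0 = A.getD r 0 := by
        conv_lhs => rw [hsplit]
        exact List.getD_append _ _ _ _ (by omega)
      rw [h0]
      exact getD_mem (by omega)
    have hPrq : q < P.getD r 0 := by
      have h1 := mem_A_ne (q := q) (by rw [← hA2]; exact hPrA)
      have h2 : q ≤ P.getD r 0 := getLastD_min hs _ h1.1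
      omega
    have hresub : ∀ t ∈ Finset.Ico r L, hvf P t ∈ Finset.Ico b (b + (L - r)) := by
      intro t ht
      rw [Finset.mem_Ico] at ht ⊢
      have h1 := (hHB.1 t ht.2).1
      have h2 : P.getD t 0 ≤ P.getD r 0 := sorted_getD hs ht.1 ht.2
      unfold hvf at h1 hvr ⊢
      omega
    obtain ⟨s, hsmem, hvs⟩ := image_eq_of_card
      (by
        intro x hx y hy hxy
        exact hHB.2 x (Finset.mem_Ico.mp hx).2 y (Finset.mem_Ico.mp hy).2 hxy)
      hresub
      (by rw [Nat.card_Ico, Nat.card_Ico]; omega)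
      (b + (L - r) - 1) (by rw [Finset.mem_Ico]; omega)
    rw [Finset.mem_Ico] at hsmem
    have h2 : P.getD s 0 ≤ P.getD r 0 := sorted_getD hs hsmem.1 hsmem.2
    have hseq : s = L - 1 := by
      unfold hvf at hvs hvr
      omega
    have h3 : P.getD s 0 = q := hblock s (by omega) (by omega)
    unfold hvf at hvs hvr
    omega
  omega

lemma block_bundle {P : List ℕ} {b : ℕ} (hs : P.Pairwise (· ≥ ·)) (hpos : ∀ p ∈ P, 0 < p)
    (hne : P ≠ []) (hHB : HB P b) :
    (∀ r, r < P.length - P.count (P.getLastD 0) → b + P.count (P.getLastD 0) ≤ hvf P r) ∧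
    (∀ x ∈ P.filter (fun y => y ≠ P.getLastD 0),
      P.getLastD 0 + P.count (P.getLastD 0) < x) := by
  classical
  have hcx := crux hs hpos hne hHB
  set q := P.getLastD 0 with hq
  set n := P.count q with hn
  set A := P.filter (fun x => x ≠ q) with hA2
  have hsplit : P = A ++ List.replicate n q := split_min hs
  set L := P.length with hL
  set m := A.length with hm
  have hmn : m + n = L := by
    conv_rhs => rw [hL, hsplit]
    simp [hm]
  have hn1 : 1 ≤ n := List.count_pos_iff.mpr (getLastD_mem P hne)
  have hcnt : n ≤ L := List.count_le_length
  have hqm : q + m = b := by omega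
  have hblock : ∀ j, m ≤ j → j < L → P.getD j 0 = q := by
    intro j h1 h2
    rw [hsplit, List.getD_append_right _ _ _ _ (by omega : A.length ≤ j)]
    exact getD_replicate' (by omega)
  have harow : ∀ r, r < m → b + n ≤ hvf P r := by
    intro r hr
    by_contra hlt
    push_neg at hlt
    have h1 := (hHB.1 r (by omega)).1
    set j := hvf P r - b with hjd
    have hjn : j < n := by omega
    have hbj : P.getD (m + j) 0 = q := hblock _ (by omega) (by omega)
    have hbl : hvf P (m + j) = hvf P r := by
      unfold hvf at h1 hlt hjd ⊢
      rw [hbj]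
      omega
    have := hHB.2 r (by omega) (m + j) (by omega) hbl.symm
    omega
  constructor
  · intro r hr
    exact harow r (by omega)
  · intro x hx
    obtain ⟨r, hrm, hxr⟩ := List.mem_iff_getElem.mp hx
    rw [← hm] at hrm
    have hxr' : A.getD r 0 = x := by rw [List.getD_eq_getElem _ _ (by omega)]; exact hxr
    have h1 : P.getD r 0 = x := by
      conv_lhs => rw [hsplit]
      rw [List.getD_append _ _ _ _ (by omega)]
      exact hxr'
    have h2 := harow r hrm
    unfold hvf at h2
    omega

lemma ci_of_HB : ∀ (N : ℕ) (P : List ℕ) (b : ℕ), P.length = N → P.Pairwise (· ≥ ·) →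
    (∀ p ∈ P, 0 < p) → HB P b → CICriterion P := by
  intro N
  induction N using Nat.strong_induction_on with
  | _ N IH =>
  intro P b hlen hs hpos hHB
  rcases eq_or_ne P [] with rfl | hne
  · intro a c ha _ _ _
    simp at ha
  classical
  have hcx := crux hs hpos hne hHB
  have hbun := block_bundle hs hpos hne hHB
  set q := P.getLastD 0 with hq
  set n := P.count q with hn
  set A := P.filter (fun x => x ≠ q) with hA2
  have hsplit : P = A ++ List.replicate n q := split_min hs
  set L := P.length with hL
  set m := A.length with hm
  have hmn : m + n = L := by
    conv_rhs => rw [hL, hsplit]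
    simp [hm]
  have hn1 : 1 ≤ n := List.count_pos_iff.mpr (getLastD_mem P hne)
  have hcnt : n ≤ L := List.count_le_length
  have hqm : q + m = b := by omega
  have hsA : A.Pairwise (· ≥ ·) := List.Pairwise.filter _ hs
  have hposA : ∀ p ∈ A, 0 < p := fun p hp => hpos p (mem_A_ne hp).1
  have hgdA : ∀ r, r < m → A.getD r 0 = P.getD r 0 := by
    intro r hr
    conv_rhs => rw [hsplit]
    rw [List.getD_append _ _ _ _ (by omega)]
  have hHBA : HB A (b + n) := by
    constructor
    · intro r hr
      rw [← hm] at hr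
      have h1 := hbun.1 r (by omega)
      have h2 := (hHB.1 r (by omega)).2
      have he : hvf A r = hvf P r := by
        unfold hvf
        rw [hgdA r hr]
      rw [he, ← hm]
      omega
    · intro r hr s hs' heq
      rw [← hm] at hr hs'
      have her : hvf A r = hvf P r := by unfold hvf; rw [hgdA r hr]
      have hes : hvf A s = hvf P s := by unfold hvf; rw [hgdA s hs']
      exact hHB.2 r (by omega) s (by omega) (by rw [← her, ← hes]; exact heq)
  have hctA : ∀ x, q < x → P.count x = A.count x := by
    intro x hx
    conv_lhs => rw [hsplit]
    rw [List.count_append, List.count_replicate,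
      if_neg (by simp only [beq_iff_eq]; omega)]
    omega
  intro a c ha hc hlt hadj
  have hcq : q ≤ c := getLastD_min hs c hc
  by_cases hceq : c = q
  · subst hceq
    have haA : a ∈ A := List.mem_filter.mpr ⟨ha, by simpa using (show a ≠ q by omega)⟩
    have hAne : A ≠ [] := fun h => by rw [h] at haA; simp at haA
    set qA := A.getLastD 0 with hqA
    have hqAA : qA ∈ A := getLastD_mem A hAne
    have hqAP := mem_A_ne hqAA
    have h1 : a ≤ qA := by
      rcases hadj qA hqAP.1 with h | h
      · have hq2 : q ≤ qA := getLastD_min hs qA hqAP.1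
        have hq3 := hbun.2 qA hqAA
        omega
      · exact h
    have h2 : qA ≤ a := getLastD_min hsA a haA
    have haqA : a = qA := le_antisymm h1 h2
    have hcrA := crux hsA hposA hAne hHBA
    have hcntA : A.count qA ≤ A.length := List.count_le_length
    rw [← hqA, ← hm] at hcrA
    rw [← hm] at hcntA
    have hct := hctA a (by omega)
    rw [hct, haqA]
    rw [haqA] at hct
    rw [← hn]
    omega
  · have hcgt : q < c := by omega
    have haA : a ∈ A := List.mem_filter.mpr ⟨ha, by simpa using (show a ≠ q by omega)⟩
    have hcA : c ∈ A := List.mem_filter.mpr ⟨hc, by simpa using (show c ≠ q by omega)⟩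
    have hm_lt : m < N := by omega
    have hciA := IH m hm_lt A (b + n) rfl hsA hposA hHBA
    have hres := hciA a c haA hcA hlt (fun x hx => hadj x (mem_A_ne hx).1)
    rw [hctA a (by omega), hctA c (by omega)]
    exact hres

lemma sum_take (P : List ℕ) : ∀ j, j ≤ P.length →
    (P.take j).sum = ∑ r ∈ Finset.range j, P.getD r 0 := by
  intro j
  induction j with
  | zero => simp
  | succ j ih =>
    intro hj
    rw [List.take_succ, List.sum_append, ih (by omega), Finset.sum_range_succ]
    congr 1
    rw [List.getElem?_eq_getElem (by omega), List.getD_eq_getElem _ _ (by omega)]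
    simp

lemma diag_iff_HB {d k : ℕ} {P : List ℕ} {b : ℕ} (hb : 1 ≤ b)
    (hA : ∀ i, Tdk d k i + (P.length - (i + 1)) = min P.length (b + P.length - 1 - i)) :
    (∀ i, diagLen P i = Tdk d k i) ↔ HB P b := by
  constructor
  · intro h
    apply HB_of_cnt hb
    intro i
    have h1 := diagLen_cnt P i
    rw [h i] at h1
    rw [← h1, hA i]
  · intro h i
    have h1 := diagLen_cnt P i
    rw [cnt_of_HB h i] at h1
    have h2 := hA i
    omega

lemma sum_take_lt {P : List ℕ} {b i r0 M : ℕ} (hHB : HB P b) (hc : i + 1 ≤ P.length)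
    (hr0 : r0 < i + 1) (hM : ∀ r, r < i + 1 → hvf P r ≤ M)
    (hw : hvf P r0 + (i + 1) ≤ M) :
    (P.take (i + 1)).sum < (i + 1) * (M - i) := by
  classical
  set c := i + 1 with hcdef
  have hcM : c ≤ M := by
    have : 0 ≤ hvf P r0 := Nat.zero_le _
    omega
  have hsum := sum_take P c hc
  have e0 : ∑ r ∈ Finset.range c, hvf P r = (P.take c).sum + ∑ r ∈ Finset.range c, r := by
    rw [hsum, ← Finset.sum_add_distrib]
    rfl
  set S := (Finset.range c).image (hvf P) with hS
  set T := (Finset.range c).image (fun j => M - j) with hT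
  have hinjS : ∀ x ∈ Finset.range c, ∀ y ∈ Finset.range c, hvf P x = hvf P y → x = y := by
    intro x hx y hy hxy
    rw [Finset.mem_range] at hx hy
    exact hHB.2 x (by omega) y (by omega) hxy
  have hinjT : ∀ x ∈ Finset.range c, ∀ y ∈ Finset.range c,
      M - x = M - y → x = y := by
    intro x hx y hy hxy
    rw [Finset.mem_range] at hx hy
    omega
  have hSsum : ∑ v ∈ S, v = ∑ r ∈ Finset.range c, hvf P r := Finset.sum_image hinjS
  have hTsum : ∑ v ∈ T, v = ∑ j ∈ Finset.range c, (M - j) := Finset.sum_image hinjT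
  have hScard : S.card = c := by
    rw [hS, Finset.card_image_of_injOn hinjS, Finset.card_range]
  have hTcard : T.card = c := by
    rw [hT, Finset.card_image_of_injOn hinjT, Finset.card_range]
  have hTmem : ∀ v ∈ T, M - c < v ∧ v ≤ M := by
    intro v hv
    obtain ⟨j, hj, rfl⟩ := Finset.mem_image.mp hv
    rw [Finset.mem_range] at hj
    omega
  have hTmem' : ∀ v, M - c < v → v ≤ M → v ∈ T := by
    intro v h1 h2
    rw [hT, Finset.mem_image]
    exact ⟨M - v, Finset.mem_range.mpr (by omega), by omega⟩
  have hSmem : ∀ v ∈ S, v ≤ M := by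
    intro v hv
    obtain ⟨r, hr, rfl⟩ := Finset.mem_image.mp hv
    rw [Finset.mem_range] at hr
    exact hM r hr
  have hwS : hvf P r0 ∈ S \ T := by
    rw [Finset.mem_sdiff]
    constructor
    · exact Finset.mem_image.mpr ⟨r0, Finset.mem_range.mpr hr0, rfl⟩
    · intro hcon
      have := (hTmem _ hcon).1
      omega
  have hSdiff : ∀ v ∈ S \ T, v ≤ M - c := by
    intro v hv
    rw [Finset.mem_sdiff] at hv
    by_contra hgt
    push_neg at hgt
    exact hv.2 (hTmem' v hgt (hSmem v hv.1))
  have hTdiff : ∀ v ∈ T \ S, M - c + 1 ≤ v := by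
    intro v hv
    rw [Finset.mem_sdiff] at hv
    have := (hTmem v hv.1).1
    omega
  have hcards : (S \ T).card = (T \ S).card := by
    have h1 := Finset.card_sdiff_add_card_inter S T
    have h2 := Finset.card_sdiff_add_card_inter T S
    rw [Finset.inter_comm] at h2
    omega
  have hrs1 : ∑ v ∈ S ∩ T, v + ∑ v ∈ S \ T, v = ∑ v ∈ S, v :=
    Finset.sum_inter_add_sum_sdiff S T _
  have hrs2 : ∑ v ∈ T ∩ S, v + ∑ v ∈ T \ S, v = ∑ v ∈ T, v :=
    Finset.sum_inter_add_sum_sdiff T S _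
  have hIC : ∑ v ∈ T ∩ S, v = ∑ v ∈ S ∩ T, v := by rw [Finset.inter_comm]
  have hStop : ∑ v ∈ S \ T, v ≤ (S \ T).card * (M - c) := by
    have := Finset.sum_le_card_nsmul (S \ T) id (M - c) (fun x hx => hSdiff x hx)
    simpa [smul_eq_mul] using this
  have hTbot : (T \ S).card * (M - c + 1) ≤ ∑ v ∈ T \ S, v := by
    have := Finset.card_nsmul_le_sum (T \ S) id (M - c + 1) (fun x hx => hTdiff x hx)
    simpa [smul_eq_mul] using this
  have hepos : 1 ≤ (S \ T).card := Finset.card_pos.mpr ⟨_, hwS⟩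
  have hstrict : ∑ v ∈ S, v < ∑ v ∈ T, v := by
    have h1 : (S \ T).card * (M - c + 1) = (S \ T).card * (M - c) + (S \ T).card := by ring
    have h2 : (T \ S).card * (M - c + 1) = (S \ T).card * (M - c + 1) := by rw [hcards]
    omega
  rw [hSsum, hTsum] at hstrict
  have e1 : ∑ j ∈ Finset.range c, (M - j) + ∑ j ∈ Finset.range c, j = c * M := by
    rw [← Finset.sum_add_distrib]
    have : ∀ j ∈ Finset.range c, M - j + j = M := by
      intro j hj
      rw [Finset.mem_range] at hj
      omega
    rw [Finset.sum_congr rfl this, Finset.sum_const, Finset.card_range, smul_eq_mul]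
  have e2 : (∑ j ∈ Finset.range c, j) * 2 = c * (c - 1) := Finset.sum_range_id_mul_two c
  have e3 : c * (M - i) + c * i = c * M := by
    rw [← Nat.mul_add, Nat.sub_add_cancel (by omega)]
  have e4 : c * i = c * (c - 1) := by
    have h : c - 1 = i := by omega
    rw [h]
  omega

lemma getLastD_append_replicate (A : List ℕ) {q : ℕ} (hq : 1 ≤ q) (n : ℕ) :
    (A ++ List.replicate q n).getLastD 0 = n := by
  obtain ⟨q', rfl⟩ : ∃ q', q = q' + 1 := ⟨q - 1, by omega⟩
  rw [List.replicate_succ', ← List.append_assoc]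
  exact List.getLastD_concat

lemma iota_all {P : List ℕ} {b : ℕ} (hs : P.Pairwise (· ≥ ·)) (hpos : ∀ p ∈ P, 0 < p)
    (hne : P ≠ []) (hHB : HB P b) :
    (iotaMap P).Pairwise (· ≥ ·) ∧ (∀ p ∈ iotaMap P, 0 < p) ∧
    (iotaMap P).length = b ∧ HB (iotaMap P) P.length ∧
    (iotaMap P).sum = P.sum ∧ iotaMap (iotaMap P) = P ∧ iotaMap P ≠ [] := by
  classical
  have hcx := crux hs hpos hne hHB
  have hbun := block_bundle hs hpos hne hHB
  set q := P.getLastD 0 with hq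
  set n := P.count q with hn
  set A := P.filter (fun x => x ≠ q) with hA2
  have hsplit : P = A ++ List.replicate n q := split_min hs
  set L := P.length with hL
  set m := A.length with hm
  have hmn : m + n = L := by
    conv_rhs => rw [hL, hsplit]
    simp [hm]
  have hn1 : 1 ≤ n := List.count_pos_iff.mpr (getLastD_mem P hne)
  have hq1 : 1 ≤ q := hpos q (getLastD_mem P hne)
  have hcnt : n ≤ L := List.count_le_length
  have hqm : q + m = b := by omega
  have hQ : iotaMap P = A ++ List.replicate q n := rfl
  rw [hQ]
  set Q := A ++ List.replicate q n with hQd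
  have hlenQ : Q.length = m + q := by
    rw [hQd, List.length_append, List.length_replicate, ← hm]
  have hgetA : ∀ r, r < m → Q.getD r 0 = P.getD r 0 := by
    intro r hr
    rw [hQd, List.getD_append _ _ _ _ (by omega)]
    conv_rhs => rw [hsplit]
    rw [List.getD_append _ _ _ _ (by omega)]
  have hgetB : ∀ r, m ≤ r → r < m + q → Q.getD r 0 = n := by
    intro r h1 h2
    rw [hQd, List.getD_append_right _ _ _ _ (by omega : A.length ≤ r)]
    exact getD_replicate' (by omega)
  have helem : ∀ x ∈ A, q + n < x := hbun.2
  have hsQ : Q.Pairwise (· ≥ ·) := by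
    rw [hQd]
    refine List.pairwise_append.mpr ⟨List.Pairwise.filter _ hs, ?_, ?_⟩
    · exact List.pairwise_replicate.mpr (Or.inr (le_refl n))
    · intro x hx y hy
      have h1 := helem x hx
      have h2 := (List.mem_replicate.mp hy).2
      show x ≥ y
      omega
  have hposQ : ∀ p ∈ Q, 0 < p := by
    intro p hp
    rw [hQd] at hp
    rcases List.mem_append.mp hp with h | h
    · exact hpos p (mem_A_ne h).1
    · rw [(List.mem_replicate.mp h).2]
      omega
  have hHBQ : HB Q L := by
    constructor
    · intro r hr
      rw [hlenQ] at hr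
      by_cases hrm : r < m
      · have h1 := hbun.1 r (by omega)
        have h2 := (hHB.1 r (by omega)).2
        have he : hvf Q r = hvf P r := by unfold hvf; rw [hgetA r hrm]
        rw [he, hlenQ]
        omega
      · have he : hvf Q r = n + r := by
          unfold hvf
          rw [hgetB r (by omega) (by omega)]
        rw [he, hlenQ]
        omega
    · intro r hr s hs' heq
      rw [hlenQ] at hr hs'
      by_cases hrm : r < m <;> by_cases hsm : s < m
      · have her : hvf Q r = hvf P r := by unfold hvf; rw [hgetA r hrm]
        have hes : hvf Q s = hvf P s := by unfold hvf; rw [hgetA s hsm]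
        exact hHB.2 r (by omega) s (by omega) (by rw [← her, ← hes]; exact heq)
      · exfalso
        have her : hvf Q r = hvf P r := by unfold hvf; rw [hgetA r hrm]
        have h1 := hbun.1 r (by omega)
        have hes : hvf Q s = n + s := by
          unfold hvf
          rw [hgetB s (by omega) (by omega)]
        omega
      · exfalso
        have hes : hvf Q s = hvf P s := by unfold hvf; rw [hgetA s hsm]
        have h1 := hbun.1 s (by omega)
        have her : hvf Q r = n + r := by
          unfold hvf
          rw [hgetB r (by omega) (by omega)]
        omega
      · have her : hvf Q r = n + r := by
          unfold hvf
          rw [hgetB r (by omega) (by omega)]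
        have hes : hvf Q s = n + s := by
          unfold hvf
          rw [hgetB s (by omega) (by omega)]
        omega
  have hsumQ : Q.sum = P.sum := by
    conv_rhs => rw [hsplit]
    rw [hQd, List.sum_append, List.sum_append, List.sum_replicate, List.sum_replicate,
      smul_eq_mul, smul_eq_mul, Nat.mul_comm]
  have hQlast : Q.getLastD 0 = n := by
    rw [hQd]
    exact getLastD_append_replicate A hq1 n
  have hAn : ∀ x ∈ A, x ≠ n := fun x hx => by have := helem x hx; omega
  have hcountQ : Q.count n = q := by
    rw [hQd, List.count_append, List.count_replicate, if_pos (by simp),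
      List.count_eq_zero.mpr (fun hc => (hAn n hc) rfl)]
    omega
  have hfilQ : Q.filter (fun x => x ≠ n) = A := by
    rw [hQd, List.filter_append,
      List.filter_eq_self.mpr (fun a ha => by simpa using hAn a ha),
      List.filter_eq_nil_iff.mpr (fun a ha => by simp [(List.mem_replicate.mp ha).2])]
    simp
  have hinv : iotaMap Q = P := by
    unfold iotaMap minPart
    rw [hQlast, hcountQ, hfilQ]
    exact hsplit.symm
  have hQne : Q ≠ [] := by
    intro h
    have h2 := congrArg List.length h
    rw [hlenQ] at h2
    simp at h2
    omega
  exact ⟨hsQ, hposQ, by rw [hlenQ]; omega, hHBQ, hsumQ, hinv, hQne⟩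

end Stmt14Aux


/-- (a) For a CIJT partition with `d` parts, the smallest part
equals its multiplicity plus `k - 1`. (b) The map `ι` (conjugating the smallest
rectangular block) is a bijection from the CIJT partitions with `d` parts onto
those with `d + k - 1` parts. (c) If `k ≥ 2`, the nonvanishing Hessian index set
of `ι(P)` is that of `P` with `d - 1` removed. -/
theorem stmt_14 (d k : ℕ) (hd : 2 ≤ d) (hk : 1 ≤ k) :
    (∀ P ∈ ciSet d k d, minPart P = P.count (minPart P) + k - 1) ∧
    Set.BijOn iotaMap (ciSet d k d) (ciSet d k (d + k - 1)) ∧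
    (2 ≤ k → ∀ P ∈ ciSet d k d, ∀ i : ℕ, i < d →
      (((iotaMap P).take (i + 1)).sum = (i + 1) * (2 * d + k - 2 - i) ↔
        ((P.take (i + 1)).sum = (i + 1) * (2 * d + k - 2 - i) ∧ i ≠ d - 1))) := by
  classical
  open Stmt14Aux in
  have hard : ∀ i, Tdk d k i + (d - (i + 1)) = min d ((d + k - 1) + d - 1 - i) := by
    intro i; unfold Tdk; split <;> omega
  have harm : ∀ i, Tdk d k i + ((d + k - 1) - (i + 1)) =
      min (d + k - 1) (d + (d + k - 1) - 1 - i) := by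
    intro i; unfold Tdk; split <;> omega
  have hunpack_d : ∀ P ∈ ciSet d k d, P.Pairwise (· ≥ ·) ∧ (∀ p ∈ P, 0 < p) ∧ P ≠ [] ∧
      P.length = d ∧ P.sum = d * (d + k - 1) ∧ Stmt14Aux.HB P (d + k - 1) := by
    intro P hP
    obtain ⟨⟨hs, hpos⟩, hsum, hdiag, hci, hlen⟩ := hP
    have hHB := (Stmt14Aux.diag_iff_HB (b := d + k - 1) (by omega)
      (by intro i; rw [hlen]; exact hard i)).mp hdiag
    exact ⟨hs, hpos, fun h => by rw [h] at hlen; simp at hlen; omega, hlen, hsum, hHB⟩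
  have hunpack_m : ∀ P ∈ ciSet d k (d + k - 1), P.Pairwise (· ≥ ·) ∧ (∀ p ∈ P, 0 < p) ∧
      P ≠ [] ∧ P.length = d + k - 1 ∧ P.sum = d * (d + k - 1) ∧ Stmt14Aux.HB P d := by
    intro P hP
    obtain ⟨⟨hs, hpos⟩, hsum, hdiag, hci, hlen⟩ := hP
    have hHB := (Stmt14Aux.diag_iff_HB (b := d) (by omega)
      (by intro i; rw [hlen]; exact harm i)).mp hdiag
    exact ⟨hs, hpos, fun h => by rw [h] at hlen; simp at hlen; omega, hlen, hsum, hHB⟩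
  have hpack : ∀ (P : List ℕ) (len bb : ℕ), 1 ≤ bb →
      (∀ i, Tdk d k i + (len - (i + 1)) = min len (bb + len - 1 - i)) →
      P.Pairwise (· ≥ ·) → (∀ p ∈ P, 0 < p) → P.length = len →
      P.sum = d * (d + k - 1) → Stmt14Aux.HB P bb → P ∈ ciSet d k len := by
    intro P len bb hb1 har hs hpos hlen hsum hHB
    refine ⟨⟨hs, hpos⟩, hsum, ?_, ?_, hlen⟩
    · exact (Stmt14Aux.diag_iff_HB hb1 (by intro i; rw [hlen]; exact har i)).mpr hHB
    · exact Stmt14Aux.ci_of_HB P.length P bb rfl hs hpos hHB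
  refine ⟨?_, ⟨?_, ?_, ?_⟩, ?_⟩
  · -- part (a)
    intro P hP
    obtain ⟨hs, hpos, hne, hlen, hsum, hHB⟩ := hunpack_d P hP
    have hcx := Stmt14Aux.crux hs hpos hne hHB
    have hcnt := List.count_le_length (a := P.getLastD 0) (l := P)
    show P.getLastD 0 = P.count (P.getLastD 0) + k - 1
    omega
  · -- MapsTo
    intro P hP
    obtain ⟨hs, hpos, hne, hlen, hsum, hHB⟩ := hunpack_d P hP
    obtain ⟨hsQ, hposQ, hlenQ, hHBQ, hsumQ, hinv, hQne⟩ :=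
      Stmt14Aux.iota_all hs hpos hne hHB
    rw [hlen] at hHBQ
    exact hpack (iotaMap P) (d + k - 1) d (by omega) harm hsQ hposQ hlenQ
      (by rw [hsumQ, hsum]) hHBQ
  · -- InjOn
    intro P hP P' hP' heq
    obtain ⟨hs, hpos, hne, _, _, hHB⟩ := hunpack_d P hP
    obtain ⟨hs', hpos', hne', _, _, hHB'⟩ := hunpack_d P' hP'
    have h1 := (Stmt14Aux.iota_all hs hpos hne hHB).2.2.2.2.2.1
    have h2 := (Stmt14Aux.iota_all hs' hpos' hne' hHB').2.2.2.2.2.1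
    rw [← h1, ← h2, heq]
  · -- SurjOn
    intro Q hQ
    obtain ⟨hs, hpos, hne, hlen, hsum, hHB⟩ := hunpack_m Q hQ
    obtain ⟨hsR, hposR, hlenR, hHBR, hsumR, hinv, hRne⟩ :=
      Stmt14Aux.iota_all hs hpos hne hHB
    rw [hlen] at hHBR
    refine ⟨iotaMap Q, ?_, hinv⟩
    exact hpack (iotaMap Q) d (d + k - 1) (by omega) hard hsR hposR hlenR
      (by rw [hsumR, hsum]) hHBR
  · -- part (c)
    intro hk2 P hP i hi
    obtain ⟨hs, hpos, hne, hlen, hsum, hHB⟩ := hunpack_d P hP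
    obtain ⟨hsQ, hposQ, hlenQ, hHBQ, hsumQ, hinv, hQne⟩ :=
      Stmt14Aux.iota_all hs hpos hne hHB
    rw [hlen] at hHBQ
    have hcx := Stmt14Aux.crux hs hpos hne hHB
    set q := P.getLastD 0 with hq
    set n := P.count q with hn
    set A := P.filter (fun x => x ≠ q) with hA2
    have hsplit : P = A ++ List.replicate n q := Stmt14Aux.split_min hs
    set m := A.length with hm
    have hmn : m + n = d := by
      have h0 : m + n = P.length := by
        conv_rhs => rw [hsplit]
        simp [hm]
      omega
    have hn1 : 1 ≤ n := List.count_pos_iff.mpr (Stmt14Aux.getLastD_mem P hne)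
    have hq1 : 1 ≤ q := hpos q (Stmt14Aux.getLastD_mem P hne)
    have hqm : q + m = d + k - 1 := by omega
    have hQ : iotaMap P = A ++ List.replicate q n := rfl
    rw [hQ] at hlenQ hHBQ ⊢
    set Q := A ++ List.replicate q n with hQd
    have hlenQ' : Q.length = m + q := by
      rw [hQd, List.length_append, List.length_replicate, ← hm]
    have hgetA : ∀ r, r < m → Q.getD r 0 = P.getD r 0 := by
      intro r hr
      rw [hQd, List.getD_append _ _ _ _ (by omega)]
      conv_rhs => rw [hsplit]
      rw [List.getD_append _ _ _ _ (by omega)]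
    have hgetBP : P.getD m 0 = q := by
      rw [hsplit, List.getD_append_right _ _ _ _ (le_refl A.length)]
      exact Stmt14Aux.getD_replicate' (by omega)
    have hgetBQ : Q.getD m 0 = n := by
      rw [hQd, List.getD_append_right _ _ _ _ (le_refl A.length)]
      exact Stmt14Aux.getD_replicate' (by omega)
    by_cases hc1 : i + 1 ≤ m
    · have e1 : (P.take (i + 1)).sum = ∑ r ∈ Finset.range (i + 1), P.getD r 0 :=
        Stmt14Aux.sum_take P (i + 1) (by omega)
      have e2 : (Q.take (i + 1)).sum = ∑ r ∈ Finset.range (i + 1), Q.getD r 0 :=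
        Stmt14Aux.sum_take Q (i + 1) (by omega)
      have e3 : (Q.take (i + 1)).sum = (P.take (i + 1)).sum := by
        rw [e1, e2]
        exact Finset.sum_congr rfl fun r hr =>
          hgetA r (by have := Finset.mem_range.mp hr; omega)
      rw [e3]
      exact ⟨fun h => ⟨h, by omega⟩, fun h => h.1⟩
    · push_neg at hc1
      have hMQ : ∀ r, r < i + 1 → Stmt14Aux.hvf Q r ≤ 2 * d + k - 2 := by
        intro r hr
        have h1 := (hHBQ.1 r (by omega)).2
        rw [hlenQ'] at h1
        omega
      have hwQ : Stmt14Aux.hvf Q m + (i + 1) ≤ 2 * d + k - 2 := by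
        unfold Stmt14Aux.hvf
        rw [hgetBQ]
        omega
      have hQlt : (Q.take (i + 1)).sum < (i + 1) * (2 * d + k - 2 - i) :=
        Stmt14Aux.sum_take_lt hHBQ (by omega) hc1 hMQ hwQ
      by_cases hieq : i = d - 1
      · exact iff_of_false (Nat.ne_of_lt hQlt) (fun h => h.2 hieq)
      · have hMP : ∀ r, r < i + 1 → Stmt14Aux.hvf P r ≤ 2 * d + k - 2 := by
          intro r hr
          have h1 := (hHB.1 r (by omega)).2
          omega
        have hwP : Stmt14Aux.hvf P m + (i + 1) ≤ 2 * d + k - 2 := by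
          unfold Stmt14Aux.hvf
          rw [hgetBP]
          omega
        have hPlt : (P.take (i + 1)).sum < (i + 1) * (2 * d + k - 2 - i) :=
          Stmt14Aux.sum_take_lt hHB (by omega) hc1 hMP hwP
        exact iff_of_false (Nat.ne_of_lt hQlt) (fun h => (Nat.ne_of_lt hPlt) h.1)
end

section
/- Let d ≥ 2 and k ≥ 1 be integers. If k ≥ 2, then the number of partitions of d(d+k−1) having diagonal lengths T(d,k), satisfying the CI criterion, and having exactly d parts is 2^{d−1}, and the number of such partitions having exactly d+k−1 parts is also 2^{d−1}. If k = 1, then every partition of d² having diagonal lengths T(d,1) and satisfying the CI criterion has exactly d parts, and the number of such partitions is 2^{d−1}. -/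
open MvPolynomial

namespace S15

def vm (P : List ℕ) (r : ℕ) : ℕ := r + P.getD r 0

def VC (P : List ℕ) (a : ℕ) : Prop :=
  (Finset.range P.length).image (vm P) = Finset.Ico a (a + P.length)

def bld : ℕ → List ℕ → List ℕ
  | _, [] => []
  | c, m :: L => List.replicate m (c - m) ++ bld (c - 2*m) L

theorem Tdk_min (d k i : ℕ) : Tdk d k i = min (min (i + 1) d) (2 * d + k - 2 - i) := by
  unfold Tdk; split <;> omega

theorem getD_pos_iff {P : List ℕ} (hp : ∀ p ∈ P, 0 < p) (r : ℕ) :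
    0 < P.getD r 0 ↔ r < P.length := by
  constructor
  · intro h
    by_contra hn
    rw [List.getD_eq_default _ _ (by omega)] at h; omega
  · intro h
    rw [List.getD_eq_getElem _ _ h]
    exact hp _ (List.getElem_mem h)

theorem getD_anti {P : List ℕ} (hs : P.Pairwise (· ≥ ·)) {r s : ℕ} (hrs : r ≤ s) :
    P.getD s 0 ≤ P.getD r 0 := by
  rcases eq_or_lt_of_le hrs with rfl | hlt
  · exact le_refl _
  by_cases hsn : s < P.length
  · rw [List.getD_eq_getElem _ _ hsn, List.getD_eq_getElem _ _ (lt_trans hlt hsn)]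
    exact hs.rel_get_of_lt (by exact_mod_cast hlt)
  · rw [List.getD_eq_default _ _ (by omega)]; omega

theorem vm_step {P : List ℕ} (hs : P.Pairwise (· ≥ ·)) (r : ℕ) :
    vm P (r + 1) ≤ vm P r + 1 := by
  have := getD_anti hs (Nat.le_add_right r 1); unfold vm; omega

theorem sum_eq_range (P : List ℕ) : P.sum = ∑ r ∈ Finset.range P.length, P.getD r 0 := by
  induction P with
  | nil => simp
  | cons x t ih =>
    rw [List.sum_cons, List.length_cons, Finset.sum_range_succ']
    simp only [List.getD_cons_succ, List.getD_cons_zero]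
    omega

theorem diag_core {P : List ℕ} (hp : ∀ p ∈ P, 0 < p) (i : ℕ) :
    diagLen P i + ((Finset.range P.length).filter (fun r => vm P r ≤ i)).card
      = min (i + 1) P.length := by
  classical
  set n := P.length with hn
  have hg : ∀ r, 0 < P.getD r 0 ↔ r < n := getD_pos_iff hp
  have h1 : (Finset.range (i + 1)).filter (fun r => i - r < P.getD r 0)
      = ((Finset.range n).filter (fun r => r ≤ i)).filter (fun r => i < vm P r) := by
    ext r
    simp only [Finset.mem_filter, Finset.mem_range]; unfold vm
    have := hg r
    omega
  have h2 : (Finset.range n).filter (fun r => vm P r ≤ i)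
      = ((Finset.range n).filter (fun r => r ≤ i)).filter (fun r => ¬ i < vm P r) := by
    ext r
    simp only [Finset.mem_filter, Finset.mem_range]; unfold vm
    have := hg r
    omega
  have h3 : ((Finset.range n).filter (fun r => r ≤ i)) = Finset.range (min (i + 1) n) := by
    ext r
    simp only [Finset.mem_filter, Finset.mem_range]
    omega
  rw [diagLen, h1, h2, Finset.card_filter_add_card_filter_not, h3, Finset.card_range]

theorem VC.injOn {P : List ℕ} {a : ℕ} (h : VC P a) :
    Set.InjOn (vm P) ↑(Finset.range P.length) := by
  apply Finset.injOn_of_card_image_eq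
  rw [h, Nat.card_Ico, Finset.card_range]
  omega

theorem VC.mem {P : List ℕ} {a : ℕ} (h : VC P a) {r : ℕ} (hr : r < P.length) :
    a ≤ vm P r ∧ vm P r < a + P.length := by
  have : vm P r ∈ Finset.Ico a (a + P.length) := by
    rw [← h]; exact Finset.mem_image_of_mem _ (Finset.mem_range.mpr hr)
  simpa [Finset.mem_Ico] using this

theorem VC.surj {P : List ℕ} {a : ℕ} (h : VC P a) {x : ℕ} (hx : a ≤ x)
    (hx' : x < a + P.length) : ∃ r < P.length, vm P r = x := by
  have : x ∈ (Finset.range P.length).image (vm P) := by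
    rw [h]; exact Finset.mem_Ico.mpr ⟨hx, hx'⟩
  obtain ⟨r, hr, hrx⟩ := Finset.mem_image.mp this
  exact ⟨r, Finset.mem_range.mp hr, hrx⟩

theorem VC.a_pos {P : List ℕ} {a : ℕ} (h : VC P a) (hp : ∀ p ∈ P, 0 < p)
    (hne : P ≠ []) : 1 ≤ a := by
  have hn : 0 < P.length := List.length_pos_iff.mpr hne
  obtain ⟨r, hr, hrx⟩ := h.surj (le_refl a) (by omega)
  have := (getD_pos_iff hp r).mpr hr
  unfold vm at hrx; omega

theorem VC.nv {P : List ℕ} {a : ℕ} (h : VC P a) (i : ℕ) :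
    ((Finset.range P.length).filter (fun r => vm P r ≤ i)).card
      = min (a + P.length) (i + 1) - a := by
  classical
  have himg : ((Finset.range P.length).filter (fun r => vm P r ≤ i)).card
      = (((Finset.range P.length).image (vm P)).filter (fun x => x ≤ i)).card := by
    rw [Finset.filter_image]
    rw [Finset.card_image_of_injOn (h.injOn.mono (by intro x hx; exact (Finset.filter_subset _ _) hx))]
  rw [himg, h]
  have : (Finset.Ico a (a + P.length)).filter (fun x => x ≤ i)
      = Finset.Ico a (min (a + P.length) (i + 1)) := by
    ext x
    simp only [Finset.mem_filter, Finset.mem_Ico]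
    omega
  rw [this, Nat.card_Ico]

theorem VC.diag_formula {P : List ℕ} {a : ℕ} (h : VC P a) (hp : ∀ p ∈ P, 0 < p) (i : ℕ) :
    diagLen P i + (min (a + P.length) (i + 1) - a) = min (i + 1) P.length := by
  rw [← h.nv i]; exact diag_core hp i

theorem VC.sum {P : List ℕ} {a : ℕ} (h : VC P a) : P.sum = P.length * a := by
  classical
  have hinj := h.injOn
  have h1 : ∑ x ∈ (Finset.range P.length).image (vm P), x
      = ∑ r ∈ Finset.range P.length, vm P r :=
    Finset.sum_image (fun x hx y hy hxy => hinj (by simpa using hx) (by simpa using hy) hxy)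
  rw [h] at h1
  have h2 : ∑ x ∈ Finset.Ico a (a + P.length), x
      = ∑ r ∈ Finset.range P.length, (a + r) := by
    rw [Finset.sum_Ico_eq_sum_range]
    simp
  have h3 : ∑ r ∈ Finset.range P.length, vm P r
      = ∑ r ∈ Finset.range P.length, r + P.sum := by
    rw [sum_eq_range P, ← Finset.sum_add_distrib]
    rfl
  have h4 : ∑ r ∈ Finset.range P.length, (a + r)
      = P.length * a + ∑ r ∈ Finset.range P.length, r := by
    rw [Finset.sum_add_distrib, Finset.sum_const, Finset.card_range, smul_eq_mul]
  omega


section Block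
variable {P : List ℕ}

theorem getD_drop' (m r : ℕ) : (P.drop m).getD r 0 = P.getD (m + r) 0 := by
  rw [List.getD_eq_getElem?_getD, List.getD_eq_getElem?_getD, List.getElem?_drop]

theorem head_mem (hne : P ≠ []) : P.getD 0 0 ∈ P := by
  cases P with
  | nil => exact absurd rfl hne
  | cons x t => simp

theorem count_le_of_lt (hs : P.Pairwise (· ≥ ·)) {j : ℕ} (hj : j < P.length)
    (hlt : P.getD j 0 < P.getD 0 0) : P.count (P.getD 0 0) ≤ j := by
  have hq : P.count (P.getD 0 0) = (P.take j).count (P.getD 0 0) + (P.drop j).count (P.getD 0 0) := by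
    rw [← List.count_append, List.take_append_drop]
  have hdrop : (P.drop j).count (P.getD 0 0) = 0 := by
    rw [List.count_eq_zero]
    intro hmem
    obtain ⟨i, hi, hgi⟩ := List.mem_iff_getElem.mp hmem
    have : (P.drop j)[i] = P.getD (j + i) 0 := by
      rw [← getD_drop', List.getD_eq_getElem]
    rw [this] at hgi
    have := getD_anti hs (Nat.le_add_right j i)
    omega
  have := List.count_le_length (l := P.take j) (a := P.getD 0 0)
  have := List.length_take_le j P
  omega

theorem count_ge_of_eq (hs : P.Pairwise (· ≥ ·)) {j : ℕ} (hj : j < P.length)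
    (heq : P.getD j 0 = P.getD 0 0) : j + 1 ≤ P.count (P.getD 0 0) := by
  have htake : P.take (j + 1) = List.replicate (j + 1) (P.getD 0 0) := by
    apply List.ext_getElem
    · rw [List.length_take, List.length_replicate]; omega
    · intro i h1 h2
      rw [List.getElem_take, List.getElem_replicate]
      have hi : i < P.length := by
        rw [List.length_take] at h1; omega
      rw [← List.getD_eq_getElem P 0 hi]
      have h3 := getD_anti hs (show i ≤ j by rw [List.length_take] at h1; omega)
      have h4 := getD_anti hs (Nat.zero_le i)
      omega
  have hq : P.count (P.getD 0 0) = (P.take (j+1)).count (P.getD 0 0) + (P.drop (j+1)).count (P.getD 0 0) := by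
    rw [← List.count_append, List.take_append_drop]
  rw [htake, List.count_replicate_self] at hq
  omega

theorem blk (hs : P.Pairwise (· ≥ ·)) (hne : P ≠ []) :
    1 ≤ P.count (P.getD 0 0) ∧ P.count (P.getD 0 0) ≤ P.length ∧
    (∀ r < P.count (P.getD 0 0), P.getD r 0 = P.getD 0 0) ∧
    (∀ r, P.count (P.getD 0 0) ≤ r → r < P.length → P.getD r 0 < P.getD 0 0) := by
  refine ⟨List.count_pos_iff.mpr (head_mem hne), List.count_le_length, ?_, ?_⟩
  · intro r hr
    have hrn : r < P.length := lt_of_lt_of_le hr (List.count_le_length)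
    have h1 := getD_anti hs (Nat.zero_le r)
    rcases eq_or_lt_of_le h1 with h | h
    · exact h
    · exact absurd (count_le_of_lt hs hrn h) (by omega)
  · intro r hr hrn
    have h1 := getD_anti hs (Nat.zero_le r)
    rcases eq_or_lt_of_le h1 with h | h
    · exact absurd (count_ge_of_eq hs hrn h) (by omega)
    · exact h

theorem take_eq_replicate (hs : P.Pairwise (· ≥ ·)) (hne : P ≠ []) :
    P.take (P.count (P.getD 0 0)) = List.replicate (P.count (P.getD 0 0)) (P.getD 0 0) := by
  obtain ⟨h1, h2, h3, _⟩ := blk hs hne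
  apply List.ext_getElem
  · rw [List.length_take, List.length_replicate]; omega
  · intro i ha hb
    rw [List.length_take] at ha
    rw [List.getElem_take, List.getElem_replicate, ← List.getD_eq_getElem P 0 (by omega)]
    exact h3 i (by omega)

theorem P_decomp (hs : P.Pairwise (· ≥ ·)) (hne : P ≠ []) :
    P = List.replicate (P.count (P.getD 0 0)) (P.getD 0 0) ++ P.drop (P.count (P.getD 0 0)) := by
  conv_lhs => rw [← List.take_append_drop (P.count (P.getD 0 0)) P]
  rw [take_eq_replicate hs hne]

theorem count_drop_eq (hs : P.Pairwise (· ≥ ·)) (hne : P ≠ []) {x : ℕ} (hx : x ≠ P.getD 0 0) :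
    P.count x = (P.drop (P.count (P.getD 0 0))).count x := by
  conv_lhs => rw [P_decomp hs hne]
  rw [List.count_append, List.count_replicate]
  have : (P.getD 0 0 == x) = false := by
    rw [beq_eq_false_iff_ne]
    exact fun h => hx h.symm
  rw [this]
  simp

theorem mem_drop_of_ne (hs : P.Pairwise (· ≥ ·)) (hne : P ≠ []) {x : ℕ} (hmem : x ∈ P)
    (hx : x ≠ P.getD 0 0) : x ∈ P.drop (P.count (P.getD 0 0)) := by
  rw [P_decomp hs hne] at hmem
  rcases List.mem_append.mp hmem with h | h
  · exact absurd (List.eq_of_mem_replicate h) hx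
  · exact h

end Block

section F0
variable {P : List ℕ} {a : ℕ}

theorem vm_inj {P : List ℕ} {a : ℕ} (hVC : VC P a) {r s : ℕ} (hr : r < P.length)
    (hs : s < P.length) (h : vm P r = vm P s) : r = s :=
  hVC.injOn (by simpa using hr) (by simpa using hs) h

/-- all rows past the first block have `vm` strictly below `vm (m-1)` -/
theorem F0_C1 (hs : P.Pairwise (· ≥ ·)) (hp : ∀ p ∈ P, 0 < p) (hne : P ≠ [])
    (hVC : VC P a) : ∀ j, P.count (P.getD 0 0) ≤ j → j < P.length →
      vm P j < vm P (P.count (P.getD 0 0) - 1) := by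
  obtain ⟨h1, h2, h3, h4⟩ := blk hs hne
  set q := P.getD 0 0 with hqdef
  set m := P.count q with hmdef
  intro j hj
  induction j, hj using Nat.le_induction with
  | base =>
    intro hmn
    have hgm : P.getD m 0 < q := h4 m (le_refl m) hmn
    have hg1 : P.getD (m-1) 0 = q := h3 (m-1) (by omega)
    have hle : vm P m ≤ vm P (m-1) := by unfold vm; omega
    rcases eq_or_lt_of_le hle with h | h
    · exact absurd (vm_inj hVC hmn (by omega) h) (by omega)
    · exact h
  | succ j hj ih =>
    intro hjn
    have hlt := ih (by omega)
    have hstep := vm_step hs j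
    have hle : vm P (j+1) ≤ vm P (m-1) := by omega
    rcases eq_or_lt_of_le hle with h | h
    · exact absurd (vm_inj hVC hjn (by omega) h) (by omega)
    · exact h

theorem F0ii (hs : P.Pairwise (· ≥ ·)) (hp : ∀ p ∈ P, 0 < p) (hne : P ≠ [])
    (hVC : VC P a) : P.getD 0 0 + P.count (P.getD 0 0) = a + P.length := by
  obtain ⟨h1, h2, h3, h4⟩ := blk hs hne
  have hn : 1 ≤ P.length := List.length_pos_iff.mpr hne
  have hg1 : P.getD (P.count (P.getD 0 0) - 1) 0 = P.getD 0 0 := h3 _ (by omega)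
  have hvm1 : vm P (P.count (P.getD 0 0) - 1)
      = P.count (P.getD 0 0) - 1 + P.getD 0 0 := by unfold vm; omega
  have hub := (hVC.mem (show P.count (P.getD 0 0) - 1 < P.length by omega)).2
  obtain ⟨r, hr, hrv⟩ := hVC.surj (show a ≤ a + P.length - 1 by omega) (by omega)
  have hqpos : 0 < P.getD 0 0 := (getD_pos_iff hp 0).mpr (by omega)
  rcases lt_or_ge r (P.count (P.getD 0 0)) with h | h
  · have : vm P r = r + P.getD 0 0 := by unfold vm; rw [h3 r h]
    omega
  · have := F0_C1 hs hp hne hVC r h hr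
    omega

theorem F0iii (hs : P.Pairwise (· ≥ ·)) (hp : ∀ p ∈ P, 0 < p) (hne : P ≠ [])
    (hVC : VC P a) :
    (Finset.Ico (P.count (P.getD 0 0)) P.length).image (vm P)
      = Finset.Ico a (a + (P.length - P.count (P.getD 0 0))) := by
  obtain ⟨h1, h2, h3, h4⟩ := blk hs hne
  have hii := F0ii hs hp hne hVC
  have himg1 : (Finset.range (P.count (P.getD 0 0))).image (vm P)
      = Finset.Ico (P.getD 0 0) (P.getD 0 0 + P.count (P.getD 0 0)) := by
    ext x
    simp only [Finset.mem_image, Finset.mem_range, Finset.mem_Ico]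
    constructor
    · rintro ⟨r, hr, rfl⟩
      have : vm P r = r + P.getD 0 0 := by unfold vm; rw [h3 r hr]
      omega
    · intro hx
      refine ⟨x - P.getD 0 0, by omega, ?_⟩
      have : vm P (x - P.getD 0 0) = (x - P.getD 0 0) + P.getD 0 0 := by
        unfold vm; rw [h3 (x - P.getD 0 0) (by omega)]
      omega
  apply Finset.eq_of_subset_of_card_le
  · intro x hx
    obtain ⟨r, hr, rfl⟩ := Finset.mem_image.mp hx
    rw [Finset.mem_Ico] at hr
    have hmem := hVC.mem hr.2
    rw [Finset.mem_Ico]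
    refine ⟨hmem.1, ?_⟩
    by_contra hcon
    have hx2 : vm P r ∈ Finset.Ico (P.getD 0 0) (P.getD 0 0 + P.count (P.getD 0 0)) := by
      rw [Finset.mem_Ico]; omega
    rw [← himg1] at hx2
    obtain ⟨r', hr', hr'v⟩ := Finset.mem_image.mp hx2
    rw [Finset.mem_range] at hr'
    have := vm_inj hVC hr.2 (by omega) hr'v.symm
    omega
  · have hsub : ↑(Finset.Ico (P.count (P.getD 0 0)) P.length)
        ⊆ (↑(Finset.range P.length) : Set ℕ) := by
      intro x hx
      simp only [Finset.coe_Ico, Set.mem_Ico] at hx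
      simp only [Finset.coe_range, Set.mem_Iio]
      omega
    have hcard : ((Finset.Ico (P.count (P.getD 0 0)) P.length).image (vm P)).card
        = P.length - P.count (P.getD 0 0) := by
      rw [Finset.card_image_of_injOn (hVC.injOn.mono hsub), Nat.card_Ico]
    rw [hcard, Nat.card_Ico]
    omega

theorem VC_drop (hs : P.Pairwise (· ≥ ·)) (hp : ∀ p ∈ P, 0 < p) (hne : P ≠ [])
    (hVC : VC P a) (hlt : P.count (P.getD 0 0) < P.length) :
    P.count (P.getD 0 0) < a ∧ VC (P.drop (P.count (P.getD 0 0))) (a - P.count (P.getD 0 0)) := by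
  obtain ⟨h1, h2, h3, h4⟩ := blk hs hne
  have hiii := F0iii hs hp hne hVC
  have hma : P.count (P.getD 0 0) < a := by
    have : a ∈ Finset.Ico a (a + (P.length - P.count (P.getD 0 0))) :=
      Finset.mem_Ico.mpr ⟨le_refl a, by omega⟩
    rw [← hiii] at this
    obtain ⟨r, hr, hrv⟩ := Finset.mem_image.mp this
    rw [Finset.mem_Ico] at hr
    have : 0 < P.getD r 0 := (getD_pos_iff hp r).mpr hr.2
    unfold vm at hrv
    omega
  refine ⟨hma, ?_⟩
  unfold VC
  have hlen : (P.drop (P.count (P.getD 0 0))).length = P.length - P.count (P.getD 0 0) :=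
    List.length_drop
  rw [hlen]
  have hvm : ∀ r, P.count (P.getD 0 0) + vm (P.drop (P.count (P.getD 0 0))) r
      = vm P (P.count (P.getD 0 0) + r) := by
    intro r; unfold vm; rw [getD_drop']; omega
  ext x
  simp only [Finset.mem_image, Finset.mem_range, Finset.mem_Ico]
  constructor
  · rintro ⟨r, hr, rfl⟩
    have hx : vm P (P.count (P.getD 0 0) + r)
        ∈ Finset.Ico a (a + (P.length - P.count (P.getD 0 0))) := by
      rw [← hiii]
      exact Finset.mem_image_of_mem _ (Finset.mem_Ico.mpr ⟨by omega, by omega⟩)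
    rw [Finset.mem_Ico] at hx
    have := hvm r
    omega
  · intro hx
    have hx2 : P.count (P.getD 0 0) + x
        ∈ Finset.Ico a (a + (P.length - P.count (P.getD 0 0))) :=
      Finset.mem_Ico.mpr ⟨by omega, by omega⟩
    rw [← hiii] at hx2
    obtain ⟨r, hr, hrv⟩ := Finset.mem_image.mp hx2
    rw [Finset.mem_Ico] at hr
    refine ⟨r - P.count (P.getD 0 0), by omega, ?_⟩
    have := hvm (r - P.count (P.getD 0 0))
    have hrm : P.count (P.getD 0 0) + (r - P.count (P.getD 0 0)) = r := by omega
    rw [hrm] at this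
    omega

end F0

theorem lastD_irrel {L : List ℕ} (h : L ≠ []) (d d' : ℕ) : L.getLastD d = L.getLastD d' := by
  rw [List.getLastD_eq_getLast?, List.getLastD_eq_getLast?]
  cases hL : L.getLast? with
  | none => exact absurd (List.getLast?_eq_none_iff.mp hL) h
  | some x => rfl

theorem le_head {P : List ℕ} (hs : P.Pairwise (· ≥ ·)) {x : ℕ} (hx : x ∈ P) :
    x ≤ P.getD 0 0 := by
  obtain ⟨r, hr, rfl⟩ := List.mem_iff_getElem.mp hx
  rw [← List.getD_eq_getElem P 0 hr]
  exact getD_anti hs (Nat.zero_le r)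

theorem mem_eq_getD {P : List ℕ} {x : ℕ} (hx : x ∈ P) :
    ∃ r < P.length, P.getD r 0 = x := by
  obtain ⟨r, hr, rfl⟩ := List.mem_iff_getElem.mp hx
  exact ⟨r, hr, (List.getD_eq_getElem P 0 hr)⟩

theorem sorted_drop {P : List ℕ} (hs : P.Pairwise (· ≥ ·)) (m : ℕ) :
    (P.drop m).Pairwise (· ≥ ·) := List.Pairwise.drop hs

theorem pos_drop {P : List ℕ} (hp : ∀ p ∈ P, 0 < p) (m : ℕ) :
    ∀ p ∈ P.drop m, 0 < p := fun p hp' => hp p (List.mem_of_mem_drop hp')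


theorem bld_cons (c m : ℕ) (L : List ℕ) :
    bld c (m :: L) = List.replicate m (c - m) ++ bld (c - 2*m) L := rfl

theorem bld_singleton (c x : ℕ) : bld c [x] = List.replicate x (c - x) := by
  rw [bld_cons]
  show _ ++ [] = _
  rw [List.append_nil]

/-- Structure theorem: a partition with `VC P a` is `bld (a + n) L` for a composition `L`. -/
theorem VC_struct : ∀ (n : ℕ) (P : List ℕ) (a : ℕ), P.length = n →
    P.Pairwise (· ≥ ·) → (∀ p ∈ P, 0 < p) → VC P a →
    ∃ L : List ℕ, (∀ x ∈ L, 0 < x) ∧ L.sum = n ∧ n < a + L.getLastD 1 ∧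
      P = bld (a + n) L := by
  intro n
  induction n using Nat.strong_induction_on with
  | _ n ih =>
    intro P a hlen hs hp hVC
    rcases Nat.eq_zero_or_pos n with rfl | hn
    · refine ⟨[], by simp, by simp, by simp, ?_⟩
      rw [List.length_eq_zero_iff.mp hlen]; rfl
    subst hlen
    have hne : P ≠ [] := by
      intro h; rw [h] at hn; simp at hn
    obtain ⟨h1, h2, h3, h4⟩ := blk hs hne
    have hii := F0ii hs hp hne hVC
    rcases eq_or_lt_of_le h2 with hmn | hmn
    · -- single block
      have ha : 1 ≤ a := hVC.a_pos hp hne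
      refine ⟨[P.length], by simp; omega, by simp, by simp; omega, ?_⟩
      have hdrop : P.drop (P.count (P.getD 0 0)) = [] := by
        rw [hmn]
        exact List.drop_length
      have hP : P = List.replicate (P.count (P.getD 0 0)) (P.getD 0 0) := by
        conv_lhs => rw [P_decomp hs hne]
        rw [hdrop, List.append_nil]
      conv_lhs => rw [hP]
      rw [show List.count (P.getD 0 0) P = P.length from hmn,
        show P.getD 0 0 = a from by omega, bld_singleton]
      congr 1
      omega
    · -- several blocks
      obtain ⟨hma, hVC'⟩ := VC_drop hs hp hne hVC hmn
      have hlen' : (P.drop (P.count (P.getD 0 0))).length = P.length - P.count (P.getD 0 0) :=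
        List.length_drop
      obtain ⟨L', hL'pos, hL'sum, hL'last, hL'bld⟩ :=
        ih (P.length - P.count (P.getD 0 0)) (by omega) (P.drop (P.count (P.getD 0 0)))
          (a - P.count (P.getD 0 0)) hlen' (sorted_drop hs _) (pos_drop hp _) hVC'
      have hL'ne : L' ≠ [] := by
        intro h; rw [h] at hL'sum; simp only [List.sum_nil] at hL'sum; omega
      refine ⟨P.count (P.getD 0 0) :: L', ?_, ?_, ?_, ?_⟩
      · intro x hx
        rcases List.mem_cons.mp hx with rfl | hx
        · omega
        · exact hL'pos x hx
      · simp only [List.sum_cons]; omega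
      · rw [List.getLastD_cons, lastD_irrel hL'ne (P.count (P.getD 0 0)) 1]; omega
      · rw [bld]
        conv_lhs => rw [P_decomp hs hne]
        have e2 : a + P.length - P.count (P.getD 0 0) = P.getD 0 0 := by omega
        have e3 : a + P.length - 2 * P.count (P.getD 0 0)
            = a - P.count (P.getD 0 0) + (P.length - P.count (P.getD 0 0)) := by omega
        rw [e2, e3, ← hL'bld]

/-- VC implies the CI criterion. -/
theorem VC_CI : ∀ (n : ℕ) (P : List ℕ) (a : ℕ), P.length = n →
    P.Pairwise (· ≥ ·) → (∀ p ∈ P, 0 < p) → VC P a → CICriterion P := by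
  intro n
  induction n using Nat.strong_induction_on with
  | _ n ih =>
    intro P a hlen hs hp hVC x y hx hy hyx hadj
    subst hlen
    have hne : P ≠ [] := by rintro rfl; simp at hx
    have hn : 1 ≤ P.length := List.length_pos_iff.mpr hne
    obtain ⟨h1, h2, h3, h4⟩ := blk hs hne
    have hxq : x ≤ P.getD 0 0 := le_head hs hx
    have hyq : y ≤ P.getD 0 0 := le_head hs hy
    rcases eq_or_lt_of_le h2 with hmn | hmn
    · -- single block : impossible
      exfalso
      obtain ⟨rx, hrx, hrx'⟩ := mem_eq_getD hx
      obtain ⟨ry, hry, hry'⟩ := mem_eq_getD hy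
      have := h3 rx (by omega)
      have := h3 ry (by omega)
      omega
    · obtain ⟨hma, hVC'⟩ := VC_drop hs hp hne hVC hmn
      have hiiP := F0ii hs hp hne hVC
      have hne' : P.drop (P.count (P.getD 0 0)) ≠ [] := by
        intro h
        have := (List.length_drop (i := P.count (P.getD 0 0)) (l := P))
        rw [h] at this; simp only [List.length_nil] at this; omega
      have hq2 : (P.drop (P.count (P.getD 0 0))).getD 0 0 = P.getD (P.count (P.getD 0 0)) 0 := by
        rw [getD_drop', Nat.add_zero]
      have hq2lt : P.getD (P.count (P.getD 0 0)) 0 < P.getD 0 0 := h4 _ (le_refl _) (by omega)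
      have hii' := F0ii (sorted_drop hs _) (pos_drop hp _) hne' hVC'
      rw [hq2, List.length_drop] at hii'
      rcases eq_or_lt_of_le hxq with hxqe | hxql
      · -- x is the largest part
        have hyne : y ≠ P.getD 0 0 := by omega
        have hymem' : y ∈ P.drop (P.count (P.getD 0 0)) := mem_drop_of_ne hs hne hy hyne
        have hyq2 : y ≤ P.getD (P.count (P.getD 0 0)) 0 := by
          rw [← hq2]; exact le_head (sorted_drop hs _) hymem'
        have hq2mem : P.getD (P.count (P.getD 0 0)) 0 ∈ P := by
          have hgg := List.getD_eq_getElem P 0 (show P.count (P.getD 0 0) < P.length by omega)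
          rw [hgg]
          exact List.getElem_mem _
        rcases hadj _ hq2mem with h | h
        · -- y = q₂
          have hyeq : y = P.getD (P.count (P.getD 0 0)) 0 := by omega
          have hcx : P.count x = P.count (P.getD 0 0) := by rw [hxqe]
          have hcy : P.count y = (P.drop (P.count (P.getD 0 0))).count y :=
            count_drop_eq hs hne (by omega)
          rw [hcx, hcy, hyeq]
          rw [hyeq] at *
          omega
        · omega
      · -- x below the first block
        have hxne : x ≠ P.getD 0 0 := by omega
        have hyne : y ≠ P.getD 0 0 := by omega
        have hx' := mem_drop_of_ne hs hne hx hxne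
        have hy' := mem_drop_of_ne hs hne hy hyne
        have hcx := count_drop_eq hs hne hxne
        have hcy := count_drop_eq hs hne hyne
        rw [hcx, hcy]
        exact ih (P.length - P.count (P.getD 0 0)) (by omega) _ (a - P.count (P.getD 0 0))
          (by rw [List.length_drop]) (sorted_drop hs _) (pos_drop hp _) hVC'
          x y hx' hy' hyx (fun z hz => hadj z (List.mem_of_mem_drop hz))

/-- CI criterion implies VC for some a. -/
theorem CI_VC : ∀ (n : ℕ) (P : List ℕ), P.length = n →
    P.Pairwise (· ≥ ·) → (∀ p ∈ P, 0 < p) → CICriterion P → ∃ a, VC P a := by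
  intro n
  induction n using Nat.strong_induction_on with
  | _ n ih =>
    intro P hlen hs hp hCI
    rcases Nat.eq_zero_or_pos n with rfl | hn
    · refine ⟨0, ?_⟩
      unfold VC
      rw [hlen]
      simp
    subst hlen
    have hne : P ≠ [] := by
      intro h; rw [h] at hn; simp at hn
    obtain ⟨h1, h2, h3, h4⟩ := blk hs hne
    rcases eq_or_lt_of_le h2 with hmn | hmn
    · -- single block
      refine ⟨P.getD 0 0, ?_⟩
      unfold VC
      ext z
      simp only [Finset.mem_image, Finset.mem_range, Finset.mem_Ico]
      constructor
      · rintro ⟨r, hr, rfl⟩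
        have : vm P r = r + P.getD 0 0 := by unfold vm; rw [h3 r (by omega)]
        omega
      · intro hz
        refine ⟨z - P.getD 0 0, by omega, ?_⟩
        have : vm P (z - P.getD 0 0) = (z - P.getD 0 0) + P.getD 0 0 := by
          unfold vm; rw [h3 (z - P.getD 0 0) (by omega)]
        omega
    · -- several blocks
      have hne' : P.drop (P.count (P.getD 0 0)) ≠ [] := by
        intro h
        have := (List.length_drop (i := P.count (P.getD 0 0)) (l := P))
        rw [h] at this; simp only [List.length_nil] at this; omega
      have hq2 : (P.drop (P.count (P.getD 0 0))).getD 0 0 = P.getD (P.count (P.getD 0 0)) 0 := by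
        rw [getD_drop', Nat.add_zero]
      have hq2lt : P.getD (P.count (P.getD 0 0)) 0 < P.getD 0 0 := h4 _ (le_refl _) (by omega)
      -- CI criterion transfers to the tail
      have hCI' : CICriterion (P.drop (P.count (P.getD 0 0))) := by
        intro x y hx hy hyx hadj
        have hxq2 : x ≤ P.getD (P.count (P.getD 0 0)) 0 := by
          rw [← hq2]; exact le_head (sorted_drop hs _) hx
        have hxne : x ≠ P.getD 0 0 := by omega
        have hyne : y ≠ P.getD 0 0 := by omega
        rw [← count_drop_eq hs hne hxne, ← count_drop_eq hs hne hyne]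
        apply hCI x y (List.mem_of_mem_drop hx) (List.mem_of_mem_drop hy) hyx
        intro z hz
        conv at hz => rw [P_decomp hs hne]
        rcases List.mem_append.mp hz with h | h
        · right
          rw [List.eq_of_mem_replicate h]
          omega
        · exact hadj z h
      obtain ⟨a', hVC'⟩ := ih (P.length - P.count (P.getD 0 0)) (by omega) _
        (by rw [List.length_drop]) (sorted_drop hs _) (pos_drop hp _) hCI'
      have hii' := F0ii (sorted_drop hs _) (pos_drop hp _) hne' hVC'
      rw [hq2, List.length_drop] at hii'
      -- CI relation between the two top blocks
      have hq2mem : P.getD (P.count (P.getD 0 0)) 0 ∈ P := by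
        have hgg := List.getD_eq_getElem P 0 (show P.count (P.getD 0 0) < P.length by omega)
        rw [hgg]
        exact List.getElem_mem _
      have hqmem : P.getD 0 0 ∈ P := by
        have hgg := List.getD_eq_getElem P 0 (show 0 < P.length by omega)
        rw [hgg]
        exact List.getElem_mem _
      have hadjtop : ∀ z ∈ P, z ≤ P.getD (P.count (P.getD 0 0)) 0 ∨ P.getD 0 0 ≤ z := by
        intro z hz
        conv at hz => rw [P_decomp hs hne]
        rcases List.mem_append.mp hz with h | h
        · right; rw [List.eq_of_mem_replicate h]
        · left; rw [← hq2]; exact le_head (sorted_drop hs _) h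
      have hCItop := hCI (P.getD 0 0) (P.getD (P.count (P.getD 0 0)) 0) hqmem hq2mem hq2lt hadjtop
      rw [count_drop_eq hs hne (show P.getD (P.count (P.getD 0 0)) 0 ≠ P.getD 0 0 by omega)]
        at hCItop
      refine ⟨a' + P.count (P.getD 0 0), ?_⟩
      have hq_eq : P.getD 0 0 = a' + P.length := by omega
      unfold VC
      have hvm : ∀ r, P.count (P.getD 0 0) + vm (P.drop (P.count (P.getD 0 0))) r
          = vm P (P.count (P.getD 0 0) + r) := by
        intro r; unfold vm; rw [getD_drop']; omega
      ext z
      simp only [Finset.mem_image, Finset.mem_range, Finset.mem_Ico]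
      constructor
      · rintro ⟨r, hr, rfl⟩
        rcases lt_or_ge r (P.count (P.getD 0 0)) with h | h
        · have : vm P r = r + P.getD 0 0 := by unfold vm; rw [h3 r h]
          omega
        · have hmem := hVC'.mem (r := r - P.count (P.getD 0 0))
            (by rw [List.length_drop]; omega)
          rw [List.length_drop] at hmem
          have h5 := hvm (r - P.count (P.getD 0 0))
          have h6 : P.count (P.getD 0 0) + (r - P.count (P.getD 0 0)) = r := by omega
          rw [h6] at h5
          omega
      · intro hz
        rcases le_or_gt (a' + P.length) z with h | h
        · refine ⟨z - (a' + P.length), by omega, ?_⟩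
          have : vm P (z - (a' + P.length)) = (z - (a' + P.length)) + P.getD 0 0 := by
            unfold vm; rw [h3 _ (by omega)]
          omega
        · obtain ⟨r', hr', hr'v⟩ := hVC'.surj (x := z - P.count (P.getD 0 0))
            (by omega) (by rw [List.length_drop]; omega)
          rw [List.length_drop] at hr'
          refine ⟨P.count (P.getD 0 0) + r', by omega, ?_⟩
          have h5 := hvm r'
          omega


theorem getD_replicate {m q r : ℕ} (hr : r < m) : (List.replicate m q).getD r 0 = q := by
  rw [List.getD_eq_getElem _ _ (by rw [List.length_replicate]; exact hr)]
  exact List.getElem_replicate _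

theorem getLastD_le_sum {L : List ℕ} (hne : L ≠ []) : L.getLastD 1 ≤ L.sum := by
  have h1 : L.getLastD 1 = L.getLast hne := by
    rw [List.getLastD_eq_getLast?, List.getLast?_eq_getLast hne]; rfl
  rw [h1]
  exact List.single_le_sum (fun x _ => Nat.zero_le x) _ (List.getLast_mem hne)

theorem getLastD_pos {L : List ℕ} (hp : ∀ x ∈ L, 0 < x) : 0 < L.getLastD 1 := by
  rcases eq_or_ne L [] with rfl | hne
  · simp
  · have h1 : L.getLastD 1 = L.getLast hne := by
      rw [List.getLastD_eq_getLast?, List.getLast?_eq_getLast hne]; rfl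
    rw [h1]
    exact hp _ (List.getLast_mem hne)

theorem dropLast_getLastD {L : List ℕ} (hne : L ≠ []) :
    L.dropLast ++ [L.getLastD 1] = L := by
  have h2 := List.dropLast_append_getLast hne
  rw [List.getLastD_eq_getLast?, List.getLast?_eq_getLast hne]
  exact h2

/-- Forward construction: `bld (a + L.sum) L` is a partition list with `VC _ a`. -/
theorem bld_spec : ∀ (L : List ℕ) (a : ℕ), 1 ≤ a → (∀ x ∈ L, 0 < x) →
    L.sum < a + L.getLastD 1 →
    (bld (a + L.sum) L).length = L.sum ∧
    (bld (a + L.sum) L).Pairwise (· ≥ ·) ∧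
    (∀ x ∈ bld (a + L.sum) L, 0 < x) ∧
    (∀ x ∈ bld (a + L.sum) L, x < a + L.sum) ∧
    VC (bld (a + L.sum) L) a := by
  intro L
  induction L with
  | nil =>
    intro a ha _ _
    refine ⟨rfl, List.Pairwise.nil, by simp [bld], by simp [bld], ?_⟩
    unfold VC
    simp [bld]
  | cons m L' ih =>
    intro a ha hpos hlast
    have hm : 0 < m := hpos m (List.mem_cons_self)
    have hsum : (m :: L').sum = m + L'.sum := List.sum_cons
    rcases eq_or_ne L' [] with rfl | hL'ne
    · -- single block
      have hs0 : (m :: ([] : List ℕ)).sum = m := by simp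
      have hbld : bld (a + (m :: ([] : List ℕ)).sum) (m :: []) = List.replicate m a := by
        rw [bld_cons]
        show _ ++ [] = _
        rw [List.append_nil, hs0]
        congr 1
        omega
      rw [hbld, hs0]
      refine ⟨List.length_replicate, ?_, ?_, ?_, ?_⟩
      · exact List.pairwise_replicate.mpr (Or.inr (le_refl a))
      · intro x hx; rw [List.eq_of_mem_replicate hx]; omega
      · intro x hx; rw [List.eq_of_mem_replicate hx]; omega
      · unfold VC
        rw [List.length_replicate]
        ext z
        simp only [Finset.mem_image, Finset.mem_range, Finset.mem_Ico]
        constructor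
        · rintro ⟨r, hr, rfl⟩
          have : vm (List.replicate m a) r = r + a := by
            unfold vm; rw [getD_replicate hr]
          omega
        · intro hz
          refine ⟨z - a, by omega, ?_⟩
          have : vm (List.replicate m a) (z - a) = (z - a) + a := by
            unfold vm; rw [getD_replicate (by omega)]
          omega
    · -- several blocks
      have hlast2 : (m :: L').getLastD 1 = L'.getLastD 1 := by
        rw [List.getLastD_cons, lastD_irrel hL'ne m 1]
      rw [hlast2, hsum] at hlast
      have hlle := getLastD_le_sum hL'ne
      have hma : m < a := by omega
      obtain ⟨ihlen, ihsort, ihpos, ihbound, ihVC⟩ :=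
        ih (a - m) (by omega) (fun x hx => hpos x (List.mem_cons_of_mem m hx)) (by omega)
      have e1 : a + (m :: L').sum - m = a + L'.sum := by omega
      have e2 : a + (m :: L').sum - 2 * m = a - m + L'.sum := by omega
      have hbld : bld (a + (m :: L').sum) (m :: L')
          = List.replicate m (a + L'.sum) ++ bld (a - m + L'.sum) L' := by
        rw [bld_cons, e1, e2]
      rw [hbld]
      have hq : a - m + L'.sum < a + L'.sum := by omega
      have hlen : (List.replicate m (a + L'.sum) ++ bld (a - m + L'.sum) L').length
          = (m :: L').sum := by
        rw [List.length_append, List.length_replicate, ihlen, hsum]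
      refine ⟨hlen, ?_, ?_, ?_, ?_⟩
      · rw [List.pairwise_append]
        refine ⟨List.pairwise_replicate.mpr (Or.inr (le_refl _)), ihsort, ?_⟩
        intro x hx y hy
        rw [List.eq_of_mem_replicate hx]
        have := ihbound y hy
        omega
      · intro x hx
        rcases List.mem_append.mp hx with h | h
        · rw [List.eq_of_mem_replicate h]; omega
        · exact ihpos x h
      · intro x hx
        rcases List.mem_append.mp hx with h | h
        · rw [List.eq_of_mem_replicate h]; rw [hsum]; omega
        · have := ihbound x h; rw [hsum]; omega
      · unfold VC
        rw [hlen, hsum]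
        have hgetD : ∀ r, r < m + L'.sum →
            (List.replicate m (a + L'.sum) ++ bld (a - m + L'.sum) L').getD r 0
            = if r < m then a + L'.sum else (bld (a - m + L'.sum) L').getD (r - m) 0 := by
          intro r hr
          split
          · next h =>
            rw [List.getD_append _ _ _ _ (by rw [List.length_replicate]; exact h)]
            exact getD_replicate h
          · next h =>
            rw [List.getD_append_right _ _ _ _ (by rw [List.length_replicate]; omega)]
            rw [List.length_replicate]
        ext z
        simp only [Finset.mem_image, Finset.mem_range, Finset.mem_Ico]
        constructor
        · rintro ⟨r, hr, rfl⟩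
          rcases lt_or_ge r m with h | h
          · have : vm (List.replicate m (a + L'.sum) ++ bld (a - m + L'.sum) L') r
                = r + (a + L'.sum) := by
              unfold vm
              rw [hgetD r hr, if_pos h]
            omega
          · have hv : vm (List.replicate m (a + L'.sum) ++ bld (a - m + L'.sum) L') r
                = r + (bld (a - m + L'.sum) L').getD (r - m) 0 := by
              unfold vm
              rw [hgetD r hr, if_neg (by omega)]
            have hmem := ihVC.mem (r := r - m) (by rw [ihlen]; omega)
            rw [ihlen] at hmem
            unfold vm at hmem
            omega
        · intro hz
          rcases le_or_gt (a + L'.sum) z with h | h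
          · refine ⟨z - (a + L'.sum), by omega, ?_⟩
            have hlt : z - (a + L'.sum) < m := by omega
            have : vm (List.replicate m (a + L'.sum) ++ bld (a - m + L'.sum) L')
                (z - (a + L'.sum)) = (z - (a + L'.sum)) + (a + L'.sum) := by
              unfold vm
              rw [hgetD _ (by omega), if_pos hlt]
            omega
          · obtain ⟨r', hr', hr'v⟩ := ihVC.surj (x := z - m) (by omega)
              (by rw [ihlen]; omega)
            rw [ihlen] at hr'
            refine ⟨m + r', by omega, ?_⟩
            have : vm (List.replicate m (a + L'.sum) ++ bld (a - m + L'.sum) L') (m + r')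
                = (m + r') + (bld (a - m + L'.sum) L').getD r' 0 := by
              unfold vm
              rw [hgetD _ (by omega), if_neg (by omega)]
              congr 2
              omega
            unfold vm at hr'v
            omega

/-- Injectivity of `bld` on composition data. -/
theorem bld_inj : ∀ (L1 L2 : List ℕ) (a : ℕ), 1 ≤ a → (∀ x ∈ L1, 0 < x) → (∀ x ∈ L2, 0 < x) →
    L1.sum = L2.sum → L1.sum < a + L1.getLastD 1 → L2.sum < a + L2.getLastD 1 →
    bld (a + L1.sum) L1 = bld (a + L1.sum) L2 → L1 = L2 := by
  intro L1
  induction L1 with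
  | nil =>
    intro L2 a _ _ hpos2 hsum _ _ _
    cases L2 with
    | nil => rfl
    | cons m2 T2 =>
      exfalso
      have := hpos2 m2 (List.mem_cons_self)
      rw [List.sum_nil, List.sum_cons] at hsum
      omega
  | cons m1 T1 ih =>
    intro L2 a ha hpos1 hpos2 hsum hlast1 hlast2 hbld
    have hm1 : 0 < m1 := hpos1 m1 (List.mem_cons_self)
    cases L2 with
    | nil =>
      exfalso
      rw [List.sum_nil, List.sum_cons] at hsum
      omega
    | cons m2 T2 =>
      have hm2 : 0 < m2 := hpos2 m2 (List.mem_cons_self)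
      rw [bld_cons, bld_cons] at hbld
      set c := a + (m1 :: T1).sum with hc
      have hs1 : (m1 :: T1).sum = m1 + T1.sum := List.sum_cons
      have hs2 : (m2 :: T2).sum = m2 + T2.sum := List.sum_cons
      have hhead : c - m1 = c - m2 := by
        have h1 : (List.replicate m1 (c - m1) ++ bld (c - 2*m1) T1).getD 0 0 = c - m1 := by
          rw [List.getD_append _ _ _ _ (by rw [List.length_replicate]; omega)]
          exact getD_replicate hm1
        have h2 : (List.replicate m2 (c - m2) ++ bld (c - 2*m2) T2).getD 0 0 = c - m2 := by
          rw [List.getD_append _ _ _ _ (by rw [List.length_replicate]; omega)]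
          exact getD_replicate hm2
        rw [← h1, ← h2, hbld]
      have hmm : m1 = m2 := by
        have hm1c : m1 ≤ (m1 :: T1).sum := by rw [hs1]; omega
        have hm2c : m2 ≤ (m1 :: T1).sum := by rw [hsum, hs2]; omega
        have hcc : (m1 :: T1).sum < c := by rw [hc]; omega
        omega
      subst hmm
      have htail : bld (c - 2*m1) T1 = bld (c - 2*m1) T2 := by
        have := List.append_inj hbld rfl
        exact this.2
      rcases eq_or_ne T1 [] with rfl | hT1ne
      · -- T1 empty forces T2 empty
        cases T2 with
        | nil => rfl
        | cons x t =>
          exfalso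
          have := hpos2 x (List.mem_cons_of_mem _ List.mem_cons_self)
          rw [hs1] at hsum
          rw [hs2, List.sum_cons] at hsum
          simp at hsum
          have hts : t.sum = 0 := by omega
          omega
      · have hT2ne : T2 ≠ [] := by
          intro h
          subst h
          have hT1pos : 0 < T1.sum :=
            List.sum_pos T1 (fun x hx => hpos1 x (List.mem_cons_of_mem _ hx)) hT1ne
          rw [hs1] at hsum
          rw [hs2] at hsum
          simp at hsum
          omega
        have hlast1' : T1.getLastD 1 = (m1 :: T1).getLastD 1 := by
          rw [List.getLastD_cons, lastD_irrel hT1ne m1 1]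
        have hlast2' : T2.getLastD 1 = (m1 :: T2).getLastD 1 := by
          rw [List.getLastD_cons, lastD_irrel hT2ne m1 1]
        have hT1le := getLastD_le_sum hT1ne
        have hma : m1 < a := by
          rw [hs1] at hlast1
          rw [← hlast1'] at hlast1
          omega
        have hTsum : T1.sum = T2.sum := by
          rw [hs1, hs2] at hsum; omega
        have he : c - 2*m1 = (a - m1) + T1.sum := by
          rw [hc, hs1]; omega
        rw [he] at htail
        have := ih T2 (a - m1) (by omega)
          (fun x hx => hpos1 x (List.mem_cons_of_mem _ hx))
          (fun x hx => hpos2 x (List.mem_cons_of_mem _ hx))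
          hTsum
          (by rw [← hlast1'] at hlast1; rw [hs1] at hlast1; omega)
          (by rw [← hlast2'] at hlast2; rw [hs2] at hlast2; omega)
          htail
        rw [this]


theorem pin_arith (d k a n : ℕ) (hd : 2 ≤ d) (hk : 1 ≤ k) (ha : 1 ≤ a) (hn : 1 ≤ n)
    (h1 : min (min (d-1+1) d) (2*d+k-2-(d-1)) + (min (a+n) (d-1+1) - a) = min (d-1+1) n)
    (h2 : min (min (n-1+1) d) (2*d+k-2-(n-1)) + (min (a+n) (n-1+1) - a) = min (n-1+1) n)
    (h3 : min (min (2*d+k-3+1) d) (2*d+k-2-(2*d+k-3)) + (min (a+n) (2*d+k-3+1) - a)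
      = min (2*d+k-3+1) n)
    (h4 : min (min (2*d+k-2+1) d) (2*d+k-2-(2*d+k-2)) + (min (a+n) (2*d+k-2+1) - a)
      = min (2*d+k-2+1) n) :
    (n = d ∧ a = d + k - 1) ∨ (2 ≤ k ∧ n = d + k - 1 ∧ a = d) := by
  have K1 : d ≤ a ∧ d ≤ n := by clear h2 h3 h4; omega
  rcases le_or_gt n a with hna | hna
  · have K2 : n = d := by clear h1 h3 h4; omega
    have K3 : a = d + k - 1 := by clear h1 h2; omega
    exact Or.inl ⟨K2, K3⟩
  · have K2 : a = d ∧ n ≤ d + k - 1 ∧ d + 1 ≤ n := by clear h1 h3 h4; omega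
    have K3 : n = d + k - 1 := by clear h1 h2 h4; omega
    exact Or.inr ⟨by omega, K3, K2.1⟩

theorem pin {P : List ℕ} {a d k : ℕ} (hd : 2 ≤ d) (hk : 1 ≤ k)
    (hs : P.Pairwise (· ≥ ·)) (hp : ∀ p ∈ P, 0 < p) (hVC : VC P a)
    (hdiag : ∀ i, diagLen P i = Tdk d k i) (hne : P ≠ []) :
    (P.length = d ∧ a = d + k - 1) ∨ (2 ≤ k ∧ P.length = d + k - 1 ∧ a = d) := by
  have ha := hVC.a_pos hp hne
  have hn : 1 ≤ P.length := List.length_pos_iff.mpr hne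
  have key : ∀ i, min (min (i+1) d) (2*d+k-2-i) + (min (a + P.length) (i+1) - a)
      = min (i+1) P.length := by
    intro i
    have h := hVC.diag_formula hp i
    rw [hdiag i, Tdk_min] at h
    exact h
  exact pin_arith d k a P.length hd hk ha hn (key (d-1)) (key (P.length - 1))
    (key (2*d+k-3)) (key (2*d+k-2))

theorem diag_of_VC {d k a : ℕ} {P : List ℕ} (hd : 2 ≤ d) (hk : 1 ≤ k)
    (hp : ∀ p ∈ P, 0 < p) (hVC : VC P a)
    (hcase : (P.length = d ∧ a = d + k - 1) ∨ (P.length = d + k - 1 ∧ a = d)) :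
    ∀ i, diagLen P i = Tdk d k i := by
  intro i
  have h := hVC.diag_formula hp i
  rw [Tdk_min]
  rcases hcase with ⟨hn, rfl⟩ | ⟨hn, rfl⟩ <;> rw [hn] at h <;> omega

/-- the `d`-parts case -/
theorem ciSet_d_eq {d k : ℕ} (hd : 2 ≤ d) (hk : 1 ≤ k) :
    ciSet d k d = (fun c : Composition d => bld (d + k - 1 + d) c.blocks) '' Set.univ := by
  ext P
  simp only [Set.mem_image, Set.mem_univ, true_and]
  constructor
  · rintro ⟨⟨hs, hp⟩, hsum, hdiag, hCI, hlen⟩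
    have hne : P ≠ [] := by
      intro h; rw [h] at hlen; simp at hlen; omega
    obtain ⟨a, hVC⟩ := CI_VC P.length P rfl hs hp hCI
    have hpin := pin hd hk hs hp hVC hdiag hne
    have hae : a = d + k - 1 := by rcases hpin with ⟨h1, h2⟩ | ⟨h1, h2, h3⟩ <;> omega
    obtain ⟨L, hLpos, hLsum, hLlast, hLbld⟩ := VC_struct P.length P a rfl hs hp hVC
    refine ⟨⟨L, fun {i} hi => hLpos i hi, by rw [hLsum, hlen]⟩, ?_⟩
    show bld (d + k - 1 + d) L = P
    rw [hLbld]
    congr 1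
    omega
  · rintro ⟨c, rfl⟩
    have hsum_d : c.blocks.sum = d := c.blocks_sum
    have hposb : ∀ x ∈ c.blocks, 0 < x := fun x hx => c.blocks_pos hx
    have hlast : c.blocks.sum < (d + k - 1) + c.blocks.getLastD 1 := by
      have := getLastD_pos hposb; omega
    obtain ⟨hlen, hsort, hppos, hbound, hVC⟩ :=
      bld_spec c.blocks (d + k - 1) (by omega) hposb hlast
    rw [hsum_d] at hlen hsort hppos hbound hVC
    refine ⟨⟨hsort, hppos⟩, ?_, ?_, ?_, hlen⟩
    · rw [hVC.sum, hlen, Nat.mul_comm]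
    · exact diag_of_VC hd hk hppos hVC (Or.inl ⟨hlen, rfl⟩)
    · exact VC_CI _ _ _ rfl hsort hppos hVC

theorem inj_d {d k : ℕ} (hd : 2 ≤ d) (hk : 1 ≤ k) :
    Function.Injective (fun c : Composition d => bld (d + k - 1 + d) c.blocks) := by
  intro c1 c2 h
  apply Composition.ext
  have hp1 : ∀ x ∈ c1.blocks, 0 < x := fun x hx => c1.blocks_pos hx
  have hp2 : ∀ x ∈ c2.blocks, 0 < x := fun x hx => c2.blocks_pos hx
  refine bld_inj c1.blocks c2.blocks (d + k - 1) (by omega) hp1 hp2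
    (by rw [c1.blocks_sum, c2.blocks_sum]) ?_ ?_ ?_
  · have := getLastD_pos hp1; rw [c1.blocks_sum]; omega
  · have := getLastD_pos hp2; rw [c2.blocks_sum]; omega
  · rw [c1.blocks_sum]; exact h

theorem cnt_d {d k : ℕ} (hd : 2 ≤ d) (hk : 1 ≤ k) : (ciSet d k d).ncard = 2 ^ (d - 1) := by
  rw [ciSet_d_eq hd hk, Set.ncard_image_of_injective _ (inj_d hd hk), Set.ncard_univ,
    Nat.card_eq_fintype_card, composition_card]

/-- the `d+k-1`-parts case, `k ≥ 2` -/
def adjL (w : ℕ) (L : List ℕ) : List ℕ := L.dropLast ++ [L.getLastD 1 + w]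

theorem adjL_facts {w : ℕ} {L : List ℕ} (hne : L ≠ []) (hp : ∀ x ∈ L, 0 < x) :
    (adjL w L).sum = L.sum + w ∧ (∀ x ∈ adjL w L, 0 < x) ∧
    (adjL w L).getLastD 1 = L.getLastD 1 + w := by
  have hdec := dropLast_getLastD hne
  have hsum : L.dropLast.sum + L.getLastD 1 = L.sum := by
    conv_rhs => rw [← hdec]
    rw [List.sum_append, List.sum_cons, List.sum_nil]
    omega
  refine ⟨?_, ?_, List.getLastD_concat⟩
  · rw [adjL, List.sum_append, List.sum_cons, List.sum_nil]; omega
  · intro x hx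
    rcases List.mem_append.mp hx with h | h
    · exact hp x (List.mem_of_mem_dropLast h)
    · have := getLastD_pos hp
      rw [List.mem_singleton.mp h]; omega

theorem ciSet_dk_eq {d k : ℕ} (hd : 2 ≤ d) (hk2 : 2 ≤ k) :
    ciSet d k (d + k - 1)
      = (fun c : Composition d => bld (d + (d + k - 1)) (adjL (k-1) c.blocks)) '' Set.univ := by
  have hk : 1 ≤ k := by omega
  ext P
  simp only [Set.mem_image, Set.mem_univ, true_and]
  constructor
  · rintro ⟨⟨hs, hp⟩, hsum, hdiag, hCI, hlen⟩
    have hne : P ≠ [] := by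
      intro h; rw [h] at hlen; simp at hlen; omega
    obtain ⟨a, hVC⟩ := CI_VC P.length P rfl hs hp hCI
    have hpin := pin hd hk hs hp hVC hdiag hne
    have hae : a = d := by rcases hpin with ⟨h1, h2⟩ | ⟨h1, h2, h3⟩ <;> omega
    obtain ⟨L, hLpos, hLsum, hLlast, hLbld⟩ := VC_struct P.length P a rfl hs hp hVC
    rw [hlen] at hLsum hLlast
    rw [hae] at hLlast hLbld
    have hLne : L ≠ [] := by
      intro h; rw [h] at hLsum; simp at hLsum; omega
    have hLlastk : k ≤ L.getLastD 1 := by omega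
    have hdec := dropLast_getLastD hLne
    have hsum2 : L.dropLast.sum + L.getLastD 1 = L.sum := by
      conv_rhs => rw [← hdec]
      rw [List.sum_append, List.sum_cons, List.sum_nil]
      omega
    have hlastpos : 0 < L.getLastD 1 - (k-1) := by omega
    refine ⟨⟨L.dropLast ++ [L.getLastD 1 - (k-1)], ?_, ?_⟩, ?_⟩
    · intro i hi
      rcases List.mem_append.mp hi with h | h
      · exact hLpos _ (List.mem_of_mem_dropLast h)
      · rw [List.mem_singleton.mp h]; omega
    · rw [List.sum_append, List.sum_cons, List.sum_nil]; omega
    · -- adjL of the constructed blocks is L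
      have hadj : adjL (k-1) (L.dropLast ++ [L.getLastD 1 - (k-1)]) = L := by
        rw [adjL, List.dropLast_concat, List.getLastD_concat]
        rw [show L.getLastD 1 - (k-1) + (k-1) = L.getLastD 1 from by omega]
        exact hdec
      simp only [hadj]
      rw [hLbld, hlen]
  · rintro ⟨c, rfl⟩
    have hposb : ∀ x ∈ c.blocks, 0 < x := fun x hx => c.blocks_pos hx
    have hbne : c.blocks ≠ [] := by
      intro h
      have := c.blocks_sum
      rw [h] at this; simp at this; omega
    obtain ⟨hasum, hapos, halast⟩ := adjL_facts (w := k-1) hbne hposb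
    rw [c.blocks_sum] at hasum
    have hlastcond : (adjL (k-1) c.blocks).sum < d + (adjL (k-1) c.blocks).getLastD 1 := by
      have := getLastD_pos hposb
      rw [hasum, halast]
      omega
    obtain ⟨hlen, hsort, hppos, hbound, hVC⟩ :=
      bld_spec (adjL (k-1) c.blocks) d (by omega) hapos hlastcond
    rw [hasum] at hlen hsort hppos hbound hVC
    rw [show d + (d + (k-1)) = d + (d + k - 1) from by omega] at hlen hsort hppos hbound hVC
    have hlend : (bld (d + (d + k - 1)) (adjL (k-1) c.blocks)).length = d + k - 1 := by
      rw [hlen]; omega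
    refine ⟨⟨hsort, hppos⟩, ?_, ?_, ?_, hlend⟩
    · rw [hVC.sum, hlend, Nat.mul_comm]
    · exact diag_of_VC hd hk hppos hVC (Or.inr ⟨hlend, rfl⟩)
    · exact VC_CI _ _ _ rfl hsort hppos hVC

theorem inj_dk {d k : ℕ} (hd : 2 ≤ d) (hk2 : 2 ≤ k) :
    Function.Injective (fun c : Composition d => bld (d + (d + k - 1)) (adjL (k-1) c.blocks)) := by
  intro c1 c2 h
  apply Composition.ext
  have hp1 : ∀ x ∈ c1.blocks, 0 < x := fun x hx => c1.blocks_pos hx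
  have hp2 : ∀ x ∈ c2.blocks, 0 < x := fun x hx => c2.blocks_pos hx
  have hbne1 : c1.blocks ≠ [] := by
    intro hb; have := c1.blocks_sum; rw [hb] at this; simp at this; omega
  have hbne2 : c2.blocks ≠ [] := by
    intro hb; have := c2.blocks_sum; rw [hb] at this; simp at this; omega
  obtain ⟨hasum1, hapos1, halast1⟩ := adjL_facts (w := k-1) hbne1 hp1
  obtain ⟨hasum2, hapos2, halast2⟩ := adjL_facts (w := k-1) hbne2 hp2
  have hadj : adjL (k-1) c1.blocks = adjL (k-1) c2.blocks := by
    refine bld_inj _ _ d (by omega) hapos1 hapos2 ?_ ?_ ?_ ?_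
    · rw [hasum1, hasum2, c1.blocks_sum, c2.blocks_sum]
    · have := getLastD_pos hp1
      rw [hasum1, halast1, c1.blocks_sum]; omega
    · have := getLastD_pos hp2
      rw [hasum2, halast2, c2.blocks_sum]; omega
    · rw [hasum1, c1.blocks_sum,
        show d + (d + (k-1)) = d + (d + k - 1) from by omega]
      exact h
  rw [adjL, adjL] at hadj
  obtain ⟨hdl, hlast⟩ := List.append_inj' hadj rfl
  obtain ⟨heq, -⟩ := List.cons_eq_cons.mp hlast
  have hgl : c1.blocks.getLastD 1 = c2.blocks.getLastD 1 := by omega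
  calc c1.blocks = c1.blocks.dropLast ++ [c1.blocks.getLastD 1] :=
        (dropLast_getLastD hbne1).symm
    _ = c2.blocks.dropLast ++ [c2.blocks.getLastD 1] := by rw [hdl, hgl]
    _ = c2.blocks := dropLast_getLastD hbne2

theorem cnt_dk {d k : ℕ} (hd : 2 ≤ d) (hk2 : 2 ≤ k) :
    (ciSet d k (d + k - 1)).ncard = 2 ^ (d - 1) := by
  rw [ciSet_dk_eq hd hk2, Set.ncard_image_of_injective _ (inj_dk hd hk2), Set.ncard_univ,
    Nat.card_eq_fintype_card, composition_card]

theorem len_eq_d {d : ℕ} (hd : 2 ≤ d) (P : List ℕ) (hPl : IsPartitionList P)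
    (hdiag : ∀ i, diagLen P i = Tdk d 1 i) (hCI : CICriterion P) : P.length = d := by
  obtain ⟨hs, hp⟩ := hPl
  have hne : P ≠ [] := by
    rintro rfl
    have h := hdiag (d - 1)
    have h0 : diagLen [] (d - 1) = 0 := by
      unfold diagLen
      rw [Finset.card_eq_zero, Finset.filter_eq_empty_iff]
      intro r _
      simp
    rw [h0, Tdk_min] at h
    omega
  obtain ⟨a, hVC⟩ := CI_VC P.length P rfl hs hp hCI
  have hpin := pin hd (le_refl 1) hs hp hVC hdiag hne
  rcases hpin with ⟨h1, _⟩ | ⟨h1, h2, _⟩ <;> omega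

end S15

/-- counts of CIJT partitions by number of parts. If `k ≥ 2`
there are `2^(d-1)` CIJT partitions with exactly `d` parts and `2^(d-1)` with
exactly `d+k-1` parts. If `k = 1` every CIJT partition has exactly `d` parts
and there are `2^(d-1)` of them. -/
theorem stmt_15 (d k : ℕ) (hd : 2 ≤ d) (hk : 1 ≤ k) :
    (2 ≤ k →
      (ciSet d k d).ncard = 2 ^ (d - 1) ∧
      (ciSet d k (d + k - 1)).ncard = 2 ^ (d - 1)) ∧
    (k = 1 →
      (∀ P : List ℕ, IsPartitionList P → P.sum = d * d →
        (∀ i : ℕ, diagLen P i = Tdk d 1 i) → CICriterion P → P.length = d) ∧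
      (ciSet d 1 d).ncard = 2 ^ (d - 1)) := by
  constructor
  · intro hk2
    exact ⟨S15.cnt_d hd hk, S15.cnt_dk hd hk2⟩
  · intro hk1
    refine ⟨fun P hPl _ hdiag hCI => S15.len_eq_d hd P hPl hdiag hCI, ?_⟩
    exact S15.cnt_d hd (le_refl 1)
end
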